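/- arXiv:2508.03778 — 7 statements merged into one kernel-verified Lean document; each statement's English description precedes it below -/
import Mathlib

section
/- If G is a bipartite graph, then ρ(G) ≤ √(e(G)), where e(G) is the number of edges of G. Moreover, equality holds if and only if G is a complete bipartite graph together with some (possibly zero) isolated vertices. -/
open SimpleGraph

/-- The number of connected components of `G - S`. -/
noncomputable def numComp {V : Type*} (G : SimpleGraph V) (S : Set V) : ℕ :=
  Nat.card (SimpleGraph.ConnectedComponent (SimpleGraph.induce Sᶜ G))

/-- `X, Y` form a bipartition of the graph `G`. -/
def IsBipartition {V : Type*} (G : SimpleGraph V) (X Y : Set V) : Prop :=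
  X ∪ Y = Set.univ ∧ Disjoint X Y ∧
    ∀ ⦃u v⦄, G.Adj u v → (u ∈ X ∧ v ∈ Y) ∨ (u ∈ Y ∧ v ∈ X)

/-- The bipartite toughness of `G` (with parts `X`, `Y`) is at least `1`:
`c(G - S) ≤ |S|` for every proper subset `S ⊂ X` (or `S ⊂ Y`) with `c(G - S) > 1`. -/
def BTough1 {V : Type*} (G : SimpleGraph V) (X Y : Set V) : Prop :=
  ∀ S : Set V, (S ⊂ X ∨ S ⊂ Y) → 1 < numComp G S → numComp G S ≤ S.ncard

/-- The toughness of a (non-complete) graph `G`. -/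
noncomputable def toughness {V : Type*} (G : SimpleGraph V) : ℝ :=
  sInf {x : ℝ | ∃ S : Set V, 1 < numComp G S ∧ x = (S.ncard : ℝ) / (numComp G S : ℝ)}

/-- The spectral radius of `G`: the largest eigenvalue of its adjacency matrix. -/
noncomputable def specRad {V : Type*} [Fintype V] (G : SimpleGraph V) : ℝ :=
  letI := Classical.decRel G.Adj
  sSup {μ : ℝ | Module.End.HasEigenvalue (Matrix.mulVecLin (G.adjMatrix ℝ)) μ}

/-- `G` has a 2-factor: a spanning subgraph in which every vertex has degree 2. -/
def Has2Factor {V : Type*} (G : SimpleGraph V) : Prop :=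
  ∃ F : SimpleGraph V, F ≤ G ∧ ∀ v, (F.neighborSet v).ncard = 2

/-- The graph `G_{n,n}`: parts `X = {u_1,…,u_n}` (left) and `Y = {v_1,…,v_n}` (right);
`u_i ~ v_j` for all `i` and all `j ≥ 4`; moreover `v_1, v_2, v_3` are joined to `u_1`,
and `v_i` is joined to `u_{i+1}` for `1 ≤ i ≤ 3` (indices here are 0-based). -/
def Gnn (n : ℕ) : SimpleGraph (Fin n ⊕ Fin n) :=
  SimpleGraph.fromRel fun a b =>
    match a, b with
    | Sum.inl i, Sum.inr j =>
        3 ≤ (j : ℕ) ∨ ((j : ℕ) < 3 ∧ ((i : ℕ) = 0 ∨ (i : ℕ) = (j : ℕ) + 1))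
    | _, _ => False

/-- The graph `M_n`: the complete graph on `{v_1,…,v_{n-3}}` (the vertices of index `< n-3`),
together with three vertices `u_1, u_2, u_3` (the vertices of index `≥ n-3`), each joined to
`v_1` (index `0`), and `u_i` joined to `v_{i+1}` for `1 ≤ i ≤ 3`. -/
def Mn (n : ℕ) : SimpleGraph (Fin n) :=
  SimpleGraph.fromRel fun a b =>
    ((a : ℕ) < n - 3 ∧ (b : ℕ) < n - 3) ∨
      (n - 3 ≤ (a : ℕ) ∧ ((b : ℕ) = 0 ∨ (b : ℕ) = (a : ℕ) - (n - 3) + 1))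


open Matrix in
private lemma stmt3aux_hasEig_of {V : Type*} [Fintype V] (M : Matrix V V ℝ) {x : V → ℝ} {μ : ℝ}
    (hx : x ≠ 0) (h : M *ᵥ x = μ • x) : Module.End.HasEigenvalue M.mulVecLin μ :=
  Module.End.hasEigenvalue_of_hasEigenvector ⟨Module.End.mem_eigenspace_iff.mpr h, hx⟩

open Matrix in
private lemma stmt3aux_hasEig_iff {V : Type*} [Fintype V] (M : Matrix V V ℝ) {μ : ℝ} :
    Module.End.HasEigenvalue M.mulVecLin μ ↔ ∃ x : V → ℝ, x ≠ 0 ∧ M *ᵥ x = μ • x := by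
  constructor
  · intro h
    obtain ⟨x, hx1, hx2⟩ := h.exists_hasEigenvector
    exact ⟨x, hx2, Module.End.mem_eigenspace_iff.mp hx1⟩
  · rintro ⟨x, hx, h⟩; exact stmt3aux_hasEig_of M hx h

open Matrix in
private lemma stmt3aux_traceAdjSq {V : Type*} [Fintype V] (G : SimpleGraph V) [DecidableRel G.Adj] [DecidableEq V] :
    Matrix.trace (G.adjMatrix ℝ * G.adjMatrix ℝ) = 2 * (G.edgeSet.ncard : ℝ) := by
  have : ∀ i : V, (G.adjMatrix ℝ * G.adjMatrix ℝ) i i = (G.degree i : ℝ) := fun i =>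
    G.adjMatrix_mul_self_apply_self i
  rw [Matrix.trace]
  simp only [Matrix.diag_apply, this]
  rw [← Nat.cast_sum, SimpleGraph.sum_degrees_eq_twice_card_edges,
    Set.ncard_eq_toFinset_card' G.edgeSet]
  push_cast
  rfl

open Matrix in
private lemma stmt3aux_eigSet {V : Type*} [Fintype V] [DecidableEq V] (M : Matrix V V ℝ) (hM : M.IsHermitian) :
    {μ : ℝ | Module.End.HasEigenvalue M.mulVecLin μ} = Set.range hM.eigenvalues := by
  ext μ
  rw [Set.mem_setOf_eq, Module.End.hasEigenvalue_iff_mem_spectrum,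
    ← hM.spectrum_real_eq_range_eigenvalues,
    show M.mulVecLin = Matrix.toLinAlgEquiv' M from rfl,
    AlgEquiv.spectrum_eq (Matrix.toLinAlgEquiv' (R := ℝ) (n := V)) M]

open Matrix in
private lemma stmt3aux_sumSq {V : Type*} [Fintype V] [DecidableEq V] (M : Matrix V V ℝ) (hM : M.IsHermitian) :
    Matrix.trace (M * M) = ∑ i, hM.eigenvalues i ^ 2 := by
  conv_lhs => rw [hM.spectral_theorem, Unitary.conjStarAlgAut_apply]
  rw [show ∀ U D : Matrix V V ℝ, (U * D * star U) * (U * D * star U) = U * (D * (star U * U) * D) * star U from fun U D => by noncomm_ring,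
    (Matrix.mem_unitaryGroup_iff').mp (hM.eigenvectorUnitary).2]
  rw [Matrix.trace_mul_cycle]
  rw [(Matrix.mem_unitaryGroup_iff').mp (hM.eigenvectorUnitary).2]
  simp [Matrix.diagonal_mul_diagonal, Matrix.trace_diagonal, sq]

open Matrix in
private lemma stmt3aux_adjHerm {V : Type*} [Fintype V] (G : SimpleGraph V) [DecidableRel G.Adj] :
    (G.adjMatrix ℝ).IsHermitian := by
  ext i j
  simp only [Matrix.conjTranspose_apply, SimpleGraph.adjMatrix_apply, star_trivial]
  simp [SimpleGraph.adj_comm]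

open Matrix in
private lemma stmt3aux_neg_eig {V : Type*} [Fintype V] (G : SimpleGraph V) [DecidableRel G.Adj]
    {X Y : Set V} (hbip : IsBipartition G X Y) {μ : ℝ}
    (h : Module.End.HasEigenvalue (G.adjMatrix ℝ).mulVecLin μ) :
    Module.End.HasEigenvalue (G.adjMatrix ℝ).mulVecLin (-μ) := by
  classical
  obtain ⟨x, hmem, hx⟩ := h.exists_hasEigenvector
  have hAx : G.adjMatrix ℝ *ᵥ x = μ • x := Module.End.mem_eigenspace_iff.mp hmem
  obtain ⟨hXY, hdisj, hadj⟩ := hbip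
  set y : V → ℝ := fun v => if v ∈ X then x v else -x v with hy
  apply stmt3aux_hasEig_of (x := y)
  · intro h0
    apply hx
    funext v
    have := congrFun h0 v
    simp only [hy, Pi.zero_apply] at this ⊢
    by_cases hv : v ∈ X <;> simp [hv] at this <;> simp [this]
  · funext u
    have key : ∀ v, G.Adj u v → (u ∈ X → (v ∈ Y ∧ v ∉ X)) ∧ (u ∉ X → v ∈ X) := by
      intro v huv
      rcases hadj huv with ⟨h1, h2⟩ | ⟨h1, h2⟩
      · exact ⟨fun _ => ⟨h2, fun hvX => hdisj.ne_of_mem hvX h2 rfl⟩, fun hu => absurd h1 hu⟩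
      · refine ⟨fun huX => absurd (hdisj.ne_of_mem huX h1 rfl) (by simp), fun _ => h2⟩
    rw [SimpleGraph.adjMatrix_mulVec_apply]
    by_cases hu : u ∈ X
    · have : ∀ v ∈ G.neighborFinset u, y v = -x v := by
        intro v hv
        rw [SimpleGraph.mem_neighborFinset] at hv
        have := ((key v hv).1 hu).2
        simp [hy, this]
      rw [Finset.sum_congr rfl this, Finset.sum_neg_distrib,
        ← SimpleGraph.adjMatrix_mulVec_apply (α := ℝ), hAx]
      simp [hy, hu]
    · have : ∀ v ∈ G.neighborFinset u, y v = x v := by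
        intro v hv
        rw [SimpleGraph.mem_neighborFinset] at hv
        have := (key v hv).2 hu
        simp [hy, this]
      rw [Finset.sum_congr rfl this, ← SimpleGraph.adjMatrix_mulVec_apply (α := ℝ), hAx]
      simp [hy, hu]

open Matrix in
private lemma stmt3aux_eig_bound {V : Type*} [Fintype V] (G : SimpleGraph V) [DecidableRel G.Adj]
    {X Y : Set V} (hbip : IsBipartition G X Y) {μ : ℝ}
    (h : Module.End.HasEigenvalue (G.adjMatrix ℝ).mulVecLin μ) :
    μ ≤ Real.sqrt (G.edgeSet.ncard) := by
  classical
  rcases le_or_gt μ 0 with hμ | hμ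
  · exact hμ.trans (Real.sqrt_nonneg _)
  have hM := stmt3aux_adjHerm G
  have hmem : μ ∈ Set.range hM.eigenvalues := by
    rw [← stmt3aux_eigSet _ hM]; exact h
  have hmem' : -μ ∈ Set.range hM.eigenvalues := by
    rw [← stmt3aux_eigSet _ hM]; exact stmt3aux_neg_eig G hbip h
  obtain ⟨i, hi⟩ := hmem
  obtain ⟨j, hj⟩ := hmem'
  have hij : i ≠ j := by
    intro hij; rw [hij, hj] at hi; linarith
  have hsum : ∑ k, hM.eigenvalues k ^ 2 = 2 * (G.edgeSet.ncard : ℝ) := by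
    rw [← stmt3aux_sumSq _ hM, stmt3aux_traceAdjSq]
  have hsub : ∑ k ∈ ({i, j} : Finset V), hM.eigenvalues k ^ 2 ≤ ∑ k, hM.eigenvalues k ^ 2 :=
    Finset.sum_le_sum_of_subset_of_nonneg (Finset.subset_univ _)
      (fun k _ _ => sq_nonneg _)
  rw [Finset.sum_pair hij, hi, hj] at hsub
  rw [neg_pow] at hsub
  have hsq : μ ^ 2 ≤ (G.edgeSet.ncard : ℝ) := by
    rw [hsum] at hsub; simp at hsub; nlinarith [sq_nonneg μ]
  calc μ = Real.sqrt (μ ^ 2) := by rw [Real.sqrt_sq hμ.le]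
  _ ≤ _ := Real.sqrt_le_sqrt hsq

open Matrix in
private lemma stmt3aux_specRad_eq {V : Type*} [Fintype V] (G : SimpleGraph V) (inst : DecidableRel G.Adj) :
    specRad G = sSup {μ : ℝ | Module.End.HasEigenvalue (Matrix.mulVecLin
      (@SimpleGraph.adjMatrix ℝ V G inst _ _)) μ} := by
  rw [Subsingleton.elim inst (Classical.decRel G.Adj)]
  rfl

open Matrix in
private lemma stmt3aux_edge_count {V : Type*} [Fintype V] [DecidableEq V] (G : SimpleGraph V) [DecidableRel G.Adj]
    (A B : Set V) [DecidablePred (· ∈ A)] [DecidablePred (· ∈ B)] (hdisj : Disjoint A B)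
    (hGadj : ∀ u v : V, G.Adj u v ↔ ((u ∈ A ∧ v ∈ B) ∨ (u ∈ B ∧ v ∈ A))) :
    G.edgeSet.ncard = (Finset.univ.filter (· ∈ A)).card * (Finset.univ.filter (· ∈ B)).card := by
  have hNA : ∀ u ∈ A, G.neighborFinset u = Finset.univ.filter (· ∈ B) := by
    intro u hu
    ext v
    simp only [mem_neighborFinset, Finset.mem_filter, Finset.mem_univ, true_and, hGadj]
    constructor
    · rintro (⟨_, h⟩ | ⟨h, _⟩)
      · exact h
      · exact absurd (hdisj.ne_of_mem hu h rfl) (by simp)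
    · intro hv; exact Or.inl ⟨hu, hv⟩
  have hNB : ∀ u ∈ B, G.neighborFinset u = Finset.univ.filter (· ∈ A) := by
    intro u hu
    ext v
    simp only [mem_neighborFinset, Finset.mem_filter, Finset.mem_univ, true_and, hGadj]
    constructor
    · rintro (⟨h, _⟩ | ⟨_, h⟩)
      · exact absurd (hdisj.ne_of_mem h hu rfl) (by simp)
      · exact h
    · intro hv; exact Or.inr ⟨hu, hv⟩
  have hN0 : ∀ u, u ∉ A → u ∉ B → G.neighborFinset u = ∅ := by
    intro u hA hB
    ext v
    simp only [mem_neighborFinset, hGadj, Finset.notMem_empty, iff_false]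
    rintro (⟨h, _⟩ | ⟨h, _⟩) <;> [exact hA h; exact hB h]
  set na := (Finset.univ.filter (· ∈ A)).card
  set nb := (Finset.univ.filter (· ∈ B)).card
  have hdeg : ∀ u : V, G.degree u = if u ∈ A then nb else if u ∈ B then na else 0 := by
    intro u
    rw [SimpleGraph.degree]
    split_ifs with h1 h2
    · rw [hNA u h1]
    · rw [hNB u h2]
    · rw [hN0 u h1 h2]; rfl
  have hsum : ∑ u : V, G.degree u = na * nb + nb * na := by
    simp only [hdeg]
    rw [Finset.sum_ite, Finset.sum_ite, Finset.sum_const, Finset.sum_const,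
      Finset.sum_const_zero, add_zero, Finset.filter_filter]
    have : Finset.univ.filter (fun u => ¬u ∈ A ∧ u ∈ B) = Finset.univ.filter (· ∈ B) := by
      ext u
      simp only [Finset.mem_filter, Finset.mem_univ, true_and, and_iff_right_iff_imp]
      intro hu; exact fun hA => absurd (hdisj.ne_of_mem hA hu rfl) (by simp)
    rw [this]
    simp [smul_eq_mul, mul_comm]
    rfl
  rw [SimpleGraph.sum_degrees_eq_twice_card_edges] at hsum
  have : G.edgeSet.ncard = G.edgeFinset.card := by
    rw [Set.ncard_eq_toFinset_card']
    rfl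
  rw [this, Nat.mul_comm nb na] at *
  omega

open Matrix in
private lemma stmt3aux_struct_sSup {V : Type*} [Fintype V] (G : SimpleGraph V) [DecidableRel G.Adj]
    {X Y : Set V} (hbip : IsBipartition G X Y) (A B : Set V) (hdisj : Disjoint A B)
    (hGadj : ∀ u v : V, G.Adj u v ↔ ((u ∈ A ∧ v ∈ B) ∨ (u ∈ B ∧ v ∈ A))) :
    sSup {μ : ℝ | Module.End.HasEigenvalue (G.adjMatrix ℝ).mulVecLin μ}
      = Real.sqrt (G.edgeSet.ncard) := by
  classical
  set E := {μ : ℝ | Module.End.HasEigenvalue (G.adjMatrix ℝ).mulVecLin μ} with hE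
  have hub : ∀ μ ∈ E, μ ≤ Real.sqrt (G.edgeSet.ncard) := fun μ h => stmt3aux_eig_bound G hbip h
  set na := (Finset.univ.filter (· ∈ A)).card with hna
  set nb := (Finset.univ.filter (· ∈ B)).card with hnb
  have hcard : G.edgeSet.ncard = na * nb := stmt3aux_edge_count G A B hdisj hGadj
  rcases Nat.eq_zero_or_pos (na * nb) with h0 | hpos
  · -- no edges
    have hempty : (∀ w, w ∉ A) ∨ (∀ w, w ∉ B) := by
      rcases Nat.mul_eq_zero.mp h0 with h | h
      · left
        intro w hw
        have : w ∈ Finset.univ.filter (· ∈ A) := Finset.mem_filter.mpr ⟨Finset.mem_univ w, hw⟩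
        rw [Finset.card_eq_zero.mp h] at this
        exact absurd this (Finset.notMem_empty w)
      · right
        intro w hw
        have : w ∈ Finset.univ.filter (· ∈ B) := Finset.mem_filter.mpr ⟨Finset.mem_univ w, hw⟩
        rw [Finset.card_eq_zero.mp h] at this
        exact absurd this (Finset.notMem_empty w)
    have hbot : ∀ u v : V, ¬ G.Adj u v := by
      intro u v hadj
      rcases (hGadj u v).mp hadj with ⟨h1, h2⟩ | ⟨h1, h2⟩ <;>
        rcases hempty with h | h <;> first | exact h _ h1 | exact h _ h2
    have he0 : G.edgeSet.ncard = 0 := by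
      have : G = ⊥ := by ext u v; simpa using hbot u v
      rw [this]; simp
    rw [he0]
    simp only [Nat.cast_zero, Real.sqrt_zero]
    have hM0 : G.adjMatrix ℝ = 0 := by
      ext u v; simp [adjMatrix_apply, hbot u v]
    by_cases hV : Nonempty V
    · have : E = {0} := by
        ext μ
        simp only [hE, Set.mem_setOf_eq, Set.mem_singleton_iff]
        constructor
        · intro h
          obtain ⟨x, hmem, hx⟩ := h.exists_hasEigenvector
          have hAx := Module.End.mem_eigenspace_iff.mp hmem
          rw [Matrix.mulVecLin_apply, hM0, Matrix.zero_mulVec] at hAx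
          obtain ⟨v, hv⟩ : ∃ v, x v ≠ 0 := by
            by_contra hc; push_neg at hc; exact hx (funext fun v => hc v)
          have := congrFun hAx v
          simp only [Pi.zero_apply, Pi.smul_apply, smul_eq_mul] at this
          rcases mul_eq_zero.mp this.symm with h | h
          · exact h
          · exact absurd h hv
        · rintro rfl
          apply stmt3aux_hasEig_of (x := fun _ => (1 : ℝ))
          · intro hc
            have := congrFun hc (Classical.arbitrary V)
            simp at this
          · rw [hM0, Matrix.zero_mulVec, zero_smul]
      rw [this, csSup_singleton]
    · have : E = ∅ := by
        ext μ
        simp only [hE, Set.mem_setOf_eq, Set.mem_empty_iff_false, iff_false]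
        intro h
        obtain ⟨x, _, hx⟩ := h.exists_hasEigenvector
        exact hx (funext fun v => absurd ⟨v⟩ hV)
      rw [this, Real.sSup_empty]
  · -- both parts nonempty
    have hna0 : 0 < na := Nat.pos_of_ne_zero (fun h => by simp [h] at hpos)
    have hnb0 : 0 < nb := Nat.pos_of_ne_zero (fun h => by simp [h] at hpos)
    obtain ⟨a0, ha0⟩ : ∃ a0, a0 ∈ A := by
      obtain ⟨w, hw⟩ := Finset.card_pos.mp hna0
      exact ⟨w, (Finset.mem_filter.mp hw).2⟩
    set x : V → ℝ := fun u => if u ∈ A then Real.sqrt nb else if u ∈ B then Real.sqrt na else 0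
      with hx
    have hxne : x ≠ 0 := by
      intro hc
      have := congrFun hc a0
      simp only [hx, ha0, if_true, Pi.zero_apply] at this
      exact absurd this (by positivity)
    have hmul : G.adjMatrix ℝ *ᵥ x = Real.sqrt (G.edgeSet.ncard) • x := by
      funext u
      rw [SimpleGraph.adjMatrix_mulVec_apply]
      have hsqrt : Real.sqrt (G.edgeSet.ncard : ℝ) = Real.sqrt na * Real.sqrt nb := by
        rw [hcard]; push_cast; rw [Real.sqrt_mul (by positivity)]
      by_cases hu : u ∈ A
      · have hN : G.neighborFinset u = Finset.univ.filter (· ∈ B) := by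
          ext v
          simp only [mem_neighborFinset, Finset.mem_filter, Finset.mem_univ, true_and, hGadj]
          constructor
          · rintro (⟨_, h⟩ | ⟨h, _⟩)
            · exact h
            · exact absurd (hdisj.ne_of_mem hu h rfl) (by simp)
          · intro hv; exact Or.inl ⟨hu, hv⟩
        have hxv : ∀ v ∈ Finset.univ.filter (· ∈ B), x v = Real.sqrt na := by
          intro v hv
          have hvB := (Finset.mem_filter.mp hv).2
          have hvA : v ∉ A := fun hvA => absurd (hdisj.ne_of_mem hvA hvB rfl) (by simp)
          simp [hx, hvA, hvB]
        rw [hN, Finset.sum_congr rfl hxv, Finset.sum_const, ← hnb]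
        simp only [Pi.smul_apply, hx, hu, if_true, smul_eq_mul, nsmul_eq_mul]
        rw [hsqrt]
        rw [mul_assoc, Real.mul_self_sqrt (by positivity), mul_comm]
      · by_cases hu' : u ∈ B
        · have hN : G.neighborFinset u = Finset.univ.filter (· ∈ A) := by
            ext v
            simp only [mem_neighborFinset, Finset.mem_filter, Finset.mem_univ, true_and, hGadj]
            constructor
            · rintro (⟨h, _⟩ | ⟨_, h⟩)
              · exact absurd (hdisj.ne_of_mem h hu' rfl) (by simp)
              · exact h
            · intro hv; exact Or.inr ⟨hu', hv⟩
          have hxv : ∀ v ∈ Finset.univ.filter (· ∈ A), x v = Real.sqrt nb := by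
            intro v hv
            simp [hx, (Finset.mem_filter.mp hv).2]
          rw [hN, Finset.sum_congr rfl hxv, Finset.sum_const, ← hna]
          simp only [Pi.smul_apply, hx, hu, if_false, hu', if_true, smul_eq_mul, nsmul_eq_mul]
          rw [hsqrt, mul_comm (Real.sqrt na), mul_assoc, Real.mul_self_sqrt (by positivity),
            mul_comm]
        · have hN : G.neighborFinset u = ∅ := by
            ext v
            simp only [mem_neighborFinset, hGadj, Finset.notMem_empty, iff_false]
            rintro (⟨h, _⟩ | ⟨h, _⟩) <;> [exact hu h; exact hu' h]
          rw [hN]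
          simp [hx, hu, hu']
    have hmem : Real.sqrt (G.edgeSet.ncard) ∈ E := stmt3aux_hasEig_of _ hxne hmul
    have hbdd : BddAbove E := ⟨_, hub⟩
    exact le_antisymm (Real.sSup_le hub (Real.sqrt_nonneg _)) (le_csSup hbdd hmem)

open Matrix in
private lemma stmt3aux_cube_eq {V : Type*} [Fintype V] [DecidableEq V] (M : Matrix V V ℝ) (hM : M.IsHermitian)
    (c : ℝ) (hcube : ∀ k, hM.eigenvalues k ^ 3 = c * hM.eigenvalues k) :
    M * M * M = c • M := by
  set U := (hM.eigenvectorUnitary : Matrix V V ℝ) with hUdef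
  set d : V → ℝ := RCLike.ofReal ∘ hM.eigenvalues with hd
  have hdeq : d = hM.eigenvalues := by funext k; simp [hd]
  have hU : star U * U = 1 := Matrix.mem_unitaryGroup_iff'.mp (hM.eigenvectorUnitary).2
  have hspec : M = U * Matrix.diagonal d * star U := hM.spectral_theorem
  have hDDD : Matrix.diagonal d * Matrix.diagonal d * Matrix.diagonal d
      = c • Matrix.diagonal d := by
    rw [Matrix.diagonal_mul_diagonal, Matrix.diagonal_mul_diagonal]
    have hfun : (fun i => d i * d i * d i) = c • d := by
      funext k
      have := hcube k
      rw [hdeq] at *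
      simp only [Pi.smul_apply, smul_eq_mul]
      nlinarith [this]
    rw [hfun, Matrix.diagonal_smul]
  calc M * M * M = (U * Matrix.diagonal d * star U) * (U * Matrix.diagonal d * star U)
          * (U * Matrix.diagonal d * star U) := by rw [← hspec]
    _ = U * Matrix.diagonal d * (star U * U) * Matrix.diagonal d * (star U * U)
          * Matrix.diagonal d * star U := by noncomm_ring
    _ = U * (Matrix.diagonal d * Matrix.diagonal d * Matrix.diagonal d) * star U := by
          rw [hU]; noncomm_ring
    _ = c • (U * Matrix.diagonal d * star U) := by
          rw [hDDD]
          simp only [Matrix.mul_smul, Matrix.smul_mul]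
    _ = c • M := by rw [← hspec]

open Matrix in
private lemma stmt3aux_walk_eq {V : Type*} [Fintype V] [DecidableEq V] (G : SimpleGraph V) [DecidableRel G.Adj]
    {X Y : Set V} [DecidablePred (· ∈ X)] [DecidablePred (· ∈ Y)]
    (hbip : IsBipartition G X Y)
    (hA3 : G.adjMatrix ℝ * G.adjMatrix ℝ * G.adjMatrix ℝ
      = (G.edgeSet.ncard : ℝ) • G.adjMatrix ℝ) :
    ∀ {u v}, u ∈ X → v ∈ Y → G.Adj u v →
      ∀ {a b}, a ∈ Y → b ∈ X → G.Adj a b → G.Adj u a ∧ G.Adj b v := by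
  classical
  obtain ⟨hXY, hdisj, hadj⟩ := hbip
  set M := G.adjMatrix ℝ with hMdef
  set e := G.edgeSet.ncard with he
  have hM01 : ∀ w z : V, M w z = 0 ∨ M w z = 1 := by
    intro w z; by_cases h : G.Adj w z <;> simp [hMdef, h]
  have hMne : ∀ w z : V, M w z ≠ 0 → G.Adj w z := by
    intro w z h; by_contra hc; exact h (by simp [hMdef, hc])
  have horX : ∀ {p q}, G.Adj p q → p ∈ X → q ∈ Y := by
    intro p q h hp
    rcases hadj h with ⟨_, h2⟩ | ⟨h1, _⟩
    · exact h2
    · exact absurd (hdisj.ne_of_mem hp h1 rfl) (by simp)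
  have horY : ∀ {p q}, G.Adj p q → p ∈ Y → q ∈ X := by
    intro p q h hp
    rcases hadj h with ⟨h1, _⟩ | ⟨_, h2⟩
    · exact absurd (hdisj.ne_of_mem h1 hp rfl) (by simp)
    · exact h2
  -- the count of oriented (Y,X) edges is e
  have hrow : ∀ a : V, ∑ b : V, M a b = (G.degree a : ℝ) := by
    intro a
    have : ∑ b : V, M a b = (M *ᵥ (Function.const V (1 : ℝ))) a := by
      simp [Matrix.mulVec, dotProduct]
    rw [this, hMdef, SimpleGraph.adjMatrix_mulVec_const_apply, mul_one]
  have h2e : ∑ a : V, ∑ b : V, M a b = 2 * (e : ℝ) := by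
    simp only [hrow]
    rw [← Nat.cast_sum, SimpleGraph.sum_degrees_eq_twice_card_edges, he,
      Set.ncard_eq_toFinset_card']
    push_cast
    rfl
  have hsplit : ∀ a b : V, (if a ∈ Y ∧ b ∈ X ∧ G.Adj a b then (1:ℝ) else 0)
      + (if a ∈ X ∧ b ∈ Y ∧ G.Adj a b then (1:ℝ) else 0) = M a b := by
    intro a b
    by_cases h : G.Adj a b
    · rcases hadj h with ⟨h1, h2⟩ | ⟨h1, h2⟩
      · have ha : a ∉ Y := fun hy => absurd (hdisj.ne_of_mem h1 hy rfl) (by simp)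
        simp [hMdef, h, h1, h2, ha]
      · have ha : a ∉ X := fun hy => absurd (hdisj.ne_of_mem hy h1 rfl) (by simp)
        simp [hMdef, h, h1, h2, ha]
    · simp [hMdef, h]
  have hsym : ∑ a : V, ∑ b : V, (if a ∈ X ∧ b ∈ Y ∧ G.Adj a b then (1:ℝ) else 0)
      = ∑ a : V, ∑ b : V, (if a ∈ Y ∧ b ∈ X ∧ G.Adj a b then (1:ℝ) else 0) := by
    rw [Finset.sum_comm]
    refine Finset.sum_congr rfl fun a _ => Finset.sum_congr rfl fun b _ => ?_
    congr 1
    simp only [eq_iff_iff]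
    rw [G.adj_comm]
    tauto
  have hS : ∑ a : V, ∑ b : V, (if a ∈ Y ∧ b ∈ X ∧ G.Adj a b then (1:ℝ) else 0) = (e : ℝ) := by
    have hadd : (∑ a : V, ∑ b : V, (if a ∈ Y ∧ b ∈ X ∧ G.Adj a b then (1:ℝ) else 0))
        + ∑ a : V, ∑ b : V, (if a ∈ X ∧ b ∈ Y ∧ G.Adj a b then (1:ℝ) else 0)
        = 2 * (e : ℝ) := by
      rw [← h2e, ← Finset.sum_add_distrib]
      refine Finset.sum_congr rfl fun a _ => ?_
      rw [← Finset.sum_add_distrib]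
      exact Finset.sum_congr rfl fun b _ => hsplit a b
    rw [hsym] at hadd
    linarith
  -- main argument
  intro u v huX hvY huv a b haY hbX hab
  have hMuv : (M * M * M) u v = (e : ℝ) := by
    rw [hA3]
    simp [hMdef, huv]
  have hskel : (M * M * M) u v = ∑ p : V × V, M u p.1 * M p.1 p.2 * M p.2 v := by
    rw [Fintype.sum_prod_type]
    simp only [Matrix.mul_apply, Finset.sum_mul]
    rw [Finset.sum_comm]
  have hSprod : ∑ p : V × V, (if p.1 ∈ Y ∧ p.2 ∈ X ∧ G.Adj p.1 p.2 then (1:ℝ) else 0)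
      = (e : ℝ) := by
    rw [Fintype.sum_prod_type]; exact hS
  have hMu : ∀ c, c ∉ Y → M u c = 0 := by
    intro c hc
    by_contra h
    exact hc (horX (hMne u c h) huX)
  have hMv : ∀ d, d ∉ X → M d v = 0 := by
    intro d hd
    by_contra h
    exact hd (horY ((hMne d v h).symm) hvY)
  have hle : ∀ p ∈ (Finset.univ : Finset (V × V)),
      M u p.1 * M p.1 p.2 * M p.2 v
        ≤ (if p.1 ∈ Y ∧ p.2 ∈ X ∧ G.Adj p.1 p.2 then (1:ℝ) else 0) := by
    rintro ⟨c, d⟩ -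
    by_cases h2 : c ∈ Y
    · by_cases h3 : d ∈ X
      · by_cases h1 : G.Adj c d
        · simp only [h1, h2, h3, and_true, if_true, true_and]
          rcases hM01 u c with h | h <;> rcases hM01 c d with h' | h' <;>
            rcases hM01 d v with h'' | h'' <;> simp [h, h', h'']
        · simp [hMdef, h1]
      · simp [hMv d h3, h3]
    · simp [hMu c h2, h2]
  have hfg : ∀ p ∈ (Finset.univ : Finset (V × V)),
      M u p.1 * M p.1 p.2 * M p.2 v
        = (if p.1 ∈ Y ∧ p.2 ∈ X ∧ G.Adj p.1 p.2 then (1:ℝ) else 0) := by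
    rw [← Finset.sum_eq_sum_iff_of_le hle]
    rw [← hskel, hMuv, hSprod]
  have hab1 : M u a * M a b * M b v = 1 := by
    have := hfg ⟨a, b⟩ (Finset.mem_univ _)
    simpa [haY, hbX, hab] using this
  have h1 : M u a ≠ 0 := by
    intro h; rw [h] at hab1; simp at hab1
  have h2 : M b v ≠ 0 := by
    intro h; rw [h] at hab1; simp at hab1
  exact ⟨hMne u a h1, hMne b v h2⟩

open Matrix in
private lemma stmt3aux_eq_to_struct {V : Type*} [Fintype V] (G : SimpleGraph V) [DecidableRel G.Adj]
    {X Y : Set V} (hbip : IsBipartition G X Y)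
    (heq : sSup {μ : ℝ | Module.End.HasEigenvalue (G.adjMatrix ℝ).mulVecLin μ}
      = Real.sqrt (G.edgeSet.ncard)) :
    ∃ A B : Set V, Disjoint A B ∧
      ∀ u v : V, G.Adj u v ↔ ((u ∈ A ∧ v ∈ B) ∨ (u ∈ B ∧ v ∈ A)) := by
  classical
  obtain ⟨hXY, hdisj, hadj⟩ := hbip
  have horX : ∀ {p q}, G.Adj p q → p ∈ X → q ∈ Y := by
    intro p q h hp
    rcases hadj h with ⟨_, h2⟩ | ⟨h1, _⟩
    · exact h2
    · exact absurd (hdisj.ne_of_mem hp h1 rfl) (by simp)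
  have horY : ∀ {p q}, G.Adj p q → p ∈ Y → q ∈ X := by
    intro p q h hp
    rcases hadj h with ⟨h1, _⟩ | ⟨_, h2⟩
    · exact absurd (hdisj.ne_of_mem h1 hp rfl) (by simp)
    · exact h2
  by_cases he0 : G.edgeSet.ncard = 0
  · have hE : G.edgeSet = ∅ := (Set.ncard_eq_zero (Set.toFinite _)).mp he0
    have hGbot : G = ⊥ := SimpleGraph.edgeSet_eq_empty.mp hE
    exact ⟨∅, ∅, disjoint_bot_left, by simp [hGbot]⟩
  · have hM := stmt3aux_adjHerm G
    set lam := hM.eigenvalues with hlam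
    have hES : {μ : ℝ | Module.End.HasEigenvalue (G.adjMatrix ℝ).mulVecLin μ}
        = Set.range lam := stmt3aux_eigSet _ hM
    have hepos : (0:ℝ) < (G.edgeSet.ncard : ℝ) :=
      Nat.cast_pos.mpr (Nat.pos_of_ne_zero he0)
    have hsqE : Real.sqrt (G.edgeSet.ncard) ^ 2 = (G.edgeSet.ncard : ℝ) :=
      Real.sq_sqrt hepos.le
    have hsqpos : 0 < Real.sqrt (G.edgeSet.ncard) := Real.sqrt_pos.mpr hepos
    have hVne : Nonempty V := by
      obtain ⟨ed, hed⟩ := Set.nonempty_of_ncard_ne_zero he0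
      exact ⟨ed.out.1⟩
    have hEne : Set.Nonempty {μ : ℝ | Module.End.HasEigenvalue (G.adjMatrix ℝ).mulVecLin μ} := by
      rw [hES]; exact ⟨lam (Classical.arbitrary V), Set.mem_range_self _⟩
    have hEfin : Set.Finite {μ : ℝ | Module.End.HasEigenvalue (G.adjMatrix ℝ).mulVecLin μ} := by
      rw [hES]; exact Set.finite_range lam
    have hmem : Real.sqrt (G.edgeSet.ncard)
        ∈ {μ : ℝ | Module.End.HasEigenvalue (G.adjMatrix ℝ).mulVecLin μ} :=
      heq ▸ hEne.csSup_mem hEfin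
    have hmem' : -Real.sqrt (G.edgeSet.ncard)
        ∈ {μ : ℝ | Module.End.HasEigenvalue (G.adjMatrix ℝ).mulVecLin μ} :=
      stmt3aux_neg_eig G ⟨hXY, hdisj, hadj⟩ hmem
    rw [hES] at hmem hmem'
    obtain ⟨i, hi⟩ := hmem
    obtain ⟨j, hj⟩ := hmem'
    have hij : i ≠ j := by
      intro h; rw [h, hj] at hi; linarith
    have htot : ∑ k, lam k ^ 2 = 2 * (G.edgeSet.ncard : ℝ) := by
      rw [hlam, ← stmt3aux_sumSq _ hM, stmt3aux_traceAdjSq]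
    have hpair : ∑ k ∈ ({i, j} : Finset V), lam k ^ 2 = 2 * (G.edgeSet.ncard : ℝ) := by
      rw [Finset.sum_pair hij, hi, hj, neg_sq, hsqE]; ring
    have hrest : ∑ k ∈ Finset.univ \ ({i, j} : Finset V), lam k ^ 2 = 0 := by
      have := Finset.sum_sdiff (f := fun k => lam k ^ 2)
        (Finset.subset_univ ({i, j} : Finset V))
      rw [hpair, htot] at this
      linarith
    have hzero : ∀ k, k ≠ i → k ≠ j → lam k = 0 := by
      intro k hki hkj
      have hk : k ∈ Finset.univ \ ({i, j} : Finset V) := by simp [hki, hkj]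
      have := (Finset.sum_eq_zero_iff_of_nonneg (fun _ _ => sq_nonneg _)).mp hrest k hk
      exact pow_eq_zero_iff two_ne_zero |>.mp this
    have hcube : ∀ k, lam k ^ 3 = (G.edgeSet.ncard : ℝ) * lam k := by
      intro k
      by_cases hki : k = i
      · subst hki; rw [hi, pow_succ, hsqE]
      · by_cases hkj : k = j
        · subst hkj; rw [hj]
          rw [show (3 : ℕ) = 2 + 1 from rfl, pow_succ, neg_sq, hsqE]
        · rw [hzero k hki hkj]; ring
    have hA3 := stmt3aux_cube_eq _ hM _ hcube
    have KL : ∀ {u v}, u ∈ X → v ∈ Y → G.Adj u v →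
        ∀ {a b}, a ∈ Y → b ∈ X → G.Adj a b → G.Adj u a ∧ G.Adj b v :=
      stmt3aux_walk_eq G (X := X) (Y := Y) ⟨hXY, hdisj, hadj⟩ hA3
    refine ⟨{u | u ∈ X ∧ ∃ w, G.Adj u w}, {v | v ∈ Y ∧ ∃ w, G.Adj v w}, ?_, ?_⟩
    · rw [Set.disjoint_left]
      rintro u ⟨huX, -⟩ ⟨huY, -⟩
      exact absurd (hdisj.ne_of_mem huX huY rfl) (by simp)
    · intro u v
      constructor
      · intro h
        rcases hadj h with ⟨h1, h2⟩ | ⟨h1, h2⟩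
        · exact Or.inl ⟨⟨h1, v, h⟩, ⟨h2, u, h.symm⟩⟩
        · exact Or.inr ⟨⟨h1, v, h⟩, ⟨h2, u, h.symm⟩⟩
      · rintro (⟨⟨huX, w, huw⟩, hvY, z, hvz⟩ | ⟨⟨huY, w, huw⟩, hvX, z, hvz⟩)
        · exact (KL huX (horX huw huX) huw hvY (horY hvz hvY) hvz).1
        · exact ((KL hvX (horX hvz hvX) hvz huY (horY huw huY) huw).1).symm

/-- For a bipartite graph `G`, `ρ(G) ≤ √(e(G))`, with equality if and only if
`G` is a complete bipartite graph together with some (possibly zero) isolated vertices. -/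
theorem stmt3 {V : Type*} [Fintype V] (G : SimpleGraph V)
    (X Y : Set V) (hbip : IsBipartition G X Y) :
    specRad G ≤ Real.sqrt (G.edgeSet.ncard) ∧
      (specRad G = Real.sqrt (G.edgeSet.ncard) ↔
        ∃ A B : Set V, Disjoint A B ∧
          ∀ u v : V, G.Adj u v ↔ ((u ∈ A ∧ v ∈ B) ∨ (u ∈ B ∧ v ∈ A))) := by
  letI inst : DecidableRel G.Adj := Classical.decRel G.Adj
  letI : DecidableEq V := Classical.decEq V
  have hsr := stmt3aux_specRad_eq G inst
  refine ⟨?_, ?_, ?_⟩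
  · rw [hsr]
    exact Real.sSup_le (fun μ h => stmt3aux_eig_bound G hbip h) (Real.sqrt_nonneg _)
  · intro h
    exact stmt3aux_eq_to_struct G hbip (by rw [← hsr]; exact h)
  · rintro ⟨A, B, hdisj, hGadj⟩
    rw [hsr]
    exact stmt3aux_struct_sSup G hbip A B hdisj hGadj
end

section
/- Let G be a balanced bipartite graph with parts X and Y, |X| = |Y| = n, and let u ∈ X and v ∈ Y be non-adjacent vertices with d_G(u) + d_G(v) ≥ n + 1. Then G contains a Hamilton cycle if and only if the graph G + uv obtained from G by adding the edge uv contains a Hamilton cycle. -/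
open SimpleGraph

open SimpleGraph.Walk

lemma exists_dart_fst {V : Type*} {G : SimpleGraph V} {a b : V} (p : G.Walk a b) :
    ∀ y ∈ p.support, y ≠ b → ∃ d ∈ p.darts, d.fst = y := by
  induction p with
  | nil =>
    intro y hy hne
    simp only [support_nil, List.mem_singleton] at hy
    exact absurd hy hne
  | cons h p ih =>
    intro y hy hne
    rw [support_cons] at hy
    rcases List.mem_cons.mp hy with rfl | hy
    · exact ⟨⟨(_, _), h⟩, by simp [darts_cons], rfl⟩
    · obtain ⟨d, hd, hdf⟩ := ih y hy hne
      exact ⟨d, by simp [darts_cons, hd], hdf⟩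

-- counting step
lemma crossing {V : Type*} [Fintype V] [DecidableEq V] {G : SimpleGraph V} {X Y : Set V} {u v : V}
    {n : ℕ} (hbip : IsBipartition G X Y) (hX : X.ncard = n)
    (hu : u ∈ X) (hv : v ∈ Y) (huv : ¬ G.Adj u v)
    (hdeg : n + 1 ≤ (G.neighborSet u).ncard + (G.neighborSet v).ncard)
    (q : G.Walk v u) (hq : q.IsPath) (hall : ∀ z, z ∈ q.support) :
    ∃ d ∈ q.darts, G.Adj u d.fst ∧ G.Adj v d.snd := by
  classical
  by_contra hcon
  push_neg at hcon
  obtain ⟨hXY, hdisj, hadj⟩ := hbip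
  have huY : u ∉ Y := fun h => hdisj.ne_of_mem hu h rfl
  have hvX : v ∉ X := fun h => hdisj.ne_of_mem h hv rfl
  have hNuY : G.neighborSet u ⊆ Y := by
    intro y hy
    rcases hadj hy with ⟨_, h⟩ | ⟨h, _⟩
    · exact h
    · exact absurd h huY
  have hNvX : G.neighborSet v ⊆ X := by
    intro y hy
    rcases hadj hy with ⟨h, _⟩ | ⟨_, h⟩
    · exact absurd h hvX
    · exact h
  -- injection from N(u) into X \ N(v)
  have hsnodup : (q.darts.map (·.snd)).Nodup := by
    rw [map_snd_darts]
    exact hq.support_nodup.tail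
  set f : V → V := fun y => if h : ∃ d ∈ q.darts, d.fst = y then h.choose.snd else y with hf
  have hfspec : ∀ y ∈ G.neighborSet u, ∃ d ∈ q.darts, d.fst = y ∧ d.snd = f y := by
    intro y hy
    have hyne : y ≠ u := fun h => huY (h ▸ hNuY hy)
    have h : ∃ d ∈ q.darts, d.fst = y := exists_dart_fst q y (hall y) hyne
    exact ⟨h.choose, h.choose_spec.1, h.choose_spec.2, by simp [hf, dif_pos h]⟩
  have hmaps : ∀ y ∈ G.neighborSet u, f y ∈ X \ G.neighborSet v := by
    intro y hy
    obtain ⟨d, hd, hdf, hds⟩ := hfspec y hy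
    have hadj' : G.Adj d.fst d.snd := d.adj
    have hfY : d.fst ∈ Y := hdf ▸ hNuY hy
    have hsX : d.snd ∈ X := by
      rcases hadj hadj' with ⟨h1, _⟩ | ⟨_, h2⟩
      · exact absurd (hdisj.ne_of_mem h1 hfY) (fun h => h rfl)
      · exact h2
    refine hds ▸ ⟨hsX, fun hmem => ?_⟩
    exact (hcon d hd (hdf ▸ hy)) hmem
  have hinj : Set.InjOn f (G.neighborSet u) := by
    intro y1 h1 y2 h2 he
    obtain ⟨d1, hd1, hdf1, hds1⟩ := hfspec y1 h1
    obtain ⟨d2, hd2, hdf2, hds2⟩ := hfspec y2 h2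
    have : d1 = d2 := List.inj_on_of_nodup_map hsnodup hd1 hd2 (by rw [hds1, hds2, he])
    rw [← hdf1, ← hdf2, this]
  have hle : (G.neighborSet u).ncard ≤ (X \ G.neighborSet v).ncard := by
    rw [← Set.ncard_image_of_injOn hinj]
    exact Set.ncard_le_ncard (Set.image_subset_iff.mpr hmaps) (Set.toFinite _)
  rw [Set.ncard_diff hNvX] at hle
  have hNvle : (G.neighborSet v).ncard ≤ X.ncard := Set.ncard_le_ncard hNvX (Set.toFinite _)
  omega

lemma key {V : Type*} [Fintype V] [DecidableEq V] {G : SimpleGraph V} {X Y : Set V} {u v : V}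
    {n : ℕ} (hbip : IsBipartition G X Y) (hX : X.ncard = n)
    (hu : u ∈ X) (hv : v ∈ Y) (huv : ¬ G.Adj u v)
    (hdeg : n + 1 ≤ (G.neighborSet u).ncard + (G.neighborSet v).ncard)
    (q : G.Walk v u) (hq : q.IsPath) (hall : ∀ z, z ∈ q.support) :
    ∃ a, ∃ c : G.Walk a a, c.IsHamiltonianCycle := by
  classical
  obtain ⟨d, hd, hfst, hsnd⟩ := crossing hbip hX hu hv huv hdeg q hq hall
  set w' := d.snd with hw'
  have hw'mem : w' ∈ q.support := q.dart_snd_mem_support_of_mem_darts hd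
  set q1 := q.takeUntil w' hw'mem with hq1def
  set q2 := q.dropUntil w' hw'mem with hq2def
  have hq1 : q1.IsPath := hq.takeUntil hw'mem
  have hq2 : q2.IsPath := hq.dropUntil hw'mem
  have hspec : q1.append q2 = q := q.take_spec hw'mem
  have hvw' : v ≠ w' := hsnd.ne
  obtain ⟨x, h2, r2, hr⟩ := Walk.exists_eq_cons_of_ne (Ne.symm hvw') q1.reverse
  have hq1rev : q1.reverse.IsPath := hq1.reverse
  have hw'r2 : w' ∉ r2.support := by
    rw [hr, cons_isPath_iff] at hq1rev
    exact hq1rev.2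
  have hdarts : q.darts = q1.darts ++ q2.darts := by
    conv_lhs => rw [← hspec]
    exact darts_append q1 q2
  have hdq1 : d ∈ q1.darts := by
    rcases List.mem_append.mp (hdarts ▸ hd) with h | h
    · exact h
    · exfalso
      have hmem : w' ∈ q2.support.tail := by
        rw [← map_snd_darts]
        exact List.mem_map.mpr ⟨d, h, rfl⟩
      have hnd := hq2.support_nodup
      rw [q2.support_eq_cons] at hnd
      exact (List.nodup_cons.mp hnd).1 hmem
  have hq1darts : q1.darts = (r2.darts.map Dart.symm).reverse ++ [(⟨(w', x), h2⟩ : G.Dart).symm] := by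
    conv_lhs => rw [← q1.reverse_reverse]
    rw [darts_reverse, hr, darts_cons]
    simp
  have hx : d.fst = x := by
    rcases List.mem_append.mp (hq1darts ▸ hdq1) with h | h
    · exfalso
      obtain ⟨e, he, hde⟩ := List.mem_map.mp (List.mem_reverse.mp h)
      have hef : e.fst = w' := by
        have : d.snd = e.fst := by rw [← hde]; rfl
        rw [← this]
      exact hw'r2 (hef ▸ dart_fst_mem_support_of_mem_darts r2 he)
    · have : d = (⟨(w', x), h2⟩ : G.Dart).symm := List.mem_singleton.mp h
      rw [this]; rfl
  have hux : G.Adj u x := hx ▸ hfst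
  set P : G.Walk w' v := q2.append (Walk.cons hux r2) with hPdef
  set c : G.Walk v v := Walk.cons hsnd P with hcdef
  have hq1s : q1.support = r2.support.reverse ++ [w'] := by
    have h1 : q1.support.reverse = w' :: r2.support := by
      rw [← support_reverse, hr, support_cons]
    rw [← List.reverse_reverse q1.support, h1]
    simp
  have hPs : P.support = q2.support ++ r2.support := by
    rw [hPdef, support_append, support_cons, List.tail_cons]
  have hqs : q.support = q1.support ++ q2.support.tail := by
    conv_lhs => rw [← hspec]
    exact support_append q1 q2
  have hperm : P.support.Perm q.support := by
    rw [hPs, hqs, hq1s, q2.support_eq_cons, List.tail_cons]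
    have h2' : List.Perm (q2.support.tail ++ r2.support) (r2.support.reverse ++ q2.support.tail) :=
      List.perm_append_comm.trans ((r2.support.reverse_perm.symm).append_right _)
    refine (h2'.cons w').trans ?_
    rw [List.append_assoc, List.singleton_append]
    exact List.perm_middle.symm
  have hPnodup : P.support.Nodup := hperm.nodup_iff.mpr hq.support_nodup
  have hPall : ∀ z, z ∈ P.support := fun z => hperm.mem_iff.mpr (hall z)
  have hP : P.IsPath := IsPath.mk' hPnodup
  have hedge : s(v, w') ∉ P.edges := by
    intro hmem
    rw [hPdef, edges_append, edges_cons] at hmem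
    rcases List.mem_append.mp hmem with h | h
    · have hvs : v ∈ q2.support := q2.fst_mem_support_of_mem_edges h
      rw [q2.support_eq_cons] at hvs
      rcases List.mem_cons.mp hvs with h' | h'
      · exact hvw' h'
      · have hnd := hq.support_nodup
        rw [hqs] at hnd
        exact (List.nodup_append'.mp hnd).2.2 q1.start_mem_support h'
    · rcases List.mem_cons.mp h with h' | h'
      · rw [Sym2.eq_iff] at h'
        rcases h' with ⟨h1, -⟩ | ⟨-, h2'⟩
        · exact hbip.2.1.ne_of_mem hu hv h1.symm
        · exact huv (h2' ▸ hsnd).symm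
      · exact hw'r2 (r2.snd_mem_support_of_mem_edges h')
  have hcyc : c.IsCycle := (Walk.cons_isCycle_iff P hsnd).mpr ⟨hP, hedge⟩
  refine ⟨v, c, ?_⟩
  rw [Walk.isHamiltonianCycle_iff_isCycle_and_support_count_tail_eq_one]
  refine ⟨hcyc, fun z => ?_⟩
  have hct : c.support.tail = P.support := by
    rw [hcdef, support_cons, List.tail_cons]
  rw [hct]
  exact List.count_eq_one_of_mem hPnodup (hPall z)

lemma aux_path {V : Type*} [DecidableEq V] {G' : SimpleGraph V} {u v : V} (c : G'.Walk u u)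
    (hc : c.IsHamiltonianCycle) (huv : u ≠ v) (he : s(u, v) ∈ c.edges) :
    ∃ q : G'.Walk v u, q.IsPath ∧ (∀ z, z ∈ q.support) ∧ s(u, v) ∉ q.edges := by
  cases c with
  | nil => exact absurd rfl hc.isCycle.ne_nil
  | cons hab q0 =>
    rename_i b
    have hcyc := hc.isCycle
    rw [cons_isCycle_iff] at hcyc
    obtain ⟨hq0, hnotin⟩ := hcyc
    have hall : ∀ z, z ∈ q0.support := by
      intro z
      have hz := hc.mem_support z
      rw [support_cons] at hz
      rcases List.mem_cons.mp hz with rfl | h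
      · exact q0.end_mem_support
      · exact h
    rw [edges_cons] at he
    by_cases hbv : b = v
    · subst hbv
      exact ⟨q0, hq0, hall, hnotin⟩
    · have heq0 : s(u, v) ∈ q0.edges := by
        rcases List.mem_cons.mp he with h | h
        · rw [Sym2.eq_iff] at h
          rcases h with ⟨-, h1⟩ | ⟨h1, -⟩
          · exact absurd h1.symm hbv
          · exact absurd h1 hab.ne
        · exact h
      have hub : u ≠ b := hab.ne
      obtain ⟨x, h2, r2, hr⟩ := Walk.exists_eq_cons_of_ne hub q0.reverse
      have hq0rev : q0.reverse.IsPath := hq0.reverse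
      have hq0rev' := hq0rev
      rw [hr, cons_isPath_iff] at hq0rev'
      obtain ⟨hr2path, hunotr2⟩ := hq0rev'
      have hxv : x = v := by
        have hmem : s(u, v) ∈ q0.reverse.edges := by
          rw [edges_reverse, List.mem_reverse]; exact heq0
        rw [hr, edges_cons] at hmem
        rcases List.mem_cons.mp hmem with h | h
        · rw [Sym2.eq_iff] at h
          rcases h with ⟨-, h1⟩ | ⟨h1, -⟩
          · exact h1.symm
          · exact absurd h1 h2.ne
        · exact absurd (r2.fst_mem_support_of_mem_edges h) hunotr2
      have hxv' : v = x := hxv.symm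
      subst hxv'
      have hnr2 : s(u, v) ∉ r2.edges := by
        have htr := hq0rev.isTrail.edges_nodup
        rw [hr, edges_cons] at htr
        exact (List.nodup_cons.mp htr).1
      refine ⟨r2.concat hab.symm, ?_, ?_, ?_⟩
      · rw [isPath_def, support_concat]
        rw [List.nodup_append']
        exact ⟨hr2path.support_nodup, List.nodup_singleton u,
          fun a ha hmem => hunotr2 ((List.mem_singleton.mp hmem) ▸ ha)⟩
      · intro z
        rw [support_concat]
        rcases List.mem_cons.mp ((support_cons hab q0) ▸ hc.mem_support z) with rfl | h
        · exact List.mem_append.mpr (Or.inr (List.mem_singleton.mpr rfl))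
        · have : z ∈ q0.reverse.support := by rw [support_reverse, List.mem_reverse]; exact h
          rw [hr, support_cons] at this
          rcases List.mem_cons.mp this with rfl | h'
          · exact List.mem_append.mpr (Or.inr (List.mem_singleton.mpr rfl))
          · exact List.mem_append.mpr (Or.inl h')
      · rw [edges_concat, List.concat_eq_append]
        intro hmem
        rcases List.mem_append.mp hmem with h | h
        · exact hnr2 h
        · rw [List.mem_singleton, Sym2.eq_iff] at h
          rcases h with ⟨h1, -⟩ | ⟨-, h1⟩
          · exact hub h1
          · exact hbv h1.symm


/-- Bipartite closure step: if `u ∈ X` and `v ∈ Y` are non-adjacent with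
`d(u) + d(v) ≥ n + 1` in a balanced bipartite graph with parts of size `n`, then `G` is
Hamiltonian iff `G + uv` is Hamiltonian. -/
theorem stmt4 {V : Type*} [Fintype V] [DecidableEq V] (n : ℕ)
    (G : SimpleGraph V) (X Y : Set V)
    (hbip : IsBipartition G X Y) (hX : X.ncard = n) (hY : Y.ncard = n)
    (u v : V) (hu : u ∈ X) (hv : v ∈ Y) (huv : ¬ G.Adj u v)
    (hdeg : n + 1 ≤ (G.neighborSet u).ncard + (G.neighborSet v).ncard) :
    G.IsHamiltonian ↔ (G ⊔ SimpleGraph.fromEdgeSet {s(u, v)}).IsHamiltonian := by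
  classical
  constructor
  · exact fun h => h.mono le_sup_left
  · intro hH' hcard
    obtain ⟨a, p, hp⟩ := hH' hcard
    have hne : u ≠ v := hbip.2.1.ne_of_mem hu hv
    have hdecomp : ∀ e ∈ (G ⊔ SimpleGraph.fromEdgeSet {s(u, v)}).edgeSet,
        e ≠ s(u, v) → e ∈ G.edgeSet := by
      intro e hmem hnee
      rw [edgeSet_sup] at hmem
      rcases hmem with h | h
      · exact h
      · rw [edgeSet_fromEdgeSet] at h
        exact absurd (Set.mem_singleton_iff.mp h.1) hnee
    by_cases he : s(u, v) ∈ p.edges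
    · -- the cycle uses the new edge
      have humem : u ∈ p.support := hp.mem_support u
      set c1 := p.rotate u humem with hc1def
      have hc1 : c1.IsHamiltonianCycle := by
        rw [Walk.isHamiltonianCycle_iff_isCycle_and_support_count_tail_eq_one]
        refine ⟨hp.isCycle.rotate humem, fun z => ?_⟩
        rw [(support_rotate p u humem).perm.count_eq]
        exact (Walk.isHamiltonianCycle_iff_isCycle_and_support_count_tail_eq_one.mp hp).2 z
      have he1 : s(u, v) ∈ c1.edges := (rotate_edges p u humem).perm.mem_iff.mpr he
      obtain ⟨q, hqp, hqall, hqe⟩ := aux_path c1 hc1 hne he1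
      have hsub : ∀ e ∈ q.edges, e ∈ G.edgeSet := fun e hmem =>
        hdecomp e (q.edges_subset_edgeSet hmem) (fun h => hqe (h ▸ hmem))
      exact key hbip hX hu hv huv hdeg (q.transfer G hsub) (hqp.transfer hsub)
        (fun z => by rw [support_transfer]; exact hqall z)
    · -- the cycle avoids the new edge
      have hsub : ∀ e ∈ p.edges, e ∈ G.edgeSet := fun e hmem =>
        hdecomp e (p.edges_subset_edgeSet hmem) (fun h => he (h ▸ hmem))
      refine ⟨a, p.transfer G hsub, ?_⟩
      rw [Walk.isHamiltonianCycle_iff_isCycle_and_support_count_tail_eq_one]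
      refine ⟨hp.isCycle.transfer hsub, fun z => ?_⟩
      rw [support_transfer]
      exact (Walk.isHamiltonianCycle_iff_isCycle_and_support_count_tail_eq_one.mp hp).2 z
end

section
/- For n ≥ 5, the graph G_{n,n} is a connected balanced bipartite graph of order 2n with bipartite toughness t^B(G_{n,n}) ≥ 1. -/
open SimpleGraph

lemma gnn_adj {n : ℕ} (i j : Fin n) :
    (Gnn n).Adj (Sum.inl i) (Sum.inr j) ↔
      (3 ≤ (j:ℕ) ∨ ((j:ℕ) < 3 ∧ ((i:ℕ) = 0 ∨ (i:ℕ) = (j:ℕ) + 1))) := by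
  simp [Gnn]

lemma gnn_adj_ll {n : ℕ} (i j : Fin n) : ¬ (Gnn n).Adj (Sum.inl i) (Sum.inl j) := by
  simp [Gnn]

lemma gnn_adj_rr {n : ℕ} (i j : Fin n) : ¬ (Gnn n).Adj (Sum.inr i) (Sum.inr j) := by
  simp [Gnn]

lemma numComp_eq_one {V : Type*} (G : SimpleGraph V) (S : Set V)
    (x : ↥Sᶜ) (h : ∀ y : ↥Sᶜ, (SimpleGraph.induce Sᶜ G).Reachable y x) :
    numComp G S = 1 := by
  haveI : Subsingleton (SimpleGraph.induce Sᶜ G).ConnectedComponent := by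
    constructor
    intro a b
    refine SimpleGraph.ConnectedComponent.ind₂ (fun y z => ?_) a b
    exact SimpleGraph.ConnectedComponent.sound ((h y).trans (h z).symm)
  haveI : Nonempty (SimpleGraph.induce Sᶜ G).ConnectedComponent :=
    ⟨(SimpleGraph.induce Sᶜ G).connectedComponentMk x⟩
  exact Nat.card_eq_one_iff_unique.mpr ⟨inferInstance, inferInstance⟩

lemma numComp_le {V : Type*} [Fintype V] (G : SimpleGraph V) (S : Set V)
    (f : S → (SimpleGraph.induce Sᶜ G).ConnectedComponent) (hf : Function.Surjective f) :
    numComp G S ≤ S.ncard := by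
  rw [← Nat.card_coe_set_eq]
  exact Nat.card_le_card_of_surjective f hf

lemma tough_left (n : ℕ) (hn : 5 ≤ n) (S : Set (Fin n ⊕ Fin n))
    (hS : S ⊂ Set.range Sum.inl) (hc : 1 < numComp (Gnn n) S) :
    numComp (Gnn n) S ≤ S.ncard := by
  classical
  set H := SimpleGraph.induce Sᶜ (Gnn n) with hH
  have hinr : ∀ j : Fin n, Sum.inr j ∈ Sᶜ := by
    intro j hj
    obtain ⟨i, hi⟩ := hS.1 hj
    exact Sum.inl_ne_inr hi
  have h3 : (3:ℕ) < n := by omega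
  have h0 : (0:ℕ) < n := by omega
  have adj3 : ∀ i : Fin n, (Gnn n).Adj (Sum.inl i) (Sum.inr ⟨3, h3⟩) := by
    intro i; rw [gnn_adj]; exact Or.inl (by simp)
  have adj0 : ∀ j : Fin n, (Gnn n).Adj (Sum.inl ⟨0, h0⟩) (Sum.inr j) := by
    intro j; rw [gnn_adj]
    rcases le_or_gt 3 (j:ℕ) with h | h
    · exact Or.inl h
    · exact Or.inr ⟨h, Or.inl rfl⟩
  -- Step 1 : u_0 ∈ S
  have hu0 : Sum.inl ⟨0, h0⟩ ∈ S := by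
    by_contra h0S
    have hcon : numComp (Gnn n) S = 1 := by
      refine numComp_eq_one _ _ ⟨Sum.inr ⟨3,h3⟩, hinr _⟩ ?_
      rintro ⟨x, hx⟩
      match x, hx with
      | Sum.inl i, hx =>
        exact SimpleGraph.Adj.reachable
          (show H.Adj ⟨Sum.inl i, hx⟩ ⟨Sum.inr ⟨3,h3⟩, hinr _⟩ from adj3 i)
      | Sum.inr j, hx =>
        have r1 : H.Adj ⟨Sum.inr j, hx⟩ ⟨Sum.inl ⟨0,h0⟩, h0S⟩ := (adj0 j).symm
        have r2 : H.Adj ⟨Sum.inl ⟨0,h0⟩, h0S⟩ ⟨Sum.inr ⟨3,h3⟩, hinr _⟩ := adj3 _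
        exact r1.reachable.trans r2.reachable
    omega
  -- Step 2 : surjection from S onto components
  obtain ⟨w, hwX, hwS⟩ := Set.exists_of_ssubset hS
  obtain ⟨i₀, rfl⟩ := hwX
  set B : H.ConnectedComponent := H.connectedComponentMk ⟨Sum.inr ⟨3, h3⟩, hinr _⟩ with hBdef
  have hB : ∀ (i : Fin n) (hx : Sum.inl i ∈ Sᶜ),
      H.connectedComponentMk ⟨Sum.inl i, hx⟩ = B := fun i hx =>
    SimpleGraph.ConnectedComponent.sound
      (SimpleGraph.Adj.reachable
        (show H.Adj ⟨Sum.inl i, hx⟩ ⟨Sum.inr ⟨3,h3⟩, hinr _⟩ from adj3 i))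
  let g : Fin n ⊕ Fin n → H.ConnectedComponent :=
    Sum.elim (fun i => if 1 ≤ (i:ℕ) ∧ (i:ℕ) ≤ 3 then
        H.connectedComponentMk ⟨Sum.inr ⟨(i:ℕ)-1, by omega⟩, hinr _⟩ else B)
      (fun _ => B)
  have hg0 : g (Sum.inl ⟨0,h0⟩) = B := by
    simp only [g, Sum.elim_inl]
    rw [if_neg]
    simp
  refine numComp_le _ _ (fun s : S => g s.val) ?_
  intro C
  refine SimpleGraph.ConnectedComponent.ind (fun x => ?_) C
  match x with
  | ⟨Sum.inl i, hx⟩ =>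
    refine ⟨⟨Sum.inl ⟨0,h0⟩, hu0⟩, ?_⟩
    show g (Sum.inl ⟨0,h0⟩) = _
    rw [hg0, hB i hx]
  | ⟨Sum.inr j, hx⟩ =>
    rcases lt_or_ge (j:ℕ) 3 with hj | hj
    · by_cases hjs : Sum.inl (⟨(j:ℕ)+1, by omega⟩ : Fin n) ∈ S
      · refine ⟨⟨_, hjs⟩, ?_⟩
        show g (Sum.inl ⟨(j:ℕ)+1, _⟩) = _
        simp only [g, Sum.elim_inl]
        rw [if_pos (show _ ∧ _ from ⟨by simp, by simp; omega⟩)]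
        exact congrArg H.connectedComponentMk (Subtype.ext (by simp [Fin.ext_iff]))
      · -- inr j ~ inl (j+1) ~ inr 3
        have r1 : H.Adj ⟨Sum.inr j, hx⟩ ⟨Sum.inl ⟨(j:ℕ)+1, by omega⟩, hjs⟩ := by
          refine SimpleGraph.Adj.symm ?_
          show (Gnn n).Adj (Sum.inl _) (Sum.inr j)
          rw [gnn_adj]
          exact Or.inr ⟨hj, Or.inr (by simp)⟩
        refine ⟨⟨Sum.inl ⟨0,h0⟩, hu0⟩, ?_⟩
        show g (Sum.inl ⟨0,h0⟩) = _
        rw [hg0, hBdef]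
        exact (SimpleGraph.ConnectedComponent.sound
          (r1.reachable.trans (SimpleGraph.Adj.reachable
            (show H.Adj _ ⟨Sum.inr ⟨3,h3⟩, hinr _⟩ from adj3 _)))).symm
    · -- inr j ~ inl i₀ ~ inr 3
      have r1 : H.Adj ⟨Sum.inr j, hx⟩ ⟨Sum.inl i₀, hwS⟩ := by
        refine SimpleGraph.Adj.symm ?_
        show (Gnn n).Adj (Sum.inl i₀) (Sum.inr j)
        rw [gnn_adj]
        exact Or.inl hj
      refine ⟨⟨Sum.inl ⟨0,h0⟩, hu0⟩, ?_⟩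
      show g (Sum.inl ⟨0,h0⟩) = _
      rw [hg0, hBdef]
      exact (SimpleGraph.ConnectedComponent.sound
        (r1.reachable.trans (SimpleGraph.Adj.reachable
          (show H.Adj _ ⟨Sum.inr ⟨3,h3⟩, hinr _⟩ from adj3 _)))).symm

lemma tough_right (n : ℕ) (hn : 5 ≤ n) (S : Set (Fin n ⊕ Fin n))
    (hS : S ⊂ Set.range Sum.inr) (hc : 1 < numComp (Gnn n) S) :
    numComp (Gnn n) S ≤ S.ncard := by
  classical
  set H := SimpleGraph.induce Sᶜ (Gnn n) with hH
  have hinl : ∀ i : Fin n, Sum.inl i ∈ Sᶜ := by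
    intro i hi
    obtain ⟨j, hj⟩ := hS.1 hi
    exact Sum.inr_ne_inl hj
  have h3 : (3:ℕ) < n := by omega
  have h0 : (0:ℕ) < n := by omega
  have adj0 : ∀ j : Fin n, (Gnn n).Adj (Sum.inl ⟨0, h0⟩) (Sum.inr j) := by
    intro j; rw [gnn_adj]
    rcases le_or_gt 3 (j:ℕ) with h | h
    · exact Or.inl h
    · exact Or.inr ⟨h, Or.inl rfl⟩
  -- Step 1 : every v_j with j ≥ 3 is in S
  have hv : ∀ j : Fin n, 3 ≤ (j:ℕ) → Sum.inr j ∈ S := by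
    intro j hj3
    by_contra hjS
    have hcon : numComp (Gnn n) S = 1 := by
      refine numComp_eq_one _ _ ⟨Sum.inl ⟨0,h0⟩, hinl _⟩ ?_
      rintro ⟨x, hx⟩
      match x, hx with
      | Sum.inr k, hx =>
        exact SimpleGraph.Adj.reachable
          (show H.Adj ⟨Sum.inr k, hx⟩ ⟨Sum.inl ⟨0,h0⟩, hinl _⟩ from (adj0 k).symm)
      | Sum.inl i, hx =>
        have r1 : H.Adj ⟨Sum.inl i, hx⟩ ⟨Sum.inr j, hjS⟩ := by
          show (Gnn n).Adj (Sum.inl i) (Sum.inr j)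
          rw [gnn_adj]; exact Or.inl hj3
        have r2 : H.Adj ⟨Sum.inr j, hjS⟩ ⟨Sum.inl ⟨0,h0⟩, hinl _⟩ := (adj0 j).symm
        exact r1.reachable.trans r2.reachable
    omega
  -- Step 2 : surjection from S onto components
  set B : H.ConnectedComponent := H.connectedComponentMk ⟨Sum.inl ⟨0, h0⟩, hinl _⟩ with hBdef
  let g : Fin n ⊕ Fin n → H.ConnectedComponent :=
    Sum.elim (fun _ => B)
      (fun j => if h : (j:ℕ) < 3 then
          H.connectedComponentMk ⟨Sum.inl ⟨(j:ℕ)+1, by omega⟩, hinl _⟩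
        else if (j:ℕ) = 3 then B
        else H.connectedComponentMk ⟨Sum.inl j, hinl _⟩)
  have hj3n : Sum.inr (⟨3, h3⟩ : Fin n) ∈ S := hv _ (by simp)
  have hg3 : g (Sum.inr ⟨3,h3⟩) = B := by
    simp only [g, Sum.elim_inr]
    rw [dif_neg (by simp), if_pos (by simp)]
  refine numComp_le _ _ (fun s : S => g s.val) ?_
  intro C
  refine SimpleGraph.ConnectedComponent.ind (fun x => ?_) C
  match x with
  | ⟨Sum.inr j, hx⟩ =>
    -- j < 3 (else inr j ∈ S), and inr j ~ inl 0
    refine ⟨⟨Sum.inr ⟨3,h3⟩, hj3n⟩, ?_⟩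
    show g (Sum.inr ⟨3,h3⟩) = _
    rw [hg3, hBdef]
    exact (SimpleGraph.ConnectedComponent.sound
      (SimpleGraph.Adj.reachable
        (show H.Adj ⟨Sum.inr j, hx⟩ ⟨Sum.inl ⟨0,h0⟩, hinl _⟩ from (adj0 j).symm))).symm
  | ⟨Sum.inl i, hx⟩ =>
    rcases le_or_gt 4 (i:ℕ) with hi4 | hi4
    · -- witness inr i ∈ S
      refine ⟨⟨Sum.inr i, hv i (by omega)⟩, ?_⟩
      show g (Sum.inr i) = _
      simp only [g, Sum.elim_inr]
      rw [dif_neg (show ¬((i:ℕ) < 3) by omega), if_neg (show ¬((i:ℕ) = 3) by omega)]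
    · rcases Nat.eq_zero_or_pos (i:ℕ) with hi0 | hi1
      · -- i = 0 : witness inr 3
        refine ⟨⟨Sum.inr ⟨3,h3⟩, hj3n⟩, ?_⟩
        show g (Sum.inr ⟨3,h3⟩) = _
        rw [hg3, hBdef]
        exact congrArg H.connectedComponentMk (Subtype.ext (by simp [Fin.ext_iff, hi0]))
      · -- 1 ≤ i ≤ 3
        by_cases his : Sum.inr (⟨(i:ℕ)-1, by omega⟩ : Fin n) ∈ S
        · refine ⟨⟨_, his⟩, ?_⟩
          show g (Sum.inr ⟨(i:ℕ)-1, _⟩) = _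
          simp only [g, Sum.elim_inr]
          rw [dif_pos (show ((i:ℕ)-1 < 3) by omega)]
          refine congrArg H.connectedComponentMk (Subtype.ext ?_)
          show Sum.inl (⟨(i:ℕ)-1+1, _⟩ : Fin n) = Sum.inl i
          congr 1
          exact Fin.ext (by show (i:ℕ)-1+1 = (i:ℕ); omega)
        · -- inl i ~ inr (i-1) ~ inl 0
          have r1 : H.Adj ⟨Sum.inl i, hx⟩ ⟨Sum.inr ⟨(i:ℕ)-1, by omega⟩, his⟩ := by
            show (Gnn n).Adj (Sum.inl i) (Sum.inr _)
            rw [gnn_adj]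
            exact Or.inr ⟨show (i:ℕ)-1 < 3 by omega, Or.inr (show (i:ℕ) = (i:ℕ)-1+1 by omega)⟩
          have r2 : H.Adj ⟨Sum.inr ⟨(i:ℕ)-1, by omega⟩, his⟩ ⟨Sum.inl ⟨0,h0⟩, hinl _⟩ :=
            (adj0 _).symm
          refine ⟨⟨Sum.inr ⟨3,h3⟩, hj3n⟩, ?_⟩
          show g (Sum.inr ⟨3,h3⟩) = _
          rw [hg3, hBdef]
          exact (SimpleGraph.ConnectedComponent.sound (r1.reachable.trans r2.reachable)).symm


/-- For `n ≥ 5`, `G_{n,n}` is a connected balanced bipartite graph of order `2n`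
with bipartite toughness at least `1`. -/
theorem stmt6 (n : ℕ) (hn : 5 ≤ n) :
    (Gnn n).Connected ∧
      IsBipartition (Gnn n) (Set.range Sum.inl) (Set.range Sum.inr) ∧
      (Set.range (Sum.inl : Fin n → Fin n ⊕ Fin n)).ncard = n ∧
      (Set.range (Sum.inr : Fin n → Fin n ⊕ Fin n)).ncard = n ∧
      Fintype.card (Fin n ⊕ Fin n) = 2 * n ∧
      BTough1 (Gnn n) (Set.range Sum.inl) (Set.range Sum.inr) := by
  have h3 : (3:ℕ) < n := by omega
  have h0 : (0:ℕ) < n := by omega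
  have adj3 : ∀ i : Fin n, (Gnn n).Adj (Sum.inl i) (Sum.inr ⟨3, h3⟩) := by
    intro i; rw [gnn_adj]; exact Or.inl (by simp)
  have adj0 : ∀ j : Fin n, (Gnn n).Adj (Sum.inl ⟨0, h0⟩) (Sum.inr j) := by
    intro j; rw [gnn_adj]
    rcases le_or_gt 3 (j:ℕ) with h | h
    · exact Or.inl h
    · exact Or.inr ⟨h, Or.inl rfl⟩
  refine ⟨?_, ⟨?_, ?_, ?_⟩, ?_, ?_, ?_, ?_⟩
  · -- connected
    have key : ∀ w : Fin n ⊕ Fin n, (Gnn n).Reachable w (Sum.inl ⟨0, h0⟩) := by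
      intro w
      match w with
      | Sum.inr j => exact ((adj0 j).symm).reachable
      | Sum.inl i => exact (adj3 i).reachable.trans ((adj0 ⟨3,h3⟩).symm).reachable
    haveI : Nonempty (Fin n ⊕ Fin n) := ⟨Sum.inl ⟨0,h0⟩⟩
    exact ⟨fun u v => (key u).trans (key v).symm⟩
  · ext x; cases x <;> simp
  · rw [Set.disjoint_left]
    rintro _ ⟨i, rfl⟩ ⟨j, hj⟩
    exact Sum.inr_ne_inl hj
  · rintro u v huv
    match u, v with
    | Sum.inl i, Sum.inl j => exact absurd huv (gnn_adj_ll i j)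
    | Sum.inr i, Sum.inr j => exact absurd huv (gnn_adj_rr i j)
    | Sum.inl i, Sum.inr j => exact Or.inl ⟨⟨i, rfl⟩, ⟨j, rfl⟩⟩
    | Sum.inr i, Sum.inl j => exact Or.inr ⟨⟨i, rfl⟩, ⟨j, rfl⟩⟩
  · rw [← Nat.card_coe_set_eq, Nat.card_range_of_injective Sum.inl_injective]
    simp
  · rw [← Nat.card_coe_set_eq, Nat.card_range_of_injective Sum.inr_injective]
    simp
  · simp [two_mul]
  · intro S hS hc
    rcases hS with h | h
    · exact tough_left n hn S h hc
    · exact tough_right n hn S h hc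
end

section
/- For n ≥ 8, the graph M_n is a non-complete connected graph of order n with toughness t(M_n) ≥ 1, and M_n contains no Hamilton cycle. -/
open SimpleGraph

lemma mn_adj_of_lt {n : ℕ} {a b : Fin n} (ha : (a:ℕ) < n - 3) (hb : (b:ℕ) < n - 3)
    (hab : a ≠ b) : (Mn n).Adj a b := by
  rw [Mn, fromRel_adj]
  exact ⟨hab, Or.inl (Or.inl ⟨ha, hb⟩)⟩

lemma mn_adj_zero {n : ℕ} (hn : 8 ≤ n) {a : Fin n} (ha : (a:ℕ) ≠ 0) :
    (Mn n).Adj a ⟨0, by omega⟩ := by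
  rw [Mn, fromRel_adj]
  refine ⟨fun hh => ha (by simpa using congrArg Fin.val hh), ?_⟩
  by_cases h : (a:ℕ) < n - 3
  · exact Or.inl (Or.inl ⟨h, by simp; omega⟩)
  · exact Or.inl (Or.inr ⟨by omega, Or.inl (by simp)⟩)

lemma mn_u_neighbors {n : ℕ} (hn : 8 ≤ n) {a b : Fin n} (ha : n - 3 ≤ (a:ℕ))
    (h : (Mn n).Adj a b) : (b:ℕ) = 0 ∨ (b:ℕ) = (a:ℕ) - (n - 3) + 1 := by
  rw [Mn, fromRel_adj] at h
  obtain ⟨hne, h | h⟩ := h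
  · rcases h with ⟨h1, _⟩ | ⟨_, h2⟩
    · omega
    · exact h2
  · rcases h with ⟨_, h1⟩ | ⟨h1, h2 | h2⟩
    · omega
    · have := a.isLt; omega
    · have := a.isLt; have := b.isLt; omega

lemma mn_adj_priv {n : ℕ} (hn : 8 ≤ n) {a : Fin n} (ha : n - 3 ≤ (a:ℕ)) :
    (Mn n).Adj a ⟨(a:ℕ) - (n - 3) + 1, by have := a.isLt; omega⟩ := by
  rw [Mn, fromRel_adj]
  constructor
  · intro hh
    have := congrArg Fin.val hh
    simp at this
    have := a.isLt; omega
  · exact Or.inl (Or.inr ⟨ha, Or.inr rfl⟩)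

lemma mn_tough {n : ℕ} (hn : 8 ≤ n) (S : Set (Fin n)) (hS : 1 < numComp (Mn n) S) :
    numComp (Mn n) S ≤ S.ncard := by
  classical
  set G' := SimpleGraph.induce Sᶜ (Mn n) with hG'
  by_cases hA : ∀ a : Fin n, (a:ℕ) < n - 3 → a ∈ S
  · -- all clique vertices removed
    have h1 : numComp (Mn n) S ≤ Nat.card ↥Sᶜ := by
      refine Nat.card_le_card_of_surjective G'.connectedComponentMk ?_
      intro c
      exact c.exists_rep
    have h2 : (Sᶜ : Set (Fin n)).ncard ≤ 3 := by
      have hsub : Sᶜ ⊆ ({⟨n-3, by omega⟩, ⟨n-2, by omega⟩, ⟨n-1, by omega⟩} : Set (Fin n)) := by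
        intro x hx
        have hx3 : n - 3 ≤ (x:ℕ) := by
          by_contra h
          exact hx (hA x (by omega))
        have := x.isLt
        simp only [Set.mem_insert_iff, Set.mem_singleton_iff]
        rcases Nat.lt_or_ge (x:ℕ) (n-2) with h | h
        · exact Or.inl (Fin.ext (show (x:ℕ) = n - 3 by omega))
        · rcases Nat.lt_or_ge (x:ℕ) (n-1) with h' | h'
          · exact Or.inr (Or.inl (Fin.ext (show (x:ℕ) = n - 2 by omega)))
          · exact Or.inr (Or.inr (Fin.ext (show (x:ℕ) = n - 1 by omega)))
      calc (Sᶜ : Set (Fin n)).ncard ≤ _ := Set.ncard_le_ncard hsub (Set.toFinite _)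
        _ ≤ 3 := by
          refine le_trans (Set.ncard_insert_le _ _) ?_
          have := Set.ncard_insert_le (⟨n-2, by omega⟩ : Fin n)
            ({⟨n-1, by omega⟩} : Set (Fin n))
          simp [Set.ncard_singleton] at this ⊢
          omega
    have h5 : 5 ≤ S.ncard := by
      have hg : Function.Injective (fun k : Fin 5 =>
          (⟨(⟨(k:ℕ), by omega⟩ : Fin n), hA _ (by have := k.isLt; simp; omega)⟩ : ↥S)) := by
        intro a b hab
        have := congrArg (fun z : ↥S => ((z : Fin n) : ℕ)) hab
        exact Fin.ext (by simpa using this)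
      have := Nat.card_le_card_of_injective _ hg
      rwa [Nat.card_eq_fintype_card, Fintype.card_fin, Nat.card_coe_set_eq] at this
    rw [← Nat.card_coe_set_eq] at h2
    omega
  · push_neg at hA
    obtain ⟨w, hwlt, hwS⟩ := hA
    have hw : w ∈ Sᶜ := hwS
    set C0 := G'.connectedComponentMk ⟨w, hw⟩ with hC0
    -- clique vertices all in C0
    have hclique : ∀ x : ↥(Sᶜ), ((x:Fin n):ℕ) < n - 3 → G'.connectedComponentMk x = C0 := by
      intro x hx
      by_cases hxw : (x : Fin n) = w
      · congr 1
        exact Subtype.ext hxw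
      · refine ConnectedComponent.sound ?_
        refine Adj.reachable ?_
        show (Mn n).Adj (x : Fin n) w
        exact mn_adj_of_lt hx hwlt hxw
    have hiso : ∀ x : ↥(Sᶜ), G'.connectedComponentMk x ≠ C0 →
        n - 3 ≤ ((x:Fin n):ℕ) ∧ (⟨0, by omega⟩ : Fin n) ∈ S ∧
          (⟨((x:Fin n):ℕ) - (n-3) + 1, by have := (x:Fin n).isLt; omega⟩ : Fin n) ∈ S := by
      intro x hx
      have hxu : n - 3 ≤ ((x:Fin n):ℕ) := by
        by_contra h
        exact hx (hclique x (by omega))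
      refine ⟨hxu, ?_, ?_⟩
      · by_contra h0
        apply hx
        have hadj : G'.Adj x ⟨⟨0, by omega⟩, h0⟩ := by
          show (Mn n).Adj (x : Fin n) ⟨0, by omega⟩
          exact mn_adj_zero hn (by omega)
        refine (ConnectedComponent.sound hadj.reachable).trans ?_
        exact hclique _ (by simp; omega)
      · by_contra h0
        apply hx
        have hadj : G'.Adj x ⟨⟨((x:Fin n):ℕ) - (n-3) + 1,
            by have := (x:Fin n).isLt; omega⟩, h0⟩ := by
          show (Mn n).Adj (x : Fin n) _
          exact mn_adj_priv hn hxu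
        refine (ConnectedComponent.sound hadj.reachable).trans ?_
        exact hclique _ (by simp; omega)
    -- 0 ∈ S
    have hzero : (⟨0, by omega⟩ : Fin n) ∈ S := by
      have : Nontrivial G'.ConnectedComponent := by
        rw [← Finite.one_lt_card_iff_nontrivial]
        exact hS
      obtain ⟨D, hD⟩ := exists_ne C0
      obtain ⟨x, hx⟩ := D.exists_rep
      exact ((hiso x (by rw [show G'.connectedComponentMk x = D from hx]; exact hD)).2.1)
    have hmem : ∀ D : G'.ConnectedComponent, (hD : D ≠ C0) →
        (⟨((Classical.choose D.exists_rep : ↥(Sᶜ)) : Fin n).val - (n-3) + 1,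
          by have := ((Classical.choose D.exists_rep : ↥(Sᶜ)) : Fin n).isLt; omega⟩ : Fin n) ∈ S := by
      intro D hD
      have hx : G'.connectedComponentMk (Classical.choose D.exists_rep) = D :=
        Classical.choose_spec D.exists_rep
      exact (hiso _ (by rw [hx]; exact hD)).2.2
    have hge : ∀ D : G'.ConnectedComponent, (hD : D ≠ C0) →
        n - 3 ≤ ((Classical.choose D.exists_rep : ↥(Sᶜ)) : Fin n).val := by
      intro D hD
      have hx : G'.connectedComponentMk (Classical.choose D.exists_rep) = D :=
        Classical.choose_spec D.exists_rep
      exact (hiso _ (by rw [hx]; exact hD)).1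
    set f : G'.ConnectedComponent → ↥S := fun D =>
      if hD : D = C0 then ⟨⟨0, by omega⟩, hzero⟩
      else ⟨⟨((Classical.choose D.exists_rep : ↥(Sᶜ)) : Fin n).val - (n-3) + 1,
        by have := ((Classical.choose D.exists_rep : ↥(Sᶜ)) : Fin n).isLt; omega⟩, hmem D hD⟩
      with hf
    have hfinj : Function.Injective f := by
      intro D1 D2 h12
      by_cases h1 : D1 = C0 <;> by_cases h2 : D2 = C0
      · rw [h1, h2]
      · exfalso
        rw [hf] at h12
        simp only [dif_pos h1, dif_neg h2] at h12
        have := congrArg (fun z : ↥S => ((z : Fin n) : ℕ)) h12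
        simp at this
      · exfalso
        rw [hf] at h12
        simp only [dif_pos h2, dif_neg h1] at h12
        have := congrArg (fun z : ↥S => ((z : Fin n) : ℕ)) h12
        simp at this
      · rw [hf] at h12
        simp only [dif_neg h1, dif_neg h2] at h12
        have hv := congrArg (fun z : ↥S => ((z : Fin n) : ℕ)) h12
        simp only at hv
        have e1 := hge D1 h1
        have e2 := hge D2 h2
        have hxy : (Classical.choose D1.exists_rep : ↥(Sᶜ)) =
            (Classical.choose D2.exists_rep : ↥(Sᶜ)) := by
          apply Subtype.ext
          apply Fin.ext
          omega
        rw [← Classical.choose_spec D1.exists_rep, ← Classical.choose_spec D2.exists_rep]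
        exact congrArg _ hxy
    have := Nat.card_le_card_of_injective f hfinj
    rwa [Nat.card_coe_set_eq] at this

lemma walk_eq_of_no_adj {V : Type*} {G : SimpleGraph V} {x y : V} (p : G.Walk x y)
    (h : ∀ z, ¬ G.Adj x z) : x = y := by
  cases p with
  | nil => rfl
  | cons ha q => exact absurd ha (h _)

lemma mn_witness {n : ℕ} (hn : 8 ≤ n) :
    1 < numComp (Mn n) ({⟨0, by omega⟩, ⟨1, by omega⟩} : Set (Fin n)) := by
  classical
  set S : Set (Fin n) := {⟨0, by omega⟩, ⟨1, by omega⟩} with hSdef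
  set G' := SimpleGraph.induce Sᶜ (Mn n) with hG'
  have hu : (⟨n - 3, by omega⟩ : Fin n) ∈ Sᶜ := by
    simp only [hSdef, Set.mem_compl_iff, Set.mem_insert_iff, Set.mem_singleton_iff]
    rintro (h | h) <;> exact absurd (congrArg Fin.val h) (by simp; omega)
  have hv : (⟨4, by omega⟩ : Fin n) ∈ Sᶜ := by
    simp only [hSdef, Set.mem_compl_iff, Set.mem_insert_iff, Set.mem_singleton_iff]
    rintro (h | h) <;> exact absurd (congrArg Fin.val h) (by simp)
  rw [show numComp (Mn n) S = Nat.card G'.ConnectedComponent from rfl]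
  rw [Finite.one_lt_card_iff_nontrivial]
  refine ⟨G'.connectedComponentMk ⟨_, hu⟩, G'.connectedComponentMk ⟨_, hv⟩, ?_⟩
  intro h
  have hr := ConnectedComponent.exact h
  have hnoadj : ∀ z : ↥Sᶜ, ¬ G'.Adj ⟨⟨n - 3, by omega⟩, hu⟩ z := by
    intro z hz
    have : (Mn n).Adj ⟨n - 3, by omega⟩ (z : Fin n) := hz
    have h2 := mn_u_neighbors hn (by simp) this
    have h3 : (z : Fin n) ∈ S := by
      simp only [hSdef, Set.mem_insert_iff, Set.mem_singleton_iff]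
      rcases h2 with h2 | h2
      · exact Or.inl (Fin.ext (by simpa using h2))
      · exact Or.inr (Fin.ext (by simp at h2 ⊢; omega))
    exact z.2 h3
  obtain ⟨p⟩ := hr
  have := congrArg (fun z : ↥Sᶜ => ((z : Fin n) : ℕ)) (walk_eq_of_no_adj p hnoadj)
  simp at this
  omega

lemma mn_ne_top {n : ℕ} (hn : 8 ≤ n) : Mn n ≠ ⊤ := by
  intro h
  have hne : (⟨n - 3, by omega⟩ : Fin n) ≠ ⟨n - 2, by omega⟩ := by
    intro hh
    have := congrArg Fin.val hh
    simp at this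
    omega
  have hadj : (Mn n).Adj ⟨n - 3, by omega⟩ ⟨n - 2, by omega⟩ := by
    rw [h]
    exact hne
  have := mn_u_neighbors hn (by simp) hadj
  simp at this
  omega

lemma mn_connected {n : ℕ} (hn : 8 ≤ n) : (Mn n).Connected := by
  have hreach : ∀ v : Fin n, (Mn n).Reachable v ⟨0, by omega⟩ := by
    intro v
    by_cases h : (v:ℕ) = 0
    · have hv : v = ⟨0, by omega⟩ := Fin.ext (by simpa using h)
      rw [hv]
    · exact (mn_adj_zero hn h).reachable
  have : Nonempty (Fin n) := ⟨⟨0, by omega⟩⟩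
  exact Connected.mk (fun u v => (hreach u).trans (hreach v).symm)

lemma tough_ge_one {V : Type*} (G : SimpleGraph V) (h1 : ∃ S : Set V, 1 < numComp G S)
    (h2 : ∀ S : Set V, 1 < numComp G S → numComp G S ≤ S.ncard) : 1 ≤ toughness G := by
  rw [toughness]
  apply le_csInf
  · obtain ⟨S, hS⟩ := h1
    exact ⟨_, S, hS, rfl⟩
  · rintro b ⟨S, hS1, rfl⟩
    have hle := h2 S hS1
    have hpos : (0:ℝ) < (numComp G S : ℝ) := by
      exact_mod_cast Nat.lt_of_lt_of_le Nat.zero_lt_one hS1.le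
    rw [le_div_iff₀ hpos, one_mul]
    exact_mod_cast hle

lemma mn_toughness {n : ℕ} (hn : 8 ≤ n) : 1 ≤ toughness (Mn n) :=
  tough_ge_one _ ⟨_, mn_witness hn⟩ (mn_tough hn)

lemma two_le_count_map {α β : Type*} [DecidableEq β] {l : List α} {x y : α} {f : α → β} {v : β}
    (hx : x ∈ l) (hy : y ∈ l) (hxy : x ≠ y) (hfx : f x = v) (hfy : f y = v) :
    2 ≤ (l.map f).count v := by
  induction l with
  | nil => simp at hx
  | cons a t ih =>
    rcases List.mem_cons.1 hx with rfl | hx'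
    · rcases List.mem_cons.1 hy with rfl | hy'
      · exact absurd rfl hxy
      · have h1 : 0 < (t.map f).count v :=
          List.count_pos_iff.2 (List.mem_map.2 ⟨y, hy', hfy⟩)
        rw [List.map_cons, hfx, List.count_cons_self]
        omega
    · rcases List.mem_cons.1 hy with rfl | hy'
      · have h1 : 0 < (t.map f).count v :=
          List.count_pos_iff.2 (List.mem_map.2 ⟨x, hx', hfx⟩)
        rw [List.map_cons, hfy, List.count_cons_self]
        omega
      · refine le_trans (ih hx' hy') ?_
        rw [List.map_cons]
        exact List.Sublist.count_le _ (List.sublist_cons_self _ _)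

lemma last_edge {V : Type*} {G : SimpleGraph V} {b u : V} (q : G.Walk b u) (hne : u ≠ b) :
    ∃ c, G.Adj u c ∧ s(u, c) ∈ q.edges := by
  obtain ⟨c, hc, r, hr⟩ := SimpleGraph.Walk.exists_eq_cons_of_ne hne q.reverse
  refine ⟨c, hc, ?_⟩
  have h1 : s(u, c) ∈ q.reverse.edges := by rw [hr]; simp
  rwa [Walk.edges_reverse, List.mem_reverse] at h1

lemma ham_fst_count {α : Type*} [DecidableEq α] {G : SimpleGraph α} {a : α} {p : G.Walk a a}
    (hp : p.IsHamiltonianCycle) (z : α) : (p.darts.map (·.fst)).count z ≤ 1 := by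
  rw [Walk.map_fst_darts]
  have h2 : p.support = p.support.dropLast ++ [a] := by
    conv_lhs => rw [← List.dropLast_append_getLast (p.support_ne_nil)]
    rw [p.getLast_support]
  have key : p.support.count z = p.support.dropLast.count z + List.count z [a] := by
    conv_lhs => rw [h2]
    rw [List.count_append]
  by_cases hz : z = a
  · subst hz
    rw [hp.count_support_self] at key
    simp at key
    omega
  · have := hp.support_count_of_ne (Ne.symm hz)
    rw [this] at key
    omega

lemma ham_snd_count {α : Type*} [DecidableEq α] {G : SimpleGraph α} {a : α} {p : G.Walk a a}
    (hp : p.IsHamiltonianCycle) (z : α) : (p.darts.map (·.snd)).count z ≤ 1 := by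
  rw [Walk.map_snd_darts]
  have key : List.count z [a] + p.support.tail.count z = p.support.count z := by
    conv_rhs => rw [p.support_eq_cons]
    rw [show (a :: p.support.tail) = [a] ++ p.support.tail from rfl, List.count_append]
  by_cases hz : z = a
  · subst hz
    rw [hp.count_support_self] at key
    simp at key
    omega
  · have := hp.support_count_of_ne (Ne.symm hz)
    rw [this] at key
    omega

lemma mn_not_ham {n : ℕ} (hn : 8 ≤ n) : ¬ (Mn n).IsHamiltonian := by
  intro h
  obtain ⟨a, p, hp⟩ := h (by rw [Fintype.card_fin]; omega)
  set z0 : Fin n := ⟨0, by omega⟩ with hz0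
  have claim1 : ∀ u : Fin n, n - 3 ≤ (u:ℕ) → s(u, z0) ∈ p.edges := by
    intro u hu
    have husupp : u ∈ p.support := hp.mem_support u
    have hq : (p.rotate u husupp).IsCycle := hp.isCycle.rotate husupp
    obtain ⟨b, hadj, q', hq'⟩ := Walk.not_nil_iff.1 hq.not_nil
    have hnodup : ¬ s(u, b) ∈ q'.edges := by
      have h2 := hq.isCircuit.isTrail.edges_nodup
      rw [hq'] at h2
      simp only [Walk.edges_cons, List.nodup_cons] at h2
      exact h2.1
    have hbu : u ≠ b := hadj.ne
    obtain ⟨c, hc, hcmem⟩ := last_edge q' hbu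
    have hbc : b ≠ c := by rintro rfl; exact hnodup hcmem
    have hb' := mn_u_neighbors hn hu hadj
    have hc' := mn_u_neighbors hn hu hc
    have hmem : s(u, z0) ∈ (p.rotate u husupp).edges := by
      rw [hq']
      rcases hb' with h0 | h1
      · have hb0 : b = z0 := Fin.ext (by simpa [hz0] using h0)
        rw [Walk.edges_cons, ← hb0]
        exact List.mem_cons_self
      · rcases hc' with h0 | h1'
        · have hc0 : c = z0 := Fin.ext (by simpa [hz0] using h0)
          rw [Walk.edges_cons]
          exact List.mem_cons_of_mem _ (by rw [← hc0]; exact hcmem)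
        · exact absurd (Fin.ext (h1.trans h1'.symm) : b = c) hbc
    exact ((p.rotate_edges u husupp).perm.mem_iff).1 hmem
  have hdart : ∀ u : Fin n, n - 3 ≤ (u:ℕ) →
      ∃ d ∈ p.darts, (d.fst = u ∧ d.snd = z0) ∨ (d.fst = z0 ∧ d.snd = u) := by
    intro u hu
    have h1 := claim1 u hu
    rw [show p.edges = p.darts.map SimpleGraph.Dart.edge from rfl] at h1
    obtain ⟨d, hd, he⟩ := List.mem_map.1 h1
    exact ⟨d, hd, dart_edge_eq_mk'_iff'.1 he⟩
  obtain ⟨d0, hd0, ho0⟩ := hdart ⟨n - 3, by omega⟩ (by simp)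
  obtain ⟨d1, hd1, ho1⟩ := hdart ⟨n - 2, by omega⟩ (by simp; omega)
  obtain ⟨d2, hd2, ho2⟩ := hdart ⟨n - 1, by omega⟩ (by simp; omega)
  have hfst := ham_fst_count hp z0
  have hsnd := ham_snd_count hp z0
  have hsndF : ∀ d d' : (Mn n).Dart, d ∈ p.darts → d' ∈ p.darts →
      d.snd = z0 → d'.snd = z0 → d.fst ≠ d'.fst → False := by
    intro d d' hd hd' h1 h2 hne
    have := two_le_count_map (f := fun d : (Mn n).Dart => d.snd) hd hd'
      (fun h => hne (by rw [h])) h1 h2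
    omega
  have hfstF : ∀ d d' : (Mn n).Dart, d ∈ p.darts → d' ∈ p.darts →
      d.fst = z0 → d'.fst = z0 → d.snd ≠ d'.snd → False := by
    intro d d' hd hd' h1 h2 hne
    have := two_le_count_map (f := fun d : (Mn n).Dart => d.fst) hd hd'
      (fun h => hne (by rw [h])) h1 h2
    omega
  have h01 : (⟨n - 3, by omega⟩ : Fin n) ≠ ⟨n - 2, by omega⟩ := by
    intro h; have := congrArg Fin.val h; simp at this; omega
  have h02 : (⟨n - 3, by omega⟩ : Fin n) ≠ ⟨n - 1, by omega⟩ := by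
    intro h; have := congrArg Fin.val h; simp at this; omega
  have h12 : (⟨n - 2, by omega⟩ : Fin n) ≠ ⟨n - 1, by omega⟩ := by
    intro h; have := congrArg Fin.val h; simp at this; omega
  rcases ho0 with ⟨ha0, hb0⟩ | ⟨ha0, hb0⟩ <;>
    rcases ho1 with ⟨ha1, hb1⟩ | ⟨ha1, hb1⟩ <;>
      rcases ho2 with ⟨ha2, hb2⟩ | ⟨ha2, hb2⟩
  · exact hsndF d0 d1 hd0 hd1 hb0 hb1 (by rw [ha0, ha1]; exact h01)
  · exact hsndF d0 d1 hd0 hd1 hb0 hb1 (by rw [ha0, ha1]; exact h01)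
  · exact hsndF d0 d2 hd0 hd2 hb0 hb2 (by rw [ha0, ha2]; exact h02)
  · exact hfstF d1 d2 hd1 hd2 ha1 ha2 (by rw [hb1, hb2]; exact h12)
  · exact hsndF d1 d2 hd1 hd2 hb1 hb2 (by rw [ha1, ha2]; exact h12)
  · exact hfstF d0 d2 hd0 hd2 ha0 ha2 (by rw [hb0, hb2]; exact h02)
  · exact hfstF d0 d1 hd0 hd1 ha0 ha1 (by rw [hb0, hb1]; exact h01)
  · exact hfstF d0 d1 hd0 hd1 ha0 ha1 (by rw [hb0, hb1]; exact h01)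

/-- For `n ≥ 8`, `M_n` is a non-complete connected graph of order `n` with
toughness `t(M_n) ≥ 1`, and `M_n` has no Hamilton cycle. -/
theorem stmt7 (n : ℕ) (hn : 8 ≤ n) :
    Mn n ≠ ⊤ ∧ (Mn n).Connected ∧ Fintype.card (Fin n) = n ∧
      1 ≤ toughness (Mn n) ∧ ¬ (Mn n).IsHamiltonian :=
  ⟨mn_ne_top hn, mn_connected hn, Fintype.card_fin n, mn_toughness hn, mn_not_ham hn⟩
end

section
/- Let H be a balanced bipartite graph with parts X and Y, |X| = |Y| = n ≥ 16, with minimum degree δ(H) ≥ 2 and e(H) > n² − 3n, which is closed in the sense that every pair of non-adjacent vertices u ∈ X and v ∈ Y satisfies d_H(u) + d_H(v) ≤ n. Let s = |{u ∈ X : d_H(u) > n/2}| and t = |{v ∈ Y : d_H(v) > n/2}|. Then s, t ≥ n − 3 and s, t ≠ n − 1; that is, s, t ∈ {n−3, n−2, n}. -/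
open SimpleGraph

open Finset in
lemma IsBipartition.symm' {V : Type*} {G : SimpleGraph V} {X Y : Set V}
    (h : IsBipartition G X Y) : IsBipartition G Y X :=
  ⟨by rw [Set.union_comm]; exact h.1, h.2.1.symm, fun u v hadj => (h.2.2 hadj).symm⟩

lemma bip_sum {V : Type*} [Fintype V] [DecidableEq V] (H : SimpleGraph V)
    [DecidableRel H.Adj] (X Y : Set V) [DecidablePred (· ∈ X)] [DecidablePred (· ∈ Y)]
    (hbip : IsBipartition H X Y) :
    ∑ u ∈ X.toFinset, H.degree u = H.edgeFinset.card := by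
  obtain ⟨hXY, hdisj, hadj⟩ := hbip
  have hdeg : ∀ u : V, H.degree u = ∑ v : V, if H.Adj u v then 1 else 0 := by
    intro u
    rw [SimpleGraph.degree, SimpleGraph.neighborFinset_eq_filter, Finset.card_filter]
  have hnotY : ∀ u ∈ X, u ∉ Y := fun u hu => Set.disjoint_left.mp hdisj hu
  have hmemY : ∀ u, u ∉ X → u ∈ Y := by
    intro u hu
    have : u ∈ X ∪ Y := hXY ▸ Set.mem_univ u
    rcases this with h | h
    · exact absurd h hu
    · exact h
  have hiff : ∀ {u v}, H.Adj u v → (u ∈ X ↔ v ∈ Y) := by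
    intro u v h
    rcases hadj h with ⟨h1, h2⟩ | ⟨h1, h2⟩
    · exact ⟨fun _ => h2, fun _ => h1⟩
    · constructor
      · intro hx; exact absurd h1 (hnotY u hx)
      · intro hy; exact absurd hy (hnotY v h2)
  have hXsum : ∀ (S : Set V) [DecidablePred (· ∈ S)], ∑ u ∈ S.toFinset, H.degree u
      = ∑ u : V, ∑ v : V, if u ∈ S ∧ H.Adj u v then 1 else 0 := by
    intro S _
    rw [← Set.filter_mem_univ_eq_toFinset, Finset.sum_filter]
    apply Finset.sum_congr rfl; intro u _
    by_cases hu : u ∈ S <;> simp [hu, hdeg u]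
  have hswap : (∑ u : V, ∑ v : V, if u ∈ X ∧ H.Adj u v then 1 else 0)
      = ∑ u : V, ∑ v : V, if u ∈ Y ∧ H.Adj u v then 1 else 0 := by
    rw [Finset.sum_comm]
    apply Finset.sum_congr rfl; intro x _
    apply Finset.sum_congr rfl; intro y _
    refine if_congr ?_ rfl rfl
    constructor
    · rintro ⟨h1, h2⟩; exact ⟨(hiff h2).mp h1, h2.symm⟩
    · rintro ⟨h1, h2⟩; exact ⟨(hiff h2.symm).mpr h1, h2.symm⟩
  have hsplit : (∑ u : V, ∑ v : V, if H.Adj u v then 1 else 0)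
      = (∑ u : V, ∑ v : V, if u ∈ X ∧ H.Adj u v then 1 else 0)
        + ∑ u : V, ∑ v : V, if u ∈ Y ∧ H.Adj u v then 1 else 0 := by
    rw [← Finset.sum_add_distrib]
    apply Finset.sum_congr rfl; intro u _
    rw [← Finset.sum_add_distrib]
    apply Finset.sum_congr rfl; intro v _
    by_cases hu : u ∈ X <;> by_cases hA : H.Adj u v <;>
      simp [hu, hA, hnotY u, hmemY u]
  have h2e : (∑ u : V, ∑ v : V, if H.Adj u v then 1 else 0) = 2 * H.edgeFinset.card := by
    rw [← SimpleGraph.sum_degrees_eq_twice_card_edges]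
    exact Finset.sum_congr rfl fun u _ => (hdeg u).symm
  have := hXsum X
  have := hXsum Y
  omega

lemma aux_ge {V : Type*} [Fintype V] (n : ℕ) (hn : 16 ≤ n)
    (H : SimpleGraph V) (X Y : Set V)
    (hbip : IsBipartition H X Y) (hX : X.ncard = n) (hY : Y.ncard = n)
    (he : ((n : ℝ)^2 - 3 * n) < (H.edgeSet.ncard : ℝ))
    (hclosed : ∀ u ∈ X, ∀ v ∈ Y, ¬ H.Adj u v →
      (H.neighborSet u).ncard + (H.neighborSet v).ncard ≤ n) :
    n - 3 ≤ ({u ∈ X | (n : ℝ) / 2 < ((H.neighborSet u).ncard : ℝ)}).ncard := by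
  classical
  obtain ⟨hXY, hdisj, hadj⟩ := hbip
  have hnd : ∀ w : V, (H.neighborSet w).ncard = H.degree w := by
    intro w
    rw [Set.ncard_eq_toFinset_card']
    simp [SimpleGraph.degree, SimpleGraph.neighborFinset_def]
  have hcond : ∀ w : V, ((n : ℝ) / 2 < ((H.neighborSet w).ncard : ℝ)) ↔ n < 2 * H.degree w := by
    intro w
    rw [hnd w, div_lt_iff₀ (by norm_num : (0:ℝ) < 2)]
    norm_cast
    omega
  have hnotY : ∀ u ∈ X, u ∉ Y := fun u hu => Set.disjoint_left.mp hdisj hu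
  have hXf : X.toFinset.card = n := by rw [← Set.ncard_eq_toFinset_card']; exact hX
  have hYf : Y.toFinset.card = n := by rw [← Set.ncard_eq_toFinset_card']; exact hY
  have hsubY : ∀ u ∈ X, H.neighborFinset u ⊆ Y.toFinset := by
    intro u hu v hv
    rw [SimpleGraph.mem_neighborFinset] at hv
    rcases hadj hv with ⟨h1, h2⟩ | ⟨h1, h2⟩
    · exact Set.mem_toFinset.mpr h2
    · exact absurd h1 (hnotY u hu)
  have hsubX : ∀ v ∈ Y, H.neighborFinset v ⊆ X.toFinset := by
    intro v hv w hw
    rw [SimpleGraph.mem_neighborFinset] at hw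
    rcases hadj hw with ⟨h1, h2⟩ | ⟨h1, h2⟩
    · exact absurd hv (Set.disjoint_left.mp hdisj h1)
    · exact Set.mem_toFinset.mpr h2
  have hdXle : ∀ u ∈ X, H.degree u ≤ n := fun u hu => by
    have := Finset.card_le_card (hsubY u hu)
    rwa [SimpleGraph.card_neighborFinset_eq_degree, hYf] at this
  have hdYle : ∀ v ∈ Y, H.degree v ≤ n := fun v hv => by
    have := Finset.card_le_card (hsubX v hv)
    rwa [SimpleGraph.card_neighborFinset_eq_degree, hXf] at this
  set e := H.edgeFinset.card with hedef
  have hee : H.edgeSet.ncard = e := by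
    rw [hedef, ← SimpleGraph.coe_edgeFinset, Set.ncard_coe_finset]
  have hEX : ∑ u ∈ X.toFinset, H.degree u = e := bip_sum H X Y ⟨hXY, hdisj, hadj⟩
  have hEY : ∑ v ∈ Y.toFinset, H.degree v = e :=
    bip_sum H Y X (IsBipartition.symm' ⟨hXY, hdisj, hadj⟩)
  rw [hee] at he
  -- Step A: low-degree vertices have degree at most 3
  have hlow3 : ∀ u ∈ X, 2 * H.degree u ≤ n → H.degree u ≤ 3 := by
    intro u hu hlow
    by_contra hgt
    push_neg at hgt
    set k := H.degree u with hk
    have hkn : k ≤ n := by omega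
    have hc1 : (H.neighborFinset u).card = k := SimpleGraph.card_neighborFinset_eq_degree H u
    have hc2 : (Y.toFinset \ H.neighborFinset u).card = n - k := by
      rw [Finset.card_sdiff_of_subset (hsubY u hu), hYf, hc1]
    have hsum1 : ∑ v ∈ H.neighborFinset u, H.degree v ≤ k * n := by
      have := Finset.sum_le_card_nsmul (H.neighborFinset u) _ n
        (fun v hv => hdYle v (Set.mem_toFinset.mp (hsubY u hu hv)))
      rw [hc1] at this
      simpa [smul_eq_mul] using this
    have hsum2 : ∑ v ∈ Y.toFinset \ H.neighborFinset u, H.degree v ≤ (n - k) * (n - k) := by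
      have hb : ∀ v ∈ Y.toFinset \ H.neighborFinset u, H.degree v ≤ n - k := by
        intro v hv
        rw [Finset.mem_sdiff] at hv
        have hvy : v ∈ Y := Set.mem_toFinset.mp hv.1
        have hna : ¬ H.Adj u v := fun h => hv.2 ((SimpleGraph.mem_neighborFinset H u v).mpr h)
        have := hclosed u hu v hvy hna
        rw [hnd u, hnd v] at this
        omega
      have := Finset.sum_le_card_nsmul _ _ (n - k) hb
      rw [hc2] at this
      simpa [smul_eq_mul] using this
    have hYsplit : e ≤ k * n + (n - k) * (n - k) := by
      rw [← hEY, ← Finset.sum_sdiff (hsubY u hu)]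
      omega
    have h4 : 4 ≤ k := by omega
    have hcast : ((n - k : ℕ) : ℝ) = (n : ℝ) - k := by
      push_cast [Nat.cast_sub hkn]; ring
    have hre : (e : ℝ) ≤ (k : ℝ) * n + ((n:ℝ) - k) * ((n:ℝ) - k) := by
      rw [← hcast]
      exact_mod_cast hYsplit
    have hk4 : (4:ℝ) ≤ k := by exact_mod_cast h4
    have hkn2 : 2 * (k:ℝ) ≤ n := by exact_mod_cast hlow
    have hn16 : (16:ℝ) ≤ n := by exact_mod_cast hn
    nlinarith [mul_nonneg (by linarith : (0:ℝ) ≤ (k:ℝ) - 4) (by linarith : (0:ℝ) ≤ (n:ℝ) - (k:ℝ) - 4)]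
  -- rewrite goal as Finset card
  have hsetcard : ({u ∈ X | (n : ℝ) / 2 < ((H.neighborSet u).ncard : ℝ)}).ncard
      = (X.toFinset.filter (fun u => n < 2 * H.degree u)).card := by
    have hseteq : {u ∈ X | (n : ℝ) / 2 < ((H.neighborSet u).ncard : ℝ)}
        = {u | u ∈ X ∧ n < 2 * H.degree u} := by
      ext u; simp only [Set.mem_setOf_eq, hcond u]
    rw [hseteq, Set.ncard_eq_toFinset_card', Set.toFinset_setOf,
      ← Set.filter_mem_univ_eq_toFinset, Finset.filter_filter]
  rw [hsetcard]
  set Hf := X.toFinset.filter (fun u => n < 2 * H.degree u) with hHfdef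
  set Lf := X.toFinset.filter (fun u => ¬ n < 2 * H.degree u) with hLfdef
  have hpart : Hf.card + Lf.card = n := by
    rw [hHfdef, hLfdef, Finset.card_filter_add_card_filter_not, hXf]
  have hsumH : ∑ u ∈ Hf, H.degree u ≤ Hf.card * n := by
    have := Finset.sum_le_card_nsmul Hf _ n
      (fun u hu => hdXle u (Set.mem_toFinset.mp (Finset.mem_filter.mp hu).1))
    simpa [smul_eq_mul] using this
  have hsumL : ∑ u ∈ Lf, H.degree u ≤ Lf.card * 3 := by
    have := Finset.sum_le_card_nsmul Lf _ 3 (fun u hu => by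
      have h' := Finset.mem_filter.mp hu
      exact hlow3 u (Set.mem_toFinset.mp h'.1) (by omega))
    simpa [smul_eq_mul] using this
  have hEle : e ≤ Hf.card * n + Lf.card * 3 := by
    rw [← hEX, ← Finset.sum_filter_add_sum_filter_not X.toFinset (fun u => n < 2 * H.degree u)]
    exact add_le_add hsumH hsumL
  by_contra hlt
  push_neg at hlt
  have h4 : 4 ≤ Lf.card := by omega
  have h1 : (e:ℝ) ≤ (Hf.card:ℝ) * n + (Lf.card:ℝ) * 3 := by exact_mod_cast hEle
  have h2 : (Hf.card:ℝ) + (Lf.card:ℝ) = n := by exact_mod_cast hpart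
  have h4' : (4:ℝ) ≤ (Lf.card:ℝ) := by exact_mod_cast h4
  have hn16 : (16:ℝ) ≤ (n:ℝ) := by exact_mod_cast hn
  nlinarith [mul_nonneg (by linarith : (0:ℝ) ≤ (Lf.card:ℝ) - 4) (by linarith : (0:ℝ) ≤ (n:ℝ) - 3)]


lemma setcard_eq {V : Type*} [Fintype V] (n : ℕ) (H : SimpleGraph V) [DecidableRel H.Adj]
    (X : Set V) [DecidablePred (· ∈ X)] :
    ({u ∈ X | (n : ℝ) / 2 < ((H.neighborSet u).ncard : ℝ)}).ncard
      = (X.toFinset.filter (fun u => n < 2 * H.degree u)).card := by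
  classical
  have hnd : ∀ w : V, (H.neighborSet w).ncard = H.degree w := by
    intro w
    rw [Set.ncard_eq_toFinset_card']
    simp [SimpleGraph.degree, SimpleGraph.neighborFinset_def]
  have hcond : ∀ w : V, ((n : ℝ) / 2 < ((H.neighborSet w).ncard : ℝ)) ↔ n < 2 * H.degree w := by
    intro w
    rw [hnd w, div_lt_iff₀ (by norm_num : (0:ℝ) < 2)]
    norm_cast
    omega
  have hseteq : {u ∈ X | (n : ℝ) / 2 < ((H.neighborSet u).ncard : ℝ)}
      = {u | u ∈ X ∧ n < 2 * H.degree u} := by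
    ext u; simp only [Set.mem_setOf_eq, hcond u]
  rw [hseteq, Set.ncard_eq_toFinset_card', Set.toFinset_setOf,
    ← Set.filter_mem_univ_eq_toFinset, Finset.filter_filter]

lemma aux_ne {V : Type*} [Fintype V] (n : ℕ) (hn : 16 ≤ n)
    (H : SimpleGraph V) (X Y : Set V)
    (hbip : IsBipartition H X Y) (hX : X.ncard = n) (hY : Y.ncard = n)
    (hdelta : ∀ w : V, 2 ≤ (H.neighborSet w).ncard)
    (hclosed : ∀ u ∈ X, ∀ v ∈ Y, ¬ H.Adj u v →
      (H.neighborSet u).ncard + (H.neighborSet v).ncard ≤ n)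
    (hty : n - 3 ≤ ({v ∈ Y | (n : ℝ) / 2 < ((H.neighborSet v).ncard : ℝ)}).ncard) :
    ({u ∈ X | (n : ℝ) / 2 < ((H.neighborSet u).ncard : ℝ)}).ncard ≠ n - 1 := by
  classical
  intro hsn
  obtain ⟨hXY, hdisj, hadj⟩ := hbip
  have hnd : ∀ w : V, (H.neighborSet w).ncard = H.degree w := by
    intro w
    rw [Set.ncard_eq_toFinset_card']
    simp [SimpleGraph.degree, SimpleGraph.neighborFinset_def]
  have hXf : X.toFinset.card = n := by rw [← Set.ncard_eq_toFinset_card']; exact hX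
  rw [setcard_eq] at hsn
  rw [setcard_eq] at hty
  set HfX := X.toFinset.filter (fun u => n < 2 * H.degree u) with h1
  set HfY := Y.toFinset.filter (fun v => n < 2 * H.degree v) with h2
  set Lf := X.toFinset.filter (fun u => ¬ n < 2 * H.degree u) with h3
  have hpart : HfX.card + Lf.card = n := by
    rw [h1, h3, Finset.card_filter_add_card_filter_not, hXf]
  have hL1 : Lf.card = 1 := by omega
  obtain ⟨u₀, hu₀⟩ := Finset.card_eq_one.mp hL1
  have hu₀mem : u₀ ∈ Lf := by rw [hu₀]; exact Finset.mem_singleton_self u₀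
  have hu₀X : u₀ ∈ X := Set.mem_toFinset.mp (Finset.mem_filter.mp hu₀mem).1
  have hu₀low : ¬ n < 2 * H.degree u₀ := (Finset.mem_filter.mp hu₀mem).2
  have hHH : ∀ v ∈ HfY, ∀ u ∈ HfX, H.Adj v u := by
    intro v hv u hu
    by_contra hna
    obtain ⟨huX, hud⟩ := Finset.mem_filter.mp hu
    obtain ⟨hvY, hvd⟩ := Finset.mem_filter.mp hv
    have := hclosed u (Set.mem_toFinset.mp huX) v (Set.mem_toFinset.mp hvY)
      (fun h => hna h.symm)
    rw [hnd u, hnd v] at this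
    omega
  have hdegY : ∀ v ∈ HfY, n - 1 ≤ H.degree v := by
    intro v hv
    have hsub : HfX ⊆ H.neighborFinset v := by
      intro u hu
      exact (SimpleGraph.mem_neighborFinset H v u).mpr (hHH v hv u hu)
    have := Finset.card_le_card hsub
    rw [SimpleGraph.card_neighborFinset_eq_degree] at this
    omega
  have hadj0 : HfY ⊆ H.neighborFinset u₀ := by
    intro v hv
    rw [SimpleGraph.mem_neighborFinset]
    by_contra hna
    have hvY := Set.mem_toFinset.mp (Finset.mem_filter.mp hv).1
    have hc := hclosed u₀ hu₀X v hvY hna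
    rw [hnd u₀, hnd v] at hc
    have h2' := hdegY v hv
    have hd0 := hdelta u₀
    rw [hnd u₀] at hd0
    omega
  have hfin := Finset.card_le_card hadj0
  rw [SimpleGraph.card_neighborFinset_eq_degree] at hfin
  omega

/-- For a closed balanced bipartite graph `H` with parts of size `n ≥ 16`,
`δ(H) ≥ 2` and `e(H) > n² - 3n`, the numbers `s`, `t` of vertices of degree `> n/2` in the
two parts satisfy `s, t ≥ n - 3` and `s, t ≠ n - 1`. -/
theorem stmt12 {V : Type*} [Fintype V] (n : ℕ) (hn : 16 ≤ n)
    (H : SimpleGraph V) (X Y : Set V)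
    (hbip : IsBipartition H X Y) (hX : X.ncard = n) (hY : Y.ncard = n)
    (hdelta : ∀ w : V, 2 ≤ (H.neighborSet w).ncard)
    (he : ((n : ℝ)^2 - 3 * n) < (H.edgeSet.ncard : ℝ))
    (hclosed : ∀ u ∈ X, ∀ v ∈ Y, ¬ H.Adj u v →
      (H.neighborSet u).ncard + (H.neighborSet v).ncard ≤ n)
    (s t : ℕ)
    (hs : s = ({u ∈ X | (n : ℝ) / 2 < ((H.neighborSet u).ncard : ℝ)}).ncard)
    (ht : t = ({v ∈ Y | (n : ℝ) / 2 < ((H.neighborSet v).ncard : ℝ)}).ncard) :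
    n - 3 ≤ s ∧ n - 3 ≤ t ∧ s ≠ n - 1 ∧ t ≠ n - 1 := by
  have hbipY : IsBipartition H Y X := IsBipartition.symm' hbip
  have hclosedY : ∀ v ∈ Y, ∀ u ∈ X, ¬ H.Adj v u →
      (H.neighborSet v).ncard + (H.neighborSet u).ncard ≤ n := by
    intro v hv u hu hna
    have := hclosed u hu v hv (fun h => hna h.symm)
    omega
  have hsge := aux_ge n hn H X Y hbip hX hY he hclosed
  have htge := aux_ge n hn H Y X hbipY hY hX he hclosedY
  have hsne := aux_ne n hn H X Y hbip hX hY hdelta hclosed htge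
  have htne := aux_ne n hn H Y X hbipY hY hX hdelta hclosedY hsge
  subst hs ht
  exact ⟨hsge, htge, hsne, htne⟩
end

section
/- Let n ≥ 7 and let H be a balanced bipartite graph with parts X = {u_1,…,u_n} and Y = {v_1,…,v_n} such that u_i is adjacent to v_j for all 1 ≤ i ≤ n and 4 ≤ j ≤ n. Suppose H contains a good linear forest, i.e., a collection of vertex-disjoint paths in H, each having both end-vertices in X and all of whose Y-vertices lie in {v_1, v_2, v_3}, whose union contains all three vertices v_1, v_2, v_3. Then H contains a Hamilton cycle. -/
open SimpleGraph

section helpers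
variable {V : Type*} {G : SimpleGraph V}

lemma walk_of_chain : ∀ (l : List V) (a c : V), List.Chain G.Adj a (l ++ [c]) →
    ∃ p : G.Walk a c, p.support = a :: (l ++ [c]) := by
  intro l
  induction l with
  | nil =>
    intro a c h
    rw [List.nil_append, List.Chain, List.chain_cons] at h
    exact ⟨Walk.cons h.1 Walk.nil, rfl⟩
  | cons b t ih =>
    intro a c h
    rw [List.cons_append, List.Chain, List.chain_cons] at h
    obtain ⟨p, hp⟩ := ih b c h.2
    exact ⟨Walk.cons h.1 p, by simp [hp]⟩

lemma not_mem_edge {a b : V} (p : G.Walk b a) (l' : List V) (hl' : l' ≠ [])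
    (hsup : p.support = b :: l' ++ [a]) (hnd : (a :: b :: l').Nodup) : s(a, b) ∉ p.edges := by
  have hab : a ≠ b := by simp at hnd; tauto
  have hanl : a ∉ l' := by simp at hnd; tauto
  have hbnl : b ∉ l' := by simp at hnd; tauto
  cases p with
  | nil =>
    simp only [Walk.support_nil] at hsup
    simp at hsup
  | @cons _ x _ h q =>
    rw [Walk.support_cons] at hsup
    have hq : q.support = l' ++ [a] := by
      simpa using hsup
    obtain ⟨c, t, rfl⟩ : ∃ c t, l' = c :: t := by
      cases l' with
      | nil => exact absurd rfl hl'
      | cons c t => exact ⟨c, t, rfl⟩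
    have hxc : x = c := by
      have h2 : x :: q.support.tail = c :: (t ++ [a]) := by
        rw [← q.support_eq_cons, hq]; rfl
      exact (List.cons.injEq _ _ _ _ ▸ h2).1
    intro hmem
    rw [Walk.edges_cons, List.mem_cons] at hmem
    rcases hmem with hmem | hmem
    · rw [Sym2.eq_iff] at hmem
      rcases hmem with ⟨rfl, _⟩ | ⟨rfl, _⟩
      · exact hab rfl
      · subst hxc
        simp at hanl
    · have := q.snd_mem_support_of_mem_edges hmem
      rw [hq] at this
      simp at this
      rcases this with h1 | h1 | h1
      · simp [h1] at hbnl
      · exact hbnl (by simp [h1])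
      · exact hab h1.symm

lemma ham_of_list [Fintype V] [DecidableEq V] (a : V) (l : List V)
    (hcard : 3 ≤ Fintype.card V)
    (hlen : (a :: l).length = Fintype.card V)
    (hnd : (a :: l).Nodup)
    (hchain : List.Chain G.Adj a (l ++ [a])) : G.IsHamiltonian := by
  have hall : ∀ v : V, v ∈ a :: l := by
    intro v
    have h1 : (a :: l).toFinset.card = Fintype.card V := by
      rw [List.toFinset_card_of_nodup hnd, hlen]
    have h2 := Finset.eq_univ_of_card _ h1
    rw [← List.mem_toFinset, h2]
    exact Finset.mem_univ v
  obtain ⟨b, l', rfl⟩ : ∃ b l', l = b :: l' := by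
    cases l with
    | nil => simp at hlen; omega
    | cons b l' => exact ⟨b, l', rfl⟩
  have hl' : l' ≠ [] := by
    intro h
    subst h
    simp at hlen; omega
  rw [List.cons_append, List.Chain, List.chain_cons] at hchain
  obtain ⟨hab, hch⟩ := hchain
  obtain ⟨p, hp⟩ := walk_of_chain l' b a hch
  have hpPath : p.IsPath := by
    apply Walk.IsPath.mk'
    rw [hp]
    have hperm : ((b :: l') ++ [a]).Perm (a :: b :: l') := List.perm_append_singleton _ _
    have : (b :: (l' ++ [a])) = (b :: l') ++ [a] := by simp
    rw [this]
    exact hperm.nodup_iff.mpr hnd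
  have hne : s(a, b) ∉ p.edges :=
    not_mem_edge p l' hl' (by simpa using hp) hnd
  have hcyc : (Walk.cons hab p).IsCycle := (Walk.cons_isCycle_iff p hab).mpr ⟨hpPath, hne⟩
  have hham : (Walk.cons hab p).IsHamiltonianCycle := by
    rw [Walk.isHamiltonianCycle_iff_isCycle_and_support_count_tail_eq_one]
    refine ⟨hcyc, ?_⟩
    intro v
    rw [Walk.support_cons, List.tail_cons, hp]
    rw [show b :: (l' ++ [a]) = (b :: l') ++ [a] by simp, List.count_append]
    rcases eq_or_ne v a with h | hv
    · have hnm : v ∉ b :: l' := by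
        simp only [List.nodup_cons] at hnd
        rw [h]
        exact hnd.1
      rw [List.count_eq_zero_of_not_mem hnm, h]
      simp
    · have hvm : v ∈ b :: l' := by
        have := hall v
        rw [List.mem_cons] at this
        tauto
      rw [List.count_eq_one_of_mem (List.Nodup.of_cons hnd) hvm]
      simp [hv, List.count_eq_zero]
  exact fun _ => ⟨a, Walk.cons hab p, hham⟩

end helpers

/-- Interleave: `suf [y1,...,y_{m+1}] [x1,...,x_m] = [inr y1, inl x1, inr y2, ..., inl x_m, inr y_{m+1}]`. -/
def suf {α : Type*} : List α → List α → List (α ⊕ α)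
  | [], _ => []
  | y :: _, [] => [Sum.inr y]
  | y :: ys, x :: xs => Sum.inr y :: Sum.inl x :: suf ys xs

lemma suf_length {α : Type*} : ∀ (xs ys : List α), ys.length = xs.length + 1 →
    (suf ys xs).length = ys.length + xs.length := by
  intro xs
  induction xs with
  | nil =>
    intro ys h
    obtain ⟨y, rfl⟩ : ∃ y, ys = [y] := by
      cases ys with
      | nil => simp at h
      | cons y t => cases t with
        | nil => exact ⟨y, rfl⟩
        | cons _ _ => simp at h
    rfl
  | cons x xs ih =>
    intro ys h
    cases ys with
    | nil => simp at h
    | cons y ys =>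
      simp only [suf, List.length_cons]
      rw [ih ys (by simpa using h)]
      omega

lemma mem_suf {α : Type*} : ∀ (xs ys : List α), ys.length = xs.length + 1 →
    ∀ z, z ∈ suf ys xs ↔ (∃ y ∈ ys, z = Sum.inr y) ∨ (∃ x ∈ xs, z = Sum.inl x) := by
  intro xs
  induction xs with
  | nil =>
    intro ys h z
    obtain ⟨y, rfl⟩ : ∃ y, ys = [y] := by
      cases ys with
      | nil => simp at h
      | cons y t => cases t with
        | nil => exact ⟨y, rfl⟩
        | cons _ _ => simp at h
    simp [suf]
  | cons x xs ih =>
    intro ys h z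
    cases ys with
    | nil => simp at h
    | cons y ys =>
      simp only [suf, List.mem_cons, ih ys (by simpa using h) z]
      constructor
      · rintro (rfl | rfl | (⟨y', hy', rfl⟩ | ⟨x', hx', rfl⟩))
        · exact Or.inl ⟨y, by simp⟩
        · exact Or.inr ⟨x, by simp⟩
        · exact Or.inl ⟨y', by simp [hy']⟩
        · exact Or.inr ⟨x', by simp [hx']⟩
      · rintro (⟨y', hy', rfl⟩ | ⟨x', hx', rfl⟩)
        · rcases hy' with rfl | hy'
          · exact Or.inl rfl
          · exact Or.inr (Or.inr (Or.inl ⟨y', hy', rfl⟩))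
        · rcases hx' with rfl | hx'
          · exact Or.inr (Or.inl rfl)
          · exact Or.inr (Or.inr (Or.inr ⟨x', hx', rfl⟩))

lemma nodup_suf {α : Type*} : ∀ (xs ys : List α), ys.length = xs.length + 1 →
    ys.Nodup → xs.Nodup → (suf ys xs).Nodup := by
  intro xs
  induction xs with
  | nil =>
    intro ys h _ _
    obtain ⟨y, rfl⟩ : ∃ y, ys = [y] := by
      cases ys with
      | nil => simp at h
      | cons y t => cases t with
        | nil => exact ⟨y, rfl⟩
        | cons _ _ => simp at h
    simp [suf]
  | cons x xs ih =>
    intro ys h hy hx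
    cases ys with
    | nil => simp at h
    | cons y ys =>
      have hlen : ys.length = xs.length + 1 := by simpa using h
      simp only [suf, List.nodup_cons]
      refine ⟨?_, ?_, ih ys hlen (List.Nodup.of_cons hy) (List.Nodup.of_cons hx)⟩
      · simp only [List.mem_cons, mem_suf xs ys hlen]
        push_neg
        refine ⟨by simp, ?_, ?_⟩
        · intro y' hy' h'
          have : y = y' := Sum.inr.inj h'
          subst this
          simp only [List.nodup_cons] at hy
          exact hy.1 hy'
        · intro x' _ h'
          cases h'
      · simp only [mem_suf xs ys hlen]
        push_neg
        refine ⟨?_, ?_⟩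
        · intro y' _ h'
          cases h'
        · intro x' hx' h'
          have : x = x' := Sum.inl.inj h'
          subst this
          simp only [List.nodup_cons] at hx
          exact hx.1 hx'

section build
variable {n : ℕ} {H : SimpleGraph (Fin n ⊕ Fin n)}

lemma chain_suf_high (hcomp : ∀ i j : Fin n, 3 ≤ (j : ℕ) → H.Adj (Sum.inl i) (Sum.inr j)) :
    ∀ (xs ys : List (Fin n)), ys.length = xs.length + 1 → (∀ y ∈ ys, 3 ≤ (y : ℕ)) →
    ∀ z w : Fin n, List.Chain H.Adj (Sum.inl z) (suf ys xs ++ [Sum.inl w]) := by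
  intro xs
  induction xs with
  | nil =>
    intro ys h hhigh z w
    obtain ⟨y, rfl⟩ : ∃ y, ys = [y] := by
      cases ys with
      | nil => simp at h
      | cons y t => cases t with
        | nil => exact ⟨y, rfl⟩
        | cons _ _ => simp at h
    have hy : 3 ≤ (y : ℕ) := hhigh y (by simp)
    simp only [suf, List.Chain, List.cons_append, List.nil_append, List.chain_cons, List.isChain_singleton,
      and_true]
    exact ⟨hcomp z y hy, (hcomp w y hy).symm⟩
  | cons x xs ih =>
    intro ys h hhigh z w
    cases ys with
    | nil => simp at h
    | cons y ys =>
      have hy : 3 ≤ (y : ℕ) := hhigh y (by simp)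
      simp only [suf, List.Chain, List.cons_append, List.chain_cons]
      exact ⟨hcomp z y hy, (hcomp x y hy).symm,
        ih ys (by simpa using h) (fun y' hy' => hhigh y' (by simp [hy'])) x w⟩

end build

section build2
variable {n : ℕ} {H : SimpleGraph (Fin n ⊕ Fin n)}

lemma caseC (hn : 7 ≤ n)
    (hcomp : ∀ i j : Fin n, 3 ≤ (j : ℕ) → H.Adj (Sum.inl i) (Sum.inr j))
    (i j k : Fin n) (hi : (i : ℕ) < 3) (hj : (j : ℕ) < 3) (hk : (k : ℕ) < 3)
    (hij : i ≠ j) (hik : i ≠ k) (hjk : j ≠ k)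
    (w1 w2 w3 w4 : Fin n)
    (h12 : w1 ≠ w2) (h13 : w1 ≠ w3) (h14 : w1 ≠ w4) (h23 : w2 ≠ w3) (h24 : w2 ≠ w4)
    (h34 : w3 ≠ w4)
    (a1 : H.Adj (Sum.inl w1) (Sum.inr i)) (a2 : H.Adj (Sum.inr i) (Sum.inl w2))
    (a3 : H.Adj (Sum.inl w2) (Sum.inr j)) (a4 : H.Adj (Sum.inr j) (Sum.inl w3))
    (a5 : H.Adj (Sum.inl w3) (Sum.inr k)) (a6 : H.Adj (Sum.inr k) (Sum.inl w4)) :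
    H.IsHamiltonian := by
  classical
  set T : Finset (Fin n) := Finset.univ \ {i, j, k} with hT
  set ts : List (Fin n) := T.toList with hts
  set S : Finset (Fin n) := {w1, w2, w3, w4} with hS
  set R : List (Fin n) := (Finset.univ \ S).toList with hR
  have hmemts : ∀ t, t ∈ ts ↔ (t ≠ i ∧ t ≠ j ∧ t ≠ k) := by
    intro t; rw [hts, Finset.mem_toList, hT]; simp [not_or]
  have hmemR : ∀ x, x ∈ R ↔ (x ≠ w1 ∧ x ≠ w2 ∧ x ≠ w3 ∧ x ≠ w4) := by
    intro x; rw [hR, Finset.mem_toList]; simp [hS, not_or]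
  have hhigh : ∀ t ∈ ts, 3 ≤ (t : ℕ) := by
    intro t ht
    rw [hmemts] at ht
    by_contra hlt
    push_neg at hlt
    have e1 : (t : ℕ) ≠ (i : ℕ) := fun h => ht.1 (Fin.val_injective h)
    have e2 : (t : ℕ) ≠ (j : ℕ) := fun h => ht.2.1 (Fin.val_injective h)
    have e3 : (t : ℕ) ≠ (k : ℕ) := fun h => ht.2.2 (Fin.val_injective h)
    have e4 : (i : ℕ) ≠ (j : ℕ) := fun h => hij (Fin.val_injective h)
    have e5 : (i : ℕ) ≠ (k : ℕ) := fun h => hik (Fin.val_injective h)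
    have e6 : (j : ℕ) ≠ (k : ℕ) := fun h => hjk (Fin.val_injective h)
    omega
  have htslen : ts.length = n - 3 := by
    rw [hts, Finset.length_toList, hT, Finset.card_sdiff_of_subset (Finset.subset_univ _)]
    rw [Finset.card_univ, Fintype.card_fin]
    congr 1
    rw [Finset.card_insert_of_notMem (by simp [hij, hik]),
      Finset.card_insert_of_notMem (by simp [hjk]), Finset.card_singleton]
  have hRlen : R.length = n - 4 := by
    rw [hR, Finset.length_toList, Finset.card_sdiff_of_subset (Finset.subset_univ _)]
    rw [Finset.card_univ, Fintype.card_fin]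
    congr 1
    rw [hS, Finset.card_insert_of_notMem (by simp [h12, h13, h14]),
      Finset.card_insert_of_notMem (by simp [h23, h24]),
      Finset.card_insert_of_notMem (by simp [h34]), Finset.card_singleton]
  set ys : List (Fin n) := i :: j :: k :: ts with hys
  set xs : List (Fin n) := w2 :: w3 :: w4 :: R with hxs
  have hl : ys.length = xs.length + 1 := by
    rw [hys, hxs]; simp [htslen, hRlen]; omega
  have hysnd : ys.Nodup := by
    rw [hys]
    simp only [List.nodup_cons]
    refine ⟨?_, ?_, ?_, T.nodup_toList⟩
    · simp only [List.mem_cons, not_or]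
      exact ⟨hij, hik, fun h => ((hmemts i).mp h).1 rfl⟩
    · simp only [List.mem_cons, not_or]
      exact ⟨hjk, fun h => ((hmemts j).mp h).2.1 rfl⟩
    · exact fun h => ((hmemts k).mp h).2.2 rfl
  have hxsnd : xs.Nodup := by
    rw [hxs]
    simp only [List.nodup_cons]
    refine ⟨?_, ?_, ?_, (Finset.univ \ S).nodup_toList⟩
    · simp only [List.mem_cons, not_or]
      exact ⟨h23, h24, fun h => ((hmemR w2).mp h).2.1 rfl⟩
    · simp only [List.mem_cons, not_or]
      exact ⟨h34, fun h => ((hmemR w3).mp h).2.2.1 rfl⟩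
    · exact fun h => ((hmemR w4).mp h).2.2.2 rfl
  apply ham_of_list (Sum.inl w1) (suf ys xs)
  · rw [Fintype.card_sum, Fintype.card_fin]; omega
  · rw [List.length_cons, suf_length xs ys hl, Fintype.card_sum, Fintype.card_fin]
    rw [hys, hxs]
    simp [htslen, hRlen]
    omega
  · rw [List.nodup_cons]
    constructor
    · rw [mem_suf xs ys hl]
      push_neg
      constructor
      · intro y _ h; cases h
      · intro x hx h
        have : w1 = x := Sum.inl.inj h
        subst this
        rw [hxs, List.mem_cons, List.mem_cons, List.mem_cons] at hx
        rcases hx with h' | h' | h' | h'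
        · exact h12 h'
        · exact h13 h'
        · exact h14 h'
        · exact ((hmemR w1).mp h').1 rfl
    · exact nodup_suf xs ys hl hysnd hxsnd
  · show List.Chain H.Adj (Sum.inl w1) (suf (i :: j :: k :: ts) (w2 :: w3 :: w4 :: R) ++ [Sum.inl w1])
    simp only [suf, List.Chain, List.cons_append, List.chain_cons]
    refine ⟨a1, a2, a3, a4, a5, a6, ?_⟩
    apply chain_suf_high hcomp R ts (by omega) hhigh
end build2

section build3
variable {n : ℕ} {H : SimpleGraph (Fin n ⊕ Fin n)}

lemma caseB (hn : 7 ≤ n)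
    (hcomp : ∀ i j : Fin n, 3 ≤ (j : ℕ) → H.Adj (Sum.inl i) (Sum.inr j))
    (i j k : Fin n) (hi : (i : ℕ) < 3) (hj : (j : ℕ) < 3) (hk : (k : ℕ) < 3)
    (hij : i ≠ j) (hik : i ≠ k) (hjk : j ≠ k)
    (w1 w2 w3 w4 w5 : Fin n)
    (h12 : w1 ≠ w2) (h13 : w1 ≠ w3) (h14 : w1 ≠ w4) (h15 : w1 ≠ w5)
    (h23 : w2 ≠ w3) (h24 : w2 ≠ w4) (h25 : w2 ≠ w5)
    (h34 : w3 ≠ w4) (h35 : w3 ≠ w5) (h45 : w4 ≠ w5)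
    (a1 : H.Adj (Sum.inl w1) (Sum.inr i)) (a2 : H.Adj (Sum.inr i) (Sum.inl w2))
    (a3 : H.Adj (Sum.inl w2) (Sum.inr j)) (a4 : H.Adj (Sum.inr j) (Sum.inl w3))
    (a5 : H.Adj (Sum.inl w4) (Sum.inr k)) (a6 : H.Adj (Sum.inr k) (Sum.inl w5)) :
    H.IsHamiltonian := by
  classical
  set T : Finset (Fin n) := Finset.univ \ {i, j, k} with hT
  set S : Finset (Fin n) := {w1, w2, w3, w4, w5} with hS
  set R : List (Fin n) := (Finset.univ \ S).toList with hR
  have hmemts : ∀ t, t ∈ T.toList ↔ (t ≠ i ∧ t ≠ j ∧ t ≠ k) := by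
    intro t; rw [Finset.mem_toList, hT]; simp [not_or]
  have hmemR : ∀ x, x ∈ R ↔ (x ≠ w1 ∧ x ≠ w2 ∧ x ≠ w3 ∧ x ≠ w4 ∧ x ≠ w5) := by
    intro x; rw [hR, Finset.mem_toList]; simp [hS, not_or]
  have hhigh : ∀ t ∈ T.toList, 3 ≤ (t : ℕ) := by
    intro t ht
    rw [hmemts] at ht
    by_contra hlt
    push_neg at hlt
    have e1 : (t : ℕ) ≠ (i : ℕ) := fun h => ht.1 (Fin.val_injective h)
    have e2 : (t : ℕ) ≠ (j : ℕ) := fun h => ht.2.1 (Fin.val_injective h)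
    have e3 : (t : ℕ) ≠ (k : ℕ) := fun h => ht.2.2 (Fin.val_injective h)
    have e4 : (i : ℕ) ≠ (j : ℕ) := fun h => hij (Fin.val_injective h)
    have e5 : (i : ℕ) ≠ (k : ℕ) := fun h => hik (Fin.val_injective h)
    have e6 : (j : ℕ) ≠ (k : ℕ) := fun h => hjk (Fin.val_injective h)
    omega
  have htslen : T.toList.length = n - 3 := by
    rw [Finset.length_toList, hT, Finset.card_sdiff_of_subset (Finset.subset_univ _)]
    rw [Finset.card_univ, Fintype.card_fin]
    congr 1
    rw [Finset.card_insert_of_notMem (by simp [hij, hik]),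
      Finset.card_insert_of_notMem (by simp [hjk]), Finset.card_singleton]
  have hRlen : R.length = n - 5 := by
    rw [hR, Finset.length_toList, Finset.card_sdiff_of_subset (Finset.subset_univ _)]
    rw [Finset.card_univ, Fintype.card_fin]
    congr 1
    rw [hS, Finset.card_insert_of_notMem (by simp [h12, h13, h14, h15]),
      Finset.card_insert_of_notMem (by simp [h23, h24, h25]),
      Finset.card_insert_of_notMem (by simp [h34, h35]),
      Finset.card_insert_of_notMem (by simp [h45]), Finset.card_singleton]
  obtain ⟨t1, ts', hts'⟩ : ∃ t1 ts', T.toList = t1 :: ts' := by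
    cases h : T.toList with
    | nil => rw [h] at htslen; simp at htslen; omega
    | cons t1 ts' => exact ⟨t1, ts', rfl⟩
  have ht1 : t1 ∈ T.toList := by rw [hts']; simp
  have hts'sub : ∀ t ∈ ts', t ∈ T.toList := by intro t ht; rw [hts']; simp [ht]
  have htsnd : T.toList.Nodup := T.nodup_toList
  have ht1nts' : t1 ∉ ts' := by
    rw [hts'] at htsnd
    exact (List.nodup_cons.mp htsnd).1
  have hts'nd : ts'.Nodup := by
    rw [hts'] at htsnd
    exact (List.nodup_cons.mp htsnd).2
  have hts'len : ts'.length = n - 4 := by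
    have := htslen
    rw [hts'] at this
    simp at this
    omega
  set ys : List (Fin n) := i :: j :: t1 :: k :: ts' with hys
  set xs : List (Fin n) := w2 :: w3 :: w4 :: w5 :: R with hxs
  have hl : ys.length = xs.length + 1 := by
    rw [hys, hxs]; simp [hts'len, hRlen]; omega
  have hysnd : ys.Nodup := by
    rw [hys]
    simp only [List.nodup_cons]
    refine ⟨?_, ?_, ?_, ?_, hts'nd⟩
    · simp only [List.mem_cons, not_or]
      exact ⟨hij, fun h => ((hmemts t1).mp ht1).1 h.symm, hik,
        fun h => ((hmemts i).mp (hts'sub i h)).1 rfl⟩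
    · simp only [List.mem_cons, not_or]
      exact ⟨fun h => ((hmemts t1).mp ht1).2.1 h.symm, hjk,
        fun h => ((hmemts j).mp (hts'sub j h)).2.1 rfl⟩
    · simp only [List.mem_cons, not_or]
      exact ⟨fun h => ((hmemts t1).mp ht1).2.2 h, ht1nts'⟩
    · exact fun h => ((hmemts k).mp (hts'sub k h)).2.2 rfl
  have hxsnd : xs.Nodup := by
    rw [hxs]
    simp only [List.nodup_cons]
    refine ⟨?_, ?_, ?_, ?_, (Finset.univ \ S).nodup_toList⟩
    · simp only [List.mem_cons, not_or]
      exact ⟨h23, h24, h25, fun h => ((hmemR w2).mp h).2.1 rfl⟩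
    · simp only [List.mem_cons, not_or]
      exact ⟨h34, h35, fun h => ((hmemR w3).mp h).2.2.1 rfl⟩
    · simp only [List.mem_cons, not_or]
      exact ⟨h45, fun h => ((hmemR w4).mp h).2.2.2.1 rfl⟩
    · exact fun h => ((hmemR w5).mp h).2.2.2.2 rfl
  have ht1high : 3 ≤ (t1 : ℕ) := hhigh t1 ht1
  apply ham_of_list (Sum.inl w1) (suf ys xs)
  · rw [Fintype.card_sum, Fintype.card_fin]; omega
  · rw [List.length_cons, suf_length xs ys hl, Fintype.card_sum, Fintype.card_fin]
    rw [hys, hxs]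
    simp [hts'len, hRlen]
    omega
  · rw [List.nodup_cons]
    constructor
    · rw [mem_suf xs ys hl]
      push_neg
      constructor
      · intro y _ h; cases h
      · intro x hx h
        have : w1 = x := Sum.inl.inj h
        subst this
        rw [hxs, List.mem_cons, List.mem_cons, List.mem_cons, List.mem_cons] at hx
        rcases hx with h' | h' | h' | h' | h'
        · exact h12 h'
        · exact h13 h'
        · exact h14 h'
        · exact h15 h'
        · exact ((hmemR w1).mp h').1 rfl
    · exact nodup_suf xs ys hl hysnd hxsnd
  · show List.Chain H.Adj (Sum.inl w1)
      (suf (i :: j :: t1 :: k :: ts') (w2 :: w3 :: w4 :: w5 :: R) ++ [Sum.inl w1])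
    simp only [suf, List.Chain, List.cons_append, List.chain_cons]
    refine ⟨a1, a2, a3, a4, hcomp w3 t1 ht1high, (hcomp w4 t1 ht1high).symm, a5, a6, ?_⟩
    apply chain_suf_high hcomp R ts' (by omega) (fun t ht => hhigh t (hts'sub t ht))

end build3

section build4
variable {n : ℕ} {H : SimpleGraph (Fin n ⊕ Fin n)}

lemma caseA (hn : 7 ≤ n)
    (hcomp : ∀ i j : Fin n, 3 ≤ (j : ℕ) → H.Adj (Sum.inl i) (Sum.inr j))
    (i j k : Fin n) (hi : (i : ℕ) < 3) (hj : (j : ℕ) < 3) (hk : (k : ℕ) < 3)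
    (hij : i ≠ j) (hik : i ≠ k) (hjk : j ≠ k)
    (w1 w2 w3 w4 w5 w6 : Fin n)
    (h12 : w1 ≠ w2) (h13 : w1 ≠ w3) (h14 : w1 ≠ w4) (h15 : w1 ≠ w5) (h16 : w1 ≠ w6)
    (h23 : w2 ≠ w3) (h24 : w2 ≠ w4) (h25 : w2 ≠ w5) (h26 : w2 ≠ w6)
    (h34 : w3 ≠ w4) (h35 : w3 ≠ w5) (h36 : w3 ≠ w6)
    (h45 : w4 ≠ w5) (h46 : w4 ≠ w6) (h56 : w5 ≠ w6)
    (a1 : H.Adj (Sum.inl w1) (Sum.inr i)) (a2 : H.Adj (Sum.inr i) (Sum.inl w2))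
    (a3 : H.Adj (Sum.inl w3) (Sum.inr j)) (a4 : H.Adj (Sum.inr j) (Sum.inl w4))
    (a5 : H.Adj (Sum.inl w5) (Sum.inr k)) (a6 : H.Adj (Sum.inr k) (Sum.inl w6)) :
    H.IsHamiltonian := by
  classical
  set T : Finset (Fin n) := Finset.univ \ {i, j, k} with hT
  set S : Finset (Fin n) := {w1, w2, w3, w4, w5, w6} with hS
  set R : List (Fin n) := (Finset.univ \ S).toList with hR
  have hmemts : ∀ t, t ∈ T.toList ↔ (t ≠ i ∧ t ≠ j ∧ t ≠ k) := by
    intro t; rw [Finset.mem_toList, hT]; simp [not_or]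
  have hmemR : ∀ x, x ∈ R ↔ (x ≠ w1 ∧ x ≠ w2 ∧ x ≠ w3 ∧ x ≠ w4 ∧ x ≠ w5 ∧ x ≠ w6) := by
    intro x; rw [hR, Finset.mem_toList]; simp [hS, not_or]
  have hhigh : ∀ t ∈ T.toList, 3 ≤ (t : ℕ) := by
    intro t ht
    rw [hmemts] at ht
    by_contra hlt
    push_neg at hlt
    have e1 : (t : ℕ) ≠ (i : ℕ) := fun h => ht.1 (Fin.val_injective h)
    have e2 : (t : ℕ) ≠ (j : ℕ) := fun h => ht.2.1 (Fin.val_injective h)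
    have e3 : (t : ℕ) ≠ (k : ℕ) := fun h => ht.2.2 (Fin.val_injective h)
    have e4 : (i : ℕ) ≠ (j : ℕ) := fun h => hij (Fin.val_injective h)
    have e5 : (i : ℕ) ≠ (k : ℕ) := fun h => hik (Fin.val_injective h)
    have e6 : (j : ℕ) ≠ (k : ℕ) := fun h => hjk (Fin.val_injective h)
    omega
  have htslen : T.toList.length = n - 3 := by
    rw [Finset.length_toList, hT, Finset.card_sdiff_of_subset (Finset.subset_univ _)]
    rw [Finset.card_univ, Fintype.card_fin]
    congr 1
    rw [Finset.card_insert_of_notMem (by simp [hij, hik]),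
      Finset.card_insert_of_notMem (by simp [hjk]), Finset.card_singleton]
  have hRlen : R.length = n - 6 := by
    rw [hR, Finset.length_toList, Finset.card_sdiff_of_subset (Finset.subset_univ _)]
    rw [Finset.card_univ, Fintype.card_fin]
    congr 1
    rw [hS, Finset.card_insert_of_notMem (by simp [h12, h13, h14, h15, h16]),
      Finset.card_insert_of_notMem (by simp [h23, h24, h25, h26]),
      Finset.card_insert_of_notMem (by simp [h34, h35, h36]),
      Finset.card_insert_of_notMem (by simp [h45, h46]),
      Finset.card_insert_of_notMem (by simp [h56]), Finset.card_singleton]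
  obtain ⟨t1, t2, ts', hts'⟩ : ∃ t1 t2 ts', T.toList = t1 :: t2 :: ts' := by
    cases h : T.toList with
    | nil => rw [h] at htslen; simp at htslen; omega
    | cons t1 rest =>
      cases rest with
      | nil => rw [h] at htslen; simp at htslen; omega
      | cons t2 ts' => exact ⟨t1, t2, ts', rfl⟩
  have ht1 : t1 ∈ T.toList := by rw [hts']; simp
  have ht2 : t2 ∈ T.toList := by rw [hts']; simp
  have hts'sub : ∀ t ∈ ts', t ∈ T.toList := by intro t ht; rw [hts']; simp [ht]
  have htsnd := T.nodup_toList
  rw [hts', List.nodup_cons, List.mem_cons, List.nodup_cons] at htsnd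
  obtain ⟨ht1', ht2nts', hts'nd⟩ := htsnd
  push_neg at ht1'
  obtain ⟨ht12, ht1nts'⟩ := ht1'
  have hts'len : ts'.length = n - 5 := by
    have := htslen
    rw [hts'] at this
    simp at this
    omega
  set ys : List (Fin n) := i :: t1 :: j :: t2 :: k :: ts' with hys
  set xs : List (Fin n) := w2 :: w3 :: w4 :: w5 :: w6 :: R with hxs
  have hl : ys.length = xs.length + 1 := by
    rw [hys, hxs]; simp [hts'len, hRlen]; omega
  have hysnd : ys.Nodup := by
    rw [hys]
    simp only [List.nodup_cons]
    refine ⟨?_, ?_, ?_, ?_, ?_, hts'nd⟩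
    · simp only [List.mem_cons, not_or]
      exact ⟨fun h => ((hmemts t1).mp ht1).1 h.symm, hij,
        fun h => ((hmemts t2).mp ht2).1 h.symm, hik,
        fun h => ((hmemts i).mp (hts'sub i h)).1 rfl⟩
    · simp only [List.mem_cons, not_or]
      exact ⟨fun h => ((hmemts t1).mp ht1).2.1 h, ht12,
        fun h => ((hmemts t1).mp ht1).2.2 h, ht1nts'⟩
    · simp only [List.mem_cons, not_or]
      exact ⟨fun h => ((hmemts t2).mp ht2).2.1 h.symm, hjk,
        fun h => ((hmemts j).mp (hts'sub j h)).2.1 rfl⟩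
    · simp only [List.mem_cons, not_or]
      exact ⟨fun h => ((hmemts t2).mp ht2).2.2 h, ht2nts'⟩
    · exact fun h => ((hmemts k).mp (hts'sub k h)).2.2 rfl
  have hxsnd : xs.Nodup := by
    rw [hxs]
    simp only [List.nodup_cons]
    refine ⟨?_, ?_, ?_, ?_, ?_, (Finset.univ \ S).nodup_toList⟩
    · simp only [List.mem_cons, not_or]
      exact ⟨h23, h24, h25, h26, fun h => ((hmemR w2).mp h).2.1 rfl⟩
    · simp only [List.mem_cons, not_or]
      exact ⟨h34, h35, h36, fun h => ((hmemR w3).mp h).2.2.1 rfl⟩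
    · simp only [List.mem_cons, not_or]
      exact ⟨h45, h46, fun h => ((hmemR w4).mp h).2.2.2.1 rfl⟩
    · simp only [List.mem_cons, not_or]
      exact ⟨h56, fun h => ((hmemR w5).mp h).2.2.2.2.1 rfl⟩
    · exact fun h => ((hmemR w6).mp h).2.2.2.2.2 rfl
  have ht1high : 3 ≤ (t1 : ℕ) := hhigh t1 ht1
  have ht2high : 3 ≤ (t2 : ℕ) := hhigh t2 ht2
  apply ham_of_list (Sum.inl w1) (suf ys xs)
  · rw [Fintype.card_sum, Fintype.card_fin]; omega
  · rw [List.length_cons, suf_length xs ys hl, Fintype.card_sum, Fintype.card_fin]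
    rw [hys, hxs]
    simp [hts'len, hRlen]
    omega
  · rw [List.nodup_cons]
    constructor
    · rw [mem_suf xs ys hl]
      push_neg
      constructor
      · intro y _ h; cases h
      · intro x hx h
        have : w1 = x := Sum.inl.inj h
        subst this
        rw [hxs, List.mem_cons, List.mem_cons, List.mem_cons, List.mem_cons,
          List.mem_cons] at hx
        rcases hx with h' | h' | h' | h' | h' | h'
        · exact h12 h'
        · exact h13 h'
        · exact h14 h'
        · exact h15 h'
        · exact h16 h'
        · exact ((hmemR w1).mp h').1 rfl
    · exact nodup_suf xs ys hl hysnd hxsnd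
  · show List.Chain H.Adj (Sum.inl w1)
      (suf (i :: t1 :: j :: t2 :: k :: ts') (w2 :: w3 :: w4 :: w5 :: w6 :: R) ++ [Sum.inl w1])
    simp only [suf, List.Chain, List.cons_append, List.chain_cons]
    refine ⟨a1, a2, hcomp w2 t1 ht1high, (hcomp w3 t1 ht1high).symm, a3, a4,
      hcomp w4 t2 ht2high, (hcomp w5 t2 ht2high).symm, a5, a6, ?_⟩
    apply chain_suf_high hcomp R ts' (by omega) (fun t ht => hhigh t (hts'sub t ht))

end build4

section excl
variable {V : Type*} {G : SimpleGraph V}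

lemma no4 (hG : G.IsAcyclic) {p q r s : V} (h1 : G.Adj p q) (h2 : G.Adj q r)
    (h3 : G.Adj r s) (h4 : G.Adj s p) (hpr : p ≠ r) (hqs : q ≠ s) : False := by
  have e1 : p ≠ q := h1.ne
  have e2 : q ≠ r := h2.ne
  have e3 : r ≠ s := h3.ne
  have e4 : s ≠ p := h4.ne
  refine hG (Walk.cons h1 (Walk.cons h2 (Walk.cons h3 (Walk.cons h4 Walk.nil)))) ?_
  rw [Walk.cons_isCycle_iff]
  constructor
  · apply Walk.IsPath.mk'
    simp only [Walk.support_cons, Walk.support_nil, List.nodup_cons, List.mem_cons,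
      List.not_mem_nil, or_false, not_or, List.nodup_nil]
    tauto
  · simp only [Walk.edges_cons, Walk.edges_nil, List.mem_cons, List.not_mem_nil, or_false,
      Sym2.eq_iff, not_or]
    tauto

lemma no6 (hG : G.IsAcyclic) {p q r s t u : V} (h1 : G.Adj p q) (h2 : G.Adj q r)
    (h3 : G.Adj r s) (h4 : G.Adj s t) (h5 : G.Adj t u) (h6 : G.Adj u p)
    (hpr : p ≠ r) (hps : p ≠ s) (hpt : p ≠ t) (hqs : q ≠ s) (hqt : q ≠ t) (hqu : q ≠ u)
    (hrt : r ≠ t) (hru : r ≠ u) (hsu : s ≠ u) : False := by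
  have e1 : p ≠ q := h1.ne
  have e2 : q ≠ r := h2.ne
  have e3 : r ≠ s := h3.ne
  have e4 : s ≠ t := h4.ne
  have e5 : t ≠ u := h5.ne
  have e6 : u ≠ p := h6.ne
  refine hG (Walk.cons h1 (Walk.cons h2 (Walk.cons h3 (Walk.cons h4
    (Walk.cons h5 (Walk.cons h6 Walk.nil)))))) ?_
  rw [Walk.cons_isCycle_iff]
  constructor
  · apply Walk.IsPath.mk'
    simp only [Walk.support_cons, Walk.support_nil, List.nodup_cons, List.mem_cons,
      List.not_mem_nil, or_false, not_or, List.nodup_nil]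
    tauto
  · simp only [Walk.edges_cons, Walk.edges_nil, List.mem_cons, List.not_mem_nil, or_false,
      Sym2.eq_iff, not_or]
    tauto

end excl

lemma getShare {n : ℕ} {F : SimpleGraph (Fin n ⊕ Fin n)} (hacyc : F.IsAcyclic)
    {j k : Fin n} (hjk : j ≠ k) {a b c d : Fin n} (hab : a ≠ b) (hcd : c ≠ d)
    (ha : F.Adj (Sum.inr j) (Sum.inl a)) (hb : F.Adj (Sum.inr j) (Sum.inl b))
    (hc : F.Adj (Sum.inr k) (Sum.inl c)) (hd : F.Adj (Sum.inr k) (Sum.inl d))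
    (hsh : a = c ∨ a = d ∨ b = c ∨ b = d) :
    ∃ x y z : Fin n, x ≠ y ∧ x ≠ z ∧ y ≠ z ∧ (y = a ∨ y = b) ∧ (z = c ∨ z = d) ∧
      F.Adj (Sum.inr j) (Sum.inl x) ∧ F.Adj (Sum.inr j) (Sum.inl y) ∧
      F.Adj (Sum.inr k) (Sum.inl x) ∧ F.Adj (Sum.inr k) (Sum.inl z) := by
  have key : ∀ w1 w2 : Fin n, F.Adj (Sum.inr j) (Sum.inl w1) → F.Adj (Sum.inr j) (Sum.inl w2) →
      F.Adj (Sum.inr k) (Sum.inl w1) → F.Adj (Sum.inr k) (Sum.inl w2) → w1 ≠ w2 → False := by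
    intro w1 w2 p1 p2 q1 q2 hne
    exact no4 hacyc p1 q1.symm q2 p2.symm (fun h => hjk (Sum.inr.inj h))
      (fun h => hne (Sum.inl.inj h))
  rcases hsh with rfl | rfl | rfl | rfl
  · exact ⟨a, b, d, hab, hcd, fun h => key a b ha hb hc (h ▸ hd) hab,
      Or.inr rfl, Or.inr rfl, ha, hb, hc, hd⟩
  · exact ⟨a, b, c, hab, hcd.symm, fun h => key a b ha hb hd (h ▸ hc) hab,
      Or.inr rfl, Or.inl rfl, ha, hb, hd, hc⟩
  · exact ⟨b, a, d, hab.symm, hcd, fun h => key b a hb ha hc (h ▸ hd) hab.symm,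
      Or.inl rfl, Or.inr rfl, hb, ha, hc, hd⟩
  · exact ⟨b, a, c, hab.symm, hcd.symm, fun h => key b a hb ha hd (h ▸ hc) hab.symm,
      Or.inl rfl, Or.inl rfl, hb, ha, hd, hc⟩


/-- If `H` contains all edges `u_i v_j` for `j ≥ 4` and contains a good linear
forest (disjoint paths with end-vertices in `X`, all of whose `Y`-vertices lie in
`{v₁, v₂, v₃}`, covering `v₁, v₂, v₃`), then `H` has a Hamilton cycle. (Indices 0-based:
`v₁, v₂, v₃` are `Sum.inr j` with `(j : ℕ) < 3`.) The forest is encoded as a subgraph `F ≤ H`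
with maximum degree at most 2, no cycles, in which `v₁, v₂, v₃` have degree 2 (so they are
internal vertices of the paths) and all other `Y`-vertices have degree 0. -/
theorem stmt13 (n : ℕ) (hn : 7 ≤ n) (H : SimpleGraph (Fin n ⊕ Fin n))
    (hbip : IsBipartition H (Set.range Sum.inl) (Set.range Sum.inr))
    (hcomp : ∀ i j : Fin n, 3 ≤ (j : ℕ) → H.Adj (Sum.inl i) (Sum.inr j))
    (F : SimpleGraph (Fin n ⊕ Fin n)) (hFH : F ≤ H)
    (hacyc : F.IsAcyclic)
    (hdegle : ∀ a : Fin n ⊕ Fin n, (F.neighborSet a).ncard ≤ 2)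
    (hYout : ∀ j : Fin n, 3 ≤ (j : ℕ) → (F.neighborSet (Sum.inr j)).ncard = 0)
    (hYin : ∀ j : Fin n, (j : ℕ) < 3 → (F.neighborSet (Sum.inr j)).ncard = 2) :
    H.IsHamiltonian := by
  classical
  have key : ∀ j : Fin n, (j : ℕ) < 3 → ∃ a b : Fin n, a ≠ b ∧
      F.Adj (Sum.inr j) (Sum.inl a) ∧ F.Adj (Sum.inr j) (Sum.inl b) := by
    intro j hj
    have h2 := hYin j hj
    rw [Set.ncard_eq_two] at h2
    obtain ⟨c, d, hcd, hset⟩ := h2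
    have hc : F.Adj (Sum.inr j) c := by
      have : c ∈ F.neighborSet (Sum.inr j) := by rw [hset]; exact Set.mem_insert _ _
      exact this
    have hd : F.Adj (Sum.inr j) d := by
      have : d ∈ F.neighborSet (Sum.inr j) := by
        rw [hset]; exact Set.mem_insert_iff.mpr (Or.inr rfl)
      exact this
    obtain ⟨a, rfl⟩ : ∃ a, c = Sum.inl a := by
      rcases hbip.2.2 (hFH hc) with ⟨⟨x, hx⟩, -⟩ | ⟨-, ⟨x, hx⟩⟩
      · exact absurd hx (by simp)
      · exact ⟨x, hx.symm⟩
    obtain ⟨b, rfl⟩ : ∃ b, d = Sum.inl b := by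
      rcases hbip.2.2 (hFH hd) with ⟨⟨x, hx⟩, -⟩ | ⟨-, ⟨x, hx⟩⟩
      · exact absurd hx (by simp)
      · exact ⟨x, hx.symm⟩
    exact ⟨a, b, fun h => hcd (by rw [h]), hc, hd⟩
  set i0 : Fin n := ⟨0, by omega⟩ with hi0
  set i1 : Fin n := ⟨1, by omega⟩ with hi1
  set i2 : Fin n := ⟨2, by omega⟩ with hi2
  have hv0 : (i0 : ℕ) < 3 := by norm_num [hi0]
  have hv1 : (i1 : ℕ) < 3 := by norm_num [hi1]
  have hv2 : (i2 : ℕ) < 3 := by norm_num [hi2]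
  have e01 : i0 ≠ i1 := Fin.ne_of_val_ne (by norm_num [hi0, hi1])
  have e02 : i0 ≠ i2 := Fin.ne_of_val_ne (by norm_num [hi0, hi2])
  have e12 : i1 ≠ i2 := Fin.ne_of_val_ne (by norm_num [hi1, hi2])
  obtain ⟨a0, b0, hne0, f0a, f0b⟩ := key i0 hv0
  obtain ⟨a1, b1, hne1, f1a, f1b⟩ := key i1 hv1
  obtain ⟨a2, b2, hne2, f2a, f2b⟩ := key i2 hv2
  have hno3 : ∀ x : Fin n, F.Adj (Sum.inr i0) (Sum.inl x) → F.Adj (Sum.inr i1) (Sum.inl x) →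
      F.Adj (Sum.inr i2) (Sum.inl x) → False := by
    intro x h0 h1 h2
    have hsub : ({Sum.inr i0, Sum.inr i1, Sum.inr i2} : Set (Fin n ⊕ Fin n)) ⊆
        F.neighborSet (Sum.inl x) := by
      intro z hz
      rcases hz with rfl | rfl | rfl
      · exact h0.symm
      · exact h1.symm
      · exact h2.symm
    have h3 : ({Sum.inr i0, Sum.inr i1, Sum.inr i2} : Set (Fin n ⊕ Fin n)).ncard = 3 := by
      rw [Set.ncard_insert_of_notMem (by simp [e01, e02]),
        Set.ncard_pair (by simp [e12])]
    have h4 := Set.ncard_le_ncard hsub (Set.toFinite _)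
    rw [h3] at h4
    have h5 := hdegle (Sum.inl x)
    omega
  by_cases h01 : a0 = a1 ∨ a0 = b1 ∨ b0 = a1 ∨ b0 = b1
  · by_cases h02 : a0 = a2 ∨ a0 = b2 ∨ b0 = a2 ∨ b0 = b2
    · by_cases h12 : a1 = a2 ∨ a1 = b2 ∨ b1 = a2 ∨ b1 = b2
      · -- all three pairs pairwise share: triangle, contradiction with acyclicity
        obtain ⟨x1, y1, z1, -, -, -, -, -, jx1, -, kx1, -⟩ :=
          getShare hacyc e01 hne0 hne1 f0a f0b f1a f1b h01
        obtain ⟨x2, y2, z2, -, -, -, -, -, jx2, -, kx2, -⟩ :=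
          getShare hacyc e02 hne0 hne2 f0a f0b f2a f2b h02
        obtain ⟨x3, y3, z3, -, -, -, -, -, jx3, -, kx3, -⟩ :=
          getShare hacyc e12 hne1 hne2 f1a f1b f2a f2b h12
        have d12 : x1 ≠ x2 := fun h => hno3 x1 jx1 kx1 (by rw [h]; exact kx2)
        have d13 : x1 ≠ x3 := fun h => hno3 x1 jx1 kx1 (by rw [h]; exact kx3)
        have d23 : x2 ≠ x3 := fun h => hno3 x2 jx2 (by rw [h]; exact jx3) kx2
        exact (no6 hacyc jx1.symm jx2 kx2.symm kx3 jx3.symm kx1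
          (fun h => d12 (Sum.inl.inj h)) (by simp) (fun h => d13 (Sum.inl.inj h))
          (fun h => e02 (Sum.inr.inj h)) (by simp) (fun h => e01 (Sum.inr.inj h))
          (fun h => d23 (Sum.inl.inj h)) (by simp)
          (fun h => e12 (Sum.inr.inj h).symm)).elim
      · -- pair0 shares with both pair1 and pair2; pair0 in the middle
        push_neg at h12
        obtain ⟨h12a, h12b, h12c, h12d⟩ := h12
        obtain ⟨x1, y1, z1, hxy1, hxz1, hyz1, hy1, hz1, jx1, jy1, kx1, kz1⟩ :=
          getShare hacyc e01 hne0 hne1 f0a f0b f1a f1b h01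
        obtain ⟨x2, y2, z2, hxy2, hxz2, hyz2, hy2, hz2, jx2, jy2, kx2, kz2⟩ :=
          getShare hacyc e02 hne0 hne2 f0a f0b f2a f2b h02
        refine caseC hn hcomp i1 i0 i2 hv1 hv0 hv2 e01.symm e12 e02
          z1 x1 x2 z2 hxz1.symm ?_ ?_ ?_ ?_ hxz2
          (hFH kz1).symm (hFH kx1) (hFH jx1).symm (hFH jx2)
          (hFH kx2).symm (hFH kz2)
        · exact fun h => hno3 x2 jx2 (by rw [← h]; exact kz1) kx2
        · rcases hz1 with rfl | rfl <;> rcases hz2 with rfl | rfl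
          · exact h12a
          · exact h12b
          · exact h12c
          · exact h12d
        · exact fun h => hno3 x1 jx1 kx1 (by rw [h]; exact kx2)
        · exact fun h => hno3 x1 jx1 kx1 (by rw [h]; exact kz2)
    · by_cases h12 : a1 = a2 ∨ a1 = b2 ∨ b1 = a2 ∨ b1 = b2
      · -- pair1 shares with both pair0 and pair2; pair1 in the middle
        push_neg at h02
        obtain ⟨h02a, h02b, h02c, h02d⟩ := h02
        have h01' : a1 = a0 ∨ a1 = b0 ∨ b1 = a0 ∨ b1 = b0 := by
          rcases h01 with h | h | h | h
          exacts [Or.inl h.symm, Or.inr (Or.inr (Or.inl h.symm)), Or.inr (Or.inl h.symm),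
            Or.inr (Or.inr (Or.inr h.symm))]
        obtain ⟨x1, y1, z1, hxy1, hxz1, hyz1, hy1, hz1, jx1, jy1, kx1, kz1⟩ :=
          getShare hacyc e01.symm hne1 hne0 f1a f1b f0a f0b h01'
        obtain ⟨x2, y2, z2, hxy2, hxz2, hyz2, hy2, hz2, jx2, jy2, kx2, kz2⟩ :=
          getShare hacyc e12 hne1 hne2 f1a f1b f2a f2b h12
        refine caseC hn hcomp i0 i1 i2 hv0 hv1 hv2 e01 e02 e12
          z1 x1 x2 z2 hxz1.symm ?_ ?_ ?_ ?_ hxz2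
          (hFH kz1).symm (hFH kx1) (hFH jx1).symm (hFH jx2)
          (hFH kx2).symm (hFH kz2)
        · exact fun h => hno3 x2 (by rw [← h]; exact kz1) jx2 kx2
        · rcases hz1 with rfl | rfl <;> rcases hz2 with rfl | rfl
          · exact h02a
          · exact h02b
          · exact h02c
          · exact h02d
        · exact fun h => hno3 x1 kx1 jx1 (by rw [h]; exact kx2)
        · exact fun h => hno3 x1 kx1 jx1 (by rw [h]; exact kz2)
      · -- only pair0 and pair1 share
        push_neg at h02
        obtain ⟨h02a, h02b, h02c, h02d⟩ := h02
        push_neg at h12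
        obtain ⟨h12a, h12b, h12c, h12d⟩ := h12
        obtain ⟨x, y, z, hxy, hxz, hyz, hy, hz, jx, jy, kx, kz⟩ :=
          getShare hacyc e01 hne0 hne1 f0a f0b f1a f1b h01
        refine caseB hn hcomp i0 i1 i2 hv0 hv1 hv2 e01 e02 e12
          y x z a2 b2 hxy.symm hyz ?_ ?_ hxz ?_ ?_ ?_ ?_ hne2
          (hFH jy).symm (hFH jx) (hFH kx).symm (hFH kz)
          (hFH f2a).symm (hFH f2b)
        · rcases hy with rfl | rfl
          · exact h02a
          · exact h02c
        · rcases hy with rfl | rfl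
          · exact h02b
          · exact h02d
        · exact fun h => hno3 x jx kx (by rw [h]; exact f2a)
        · exact fun h => hno3 x jx kx (by rw [h]; exact f2b)
        · rcases hz with rfl | rfl
          · exact h12a
          · exact h12c
        · rcases hz with rfl | rfl
          · exact h12b
          · exact h12d
  · by_cases h02 : a0 = a2 ∨ a0 = b2 ∨ b0 = a2 ∨ b0 = b2
    · by_cases h12 : a1 = a2 ∨ a1 = b2 ∨ b1 = a2 ∨ b1 = b2
      · -- pair2 shares with both pair0 and pair1; pair2 in the middle
        push_neg at h01
        obtain ⟨h01a, h01b, h01c, h01d⟩ := h01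
        have h02' : a2 = a0 ∨ a2 = b0 ∨ b2 = a0 ∨ b2 = b0 := by
          rcases h02 with h | h | h | h
          exacts [Or.inl h.symm, Or.inr (Or.inr (Or.inl h.symm)), Or.inr (Or.inl h.symm),
            Or.inr (Or.inr (Or.inr h.symm))]
        have h12' : a2 = a1 ∨ a2 = b1 ∨ b2 = a1 ∨ b2 = b1 := by
          rcases h12 with h | h | h | h
          exacts [Or.inl h.symm, Or.inr (Or.inr (Or.inl h.symm)), Or.inr (Or.inl h.symm),
            Or.inr (Or.inr (Or.inr h.symm))]
        obtain ⟨x1, y1, z1, hxy1, hxz1, hyz1, hy1, hz1, jx1, jy1, kx1, kz1⟩ :=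
          getShare hacyc e02.symm hne2 hne0 f2a f2b f0a f0b h02'
        obtain ⟨x2, y2, z2, hxy2, hxz2, hyz2, hy2, hz2, jx2, jy2, kx2, kz2⟩ :=
          getShare hacyc e12.symm hne2 hne1 f2a f2b f1a f1b h12'
        refine caseC hn hcomp i0 i2 i1 hv0 hv2 hv1 e02 e01 e12.symm
          z1 x1 x2 z2 hxz1.symm ?_ ?_ ?_ ?_ hxz2
          (hFH kz1).symm (hFH kx1) (hFH jx1).symm (hFH jx2)
          (hFH kx2).symm (hFH kz2)
        · exact fun h => hno3 x2 (by rw [← h]; exact kz1) kx2 jx2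
        · rcases hz1 with rfl | rfl <;> rcases hz2 with rfl | rfl
          · exact h01a
          · exact h01b
          · exact h01c
          · exact h01d
        · exact fun h => hno3 x1 kx1 (by rw [h]; exact kx2) jx1
        · exact fun h => hno3 x1 kx1 (by rw [h]; exact kz2) jx1
      · -- only pair0 and pair2 share
        push_neg at h01
        obtain ⟨h01a, h01b, h01c, h01d⟩ := h01
        push_neg at h12
        obtain ⟨h12a, h12b, h12c, h12d⟩ := h12
        obtain ⟨x, y, z, hxy, hxz, hyz, hy, hz, jx, jy, kx, kz⟩ :=
          getShare hacyc e02 hne0 hne2 f0a f0b f2a f2b h02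
        refine caseB hn hcomp i0 i2 i1 hv0 hv2 hv1 e02 e01 e12.symm
          y x z a1 b1 hxy.symm hyz ?_ ?_ hxz ?_ ?_ ?_ ?_ hne1
          (hFH jy).symm (hFH jx) (hFH kx).symm (hFH kz)
          (hFH f1a).symm (hFH f1b)
        · rcases hy with rfl | rfl
          · exact h01a
          · exact h01c
        · rcases hy with rfl | rfl
          · exact h01b
          · exact h01d
        · exact fun h => hno3 x jx (by rw [h]; exact f1a) kx
        · exact fun h => hno3 x jx (by rw [h]; exact f1b) kx
        · rcases hz with rfl | rfl
          · exact h12a.symm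
          · exact h12b.symm
        · rcases hz with rfl | rfl
          · exact h12c.symm
          · exact h12d.symm
    · by_cases h12 : a1 = a2 ∨ a1 = b2 ∨ b1 = a2 ∨ b1 = b2
      · -- only pair1 and pair2 share
        push_neg at h01
        obtain ⟨h01a, h01b, h01c, h01d⟩ := h01
        push_neg at h02
        obtain ⟨h02a, h02b, h02c, h02d⟩ := h02
        obtain ⟨x, y, z, hxy, hxz, hyz, hy, hz, jx, jy, kx, kz⟩ :=
          getShare hacyc e12 hne1 hne2 f1a f1b f2a f2b h12
        refine caseB hn hcomp i1 i2 i0 hv1 hv2 hv0 e12 e01.symm e02.symm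
          y x z a0 b0 hxy.symm hyz ?_ ?_ hxz ?_ ?_ ?_ ?_ hne0
          (hFH jy).symm (hFH jx) (hFH kx).symm (hFH kz)
          (hFH f0a).symm (hFH f0b)
        · rcases hy with rfl | rfl
          · exact h01a.symm
          · exact h01b.symm
        · rcases hy with rfl | rfl
          · exact h01c.symm
          · exact h01d.symm
        · exact fun h => hno3 x (by rw [h]; exact f0a) jx kx
        · exact fun h => hno3 x (by rw [h]; exact f0b) jx kx
        · rcases hz with rfl | rfl
          · exact h02a.symm
          · exact h02b.symm
        · rcases hz with rfl | rfl
          · exact h02c.symm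
          · exact h02d.symm
      · -- no two pairs share: three disjoint blocks
        push_neg at h01
        obtain ⟨h01a, h01b, h01c, h01d⟩ := h01
        push_neg at h02
        obtain ⟨h02a, h02b, h02c, h02d⟩ := h02
        push_neg at h12
        obtain ⟨h12a, h12b, h12c, h12d⟩ := h12
        exact caseA hn hcomp i0 i1 i2 hv0 hv1 hv2 e01 e02 e12
          a0 b0 a1 b1 a2 b2 hne0 h01a h01b h02a h02b h01c h01d h02c h02d
          hne1 h12a h12b h12c h12d hne2
          (hFH f0a).symm (hFH f0b) (hFH f1a).symm (hFH f1b)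
          (hFH f2a).symm (hFH f2b)
end

section
/- Let n ≥ 5 and let H be a balanced bipartite graph with parts X = {u_1,…,u_n} and Y = {v_1,…,v_n} such that u_i is adjacent to v_j for all 1 ≤ i ≤ n and 3 ≤ j ≤ n, and such that d_H(v_1) = d_H(v_2) = 2. If the bipartite toughness of H satisfies t^B(H) ≥ 1, then H contains a Hamilton cycle. -/
open SimpleGraph

section Helpers

variable {V : Type*} {G : SimpleGraph V}

lemma walk_seg (g : ℕ → V) :
    ∀ (k a : ℕ), (∀ i, a ≤ i → i < a + k → G.Adj (g i) (g (i+1))) →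
      ∃ w : G.Walk (g a) (g (a + k)), w.support = (List.range' a (k+1)).map g := by
  intro k
  induction k with
  | zero => exact fun a _ => ⟨SimpleGraph.Walk.nil, by simp⟩
  | succ k ih =>
    intro a h
    obtain ⟨w, hw⟩ := ih (a+1) (fun i h1 h2 => h i (by omega) (by omega))
    have hadj : G.Adj (g a) (g (a+1)) := h a le_rfl (by omega)
    refine ⟨SimpleGraph.Walk.cons hadj
      (w.copy rfl (by rw [show a+1+k = a+(k+1) from by omega])), ?_⟩
    rw [SimpleGraph.Walk.support_cons, SimpleGraph.Walk.support_copy, hw,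
      List.range'_succ]
    simp [List.range'_succ]

lemma isolated_eq {x y : V} (hx : ∀ z, ¬ G.Adj x z) (h : G.Reachable x y) : x = y := by
  obtain ⟨w⟩ := h
  cases w with
  | nil => rfl
  | cons h' _ => exact absurd h' (hx _)

lemma path_edge_length {u v : V} {p : G.Walk u v} (hp : p.IsPath) (he : s(u,v) ∈ p.edges) :
    p.length = 1 := by
  cases p with
  | nil => simp at he
  | @cons _ x _ h q =>
    obtain ⟨hq, hu⟩ := (SimpleGraph.Walk.cons_isPath_iff h q).mp hp
    rw [SimpleGraph.Walk.edges_cons, List.mem_cons] at he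
    rcases he with he | he
    · rcases Sym2.eq_iff.mp he with ⟨-, hvx⟩ | ⟨hux, -⟩
      · subst hvx
        rw [SimpleGraph.Walk.isPath_iff_eq_nil.mp hq]
        simp
      · exact absurd hux.symm h.ne'
    · exact absurd (SimpleGraph.Walk.fst_mem_support_of_mem_edges q he) hu

lemma three_le_ncard {α : Type*} [Finite α] {a b c : α} (hab : a ≠ b) (hac : a ≠ c)
    (hbc : b ≠ c) : 3 ≤ Nat.card α := by
  haveI := Fintype.ofFinite α
  classical
  rw [Nat.card_eq_fintype_card]
  have h : ({a,b,c} : Finset α).card ≤ Fintype.card α := Finset.card_le_univ _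
  rwa [Finset.card_insert_of_notMem (by simp [hab, hac]),
    Finset.card_insert_of_notMem (by simp [hbc]), Finset.card_singleton] at h

lemma ham_of_seq {V : Type*} [Fintype V] [DecidableEq V] {G : SimpleGraph V}
    (g : ℕ → V) (m : ℕ) (hm : 3 ≤ m) (hcard : Fintype.card V = m)
    (hadj : ∀ i, i < m → G.Adj (g i) (g (i+1)))
    (hg0 : g m = g 0)
    (hnodup : ((List.range m).map g).Nodup) : G.IsHamiltonian := by
  intro _
  obtain ⟨k, rfl⟩ : ∃ k, m = k + 1 := ⟨m - 1, by omega⟩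
  set l : List V := (List.range (k+1)).map g with hl
  have hlen : l.length = k + 1 := by simp [hl]
  have hmem : ∀ v : V, v ∈ l := by
    intro v
    have h1 : l.toFinset.card = k + 1 := by
      rw [List.toFinset_card_of_nodup hnodup, hlen]
    have h2 : l.toFinset = Finset.univ := Finset.eq_univ_of_card _ (by rw [h1, hcard])
    rw [← List.mem_toFinset, h2]; exact Finset.mem_univ v
  have hl2 : l = g 0 :: (List.range' 1 k).map g := by
    rw [hl, List.range_eq_range', List.range'_succ]
    simp
  have hrot : l.rotate 1 = (List.range' 1 k).map g ++ [g 0] := by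
    rw [hl2, List.rotate_cons_succ, List.rotate_zero]
  -- the path from g 1 to g (k+1) = g 0
  obtain ⟨w, hw⟩ := walk_seg (G := G) g k 1 (fun i h1 h2 => hadj i (by omega))
  have h1k : g (1 + k) = g 0 := by rw [Nat.add_comm]; exact hg0
  set p : G.Walk (g 1) (g 0) := w.copy rfl h1k with hp
  have hps : p.support = (List.range' 1 k).map g ++ [g 0] := by
    rw [hp, SimpleGraph.Walk.support_copy, hw, List.range'_concat]
    simp [h1k]
  have hpn : p.support.Nodup := by
    rw [hps, ← hrot]; exact List.nodup_rotate.mpr hnodup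
  have hplen : p.length = k := by
    have := SimpleGraph.Walk.length_support p
    rw [hps] at this
    simp at this
    omega
  set c : G.Walk (g 0) (g 0) := SimpleGraph.Walk.cons (hadj 0 (by omega)) p with hc
  have hcyc : c.IsCycle := by
    rw [hc, SimpleGraph.Walk.cons_isCycle_iff]
    refine ⟨SimpleGraph.Walk.IsPath.mk' hpn, fun hmem => ?_⟩
    have := path_edge_length (SimpleGraph.Walk.IsPath.mk' hpn) (by rwa [Sym2.eq_swap])
    omega
  refine ⟨g 0, c, ?_⟩
  rw [SimpleGraph.Walk.isHamiltonianCycle_iff_isCycle_and_support_count_tail_eq_one]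
  refine ⟨hcyc, fun a => ?_⟩
  rw [hc, SimpleGraph.Walk.support_cons, List.tail_cons, hps, ← hrot,
    (List.rotate_perm l 1).count_eq]
  exact List.count_eq_one_of_mem hnodup (hmem a)

end Helpers



section Helpers2

/-- The zig-zag vertex sequence. -/
def zig {n : ℕ} (hn : 0 < n) (π τ : Fin n → Fin n) (m : ℕ) : Fin n ⊕ Fin n :=
  if m % 2 = 0 then Sum.inl (π ⟨m / 2 % n, Nat.mod_lt _ hn⟩)
  else Sum.inr (τ ⟨m / 2 % n, Nat.mod_lt _ hn⟩)

lemma zig_even {n : ℕ} (hn : 0 < n) (π τ : Fin n → Fin n) {m : ℕ} (h : m % 2 = 0) :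
    zig hn π τ m = Sum.inl (π ⟨m / 2 % n, Nat.mod_lt _ hn⟩) := if_pos h

lemma zig_odd {n : ℕ} (hn : 0 < n) (π τ : Fin n → Fin n) {m : ℕ} (h : m % 2 = 1) :
    zig hn π τ m = Sum.inr (τ ⟨m / 2 % n, Nat.mod_lt _ hn⟩) := by
  rw [zig, if_neg (by omega)]

lemma ham_of_perms {n : ℕ} (hn : 2 ≤ n) {G : SimpleGraph (Fin n ⊕ Fin n)}
    (π τ : Fin n → Fin n) (hπ : Function.Injective π) (hτ : Function.Injective τ)
    (A1 : ∀ k : Fin n, G.Adj (Sum.inl (π k)) (Sum.inr (τ k)))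
    (A2 : ∀ (j : ℕ) (hj : j < n) (hj' : (j+1) % n < n),
      G.Adj (Sum.inr (τ ⟨j, hj⟩)) (Sum.inl (π ⟨(j+1) % n, hj'⟩))) :
    G.IsHamiltonian := by
  have hnpos : 0 < n := by omega
  apply ham_of_seq (zig hnpos π τ) (2*n) (by omega) (by simp [Fintype.card_sum]; omega)
  · intro i hi
    rcases Nat.even_or_odd i with ⟨j, hj⟩ | ⟨j, hj⟩
    · have hjn : j < n := by omega
      rw [zig_even hnpos π τ (by omega), zig_odd hnpos π τ (by omega)]
      have e1 : i / 2 % n = j % n := by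
        have : i / 2 = j := by omega
        rw [this]
      have e2 : (i+1) / 2 % n = j % n := by
        have : (i+1) / 2 = j := by omega
        rw [this]
      rw [show (⟨i / 2 % n, Nat.mod_lt _ hnpos⟩ : Fin n) = ⟨j % n, Nat.mod_lt _ hnpos⟩
          from Fin.ext e1,
        show (⟨(i+1) / 2 % n, Nat.mod_lt _ hnpos⟩ : Fin n) = ⟨j % n, Nat.mod_lt _ hnpos⟩
          from Fin.ext e2]
      exact A1 _
    · have hjn : j < n := by omega
      rw [zig_odd hnpos π τ (by omega), zig_even hnpos π τ (by omega)]
      have e1 : i / 2 % n = j := by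
        have : i / 2 = j := by omega
        rw [this, Nat.mod_eq_of_lt hjn]
      have e2 : (i+1) / 2 % n = (j+1) % n := by
        have : (i+1) / 2 = j + 1 := by omega
        rw [this]
      rw [show (⟨i / 2 % n, Nat.mod_lt _ hnpos⟩ : Fin n) = ⟨j, hjn⟩ from Fin.ext e1,
        show (⟨(i+1) / 2 % n, Nat.mod_lt _ hnpos⟩ : Fin n)
          = ⟨(j+1) % n, Nat.mod_lt _ hnpos⟩ from Fin.ext e2]
      exact A2 j hjn _
  · rw [zig_even hnpos π τ (by omega), zig_even hnpos π τ (by omega)]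
    congr 1
    apply congrArg
    apply Fin.ext
    simp
  · refine List.nodup_range.map_on ?_
    intro x hx y hy hxy
    rw [List.mem_range] at hx hy
    have hx2 : x / 2 < n := by omega
    have hy2 : y / 2 < n := by omega
    rcases hx1 : x % 2 with _ | x1
    · rcases hy1 : y % 2 with _ | y1
      · rw [zig_even hnpos π τ hx1, zig_even hnpos π τ hy1] at hxy
        have := hπ (Sum.inl.inj hxy)
        have := congrArg Fin.val this
        simp only at this
        rw [Nat.mod_eq_of_lt hx2, Nat.mod_eq_of_lt hy2] at this
        omega
      · have hy1' : y % 2 = 1 := by omega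
        rw [zig_even hnpos π τ hx1, zig_odd hnpos π τ hy1'] at hxy
        simp at hxy
    · have hx1' : x % 2 = 1 := by omega
      rcases hy1 : y % 2 with _ | y1
      · rw [zig_odd hnpos π τ hx1', zig_even hnpos π τ hy1] at hxy
        simp at hxy
      · have hy1' : y % 2 = 1 := by omega
        rw [zig_odd hnpos π τ hx1', zig_odd hnpos π τ hy1'] at hxy
        have := hτ (Sum.inr.inj hxy)
        have := congrArg Fin.val this
        simp only at this
        rw [Nat.mod_eq_of_lt hx2, Nat.mod_eq_of_lt hy2] at this
        omega

lemma exists_bij_extend {n : ℕ} (l : List (Fin n)) (hl : l.Nodup) :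
    ∃ π : Fin n → Fin n, Function.Injective π ∧
      ∀ (k : Fin n) (hk : (k : ℕ) < l.length), π k = l.get ⟨(k : ℕ), hk⟩ := by
  classical
  set L : List (Fin n) := l ++ (Finset.univ \ l.toFinset).toList with hL
  have hlsub : l.length ≤ n := by simpa using hl.length_le_card
  have hLlen : L.length = n := by
    simp [hL, Finset.card_sdiff_of_subset (Finset.subset_univ _), List.toFinset_card_of_nodup hl]
    omega
  have hLnd : L.Nodup := by
    rw [hL, List.nodup_append]
    refine ⟨hl, Finset.nodup_toList _, ?_⟩
    intro x hx y hx' hxy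
    rw [Finset.mem_toList, Finset.mem_sdiff] at hx'
    exact hx'.2 (List.mem_toFinset.mpr (hxy ▸ hx))
  refine ⟨fun k => L.get ⟨(k : ℕ), by rw [hLlen]; exact k.isLt⟩, ?_, ?_⟩
  · intro k1 k2 h
    have h2 := hLnd.get_inj_iff.mp h
    rw [Fin.mk.injEq] at h2
    exact Fin.ext h2
  · intro k hk
    simp only [List.get_eq_getElem]
    exact List.getElem_append_left hk

end Helpers2
section Cases

lemma ham_case3 {n : ℕ} (hn : 5 ≤ n) {H : SimpleGraph (Fin n ⊕ Fin n)}
    (hcomp : ∀ i j : Fin n, 2 ≤ (j : ℕ) → H.Adj (Sum.inl i) (Sum.inr j))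
    (p w q : Fin n) (hpw : p ≠ w) (hwq : w ≠ q) (hpq : p ≠ q)
    (h1 : H.Adj (Sum.inl p) (Sum.inr ⟨0, by omega⟩))
    (h2 : H.Adj (Sum.inl w) (Sum.inr ⟨0, by omega⟩))
    (h3 : H.Adj (Sum.inl w) (Sum.inr ⟨1, by omega⟩))
    (h4 : H.Adj (Sum.inl q) (Sum.inr ⟨1, by omega⟩)) : H.IsHamiltonian := by
  obtain ⟨π, hπ, hπv⟩ := exists_bij_extend [p, w, q] (by simp [hpw, hwq, hpq])
  have hv0 : π ⟨0, by omega⟩ = p := hπv ⟨0, by omega⟩ (by simp)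
  have hv1 : π ⟨1, by omega⟩ = w := hπv ⟨1, by omega⟩ (by simp)
  have hv2 : π ⟨2, by omega⟩ = q := hπv ⟨2, by omega⟩ (by simp)
  apply ham_of_perms (by omega) π id hπ Function.injective_id
  · intro k
    rcases k with ⟨kv, hkv⟩
    match kv, hkv with
    | 0, hkv => rw [hv0]; exact h1
    | 1, hkv => rw [hv1]; exact h3
    | (v+2), hkv => exact hcomp _ _ (by simp)
  · intro j hj hj'
    match j, hj with
    | 0, hj =>
      rw [show (⟨(0+1) % n, hj'⟩ : Fin n) = ⟨1, by omega⟩ from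
        Fin.ext (by simp [Nat.mod_eq_of_lt (show 0+1 < n by omega)]), hv1]
      exact h2.symm
    | 1, hj =>
      rw [show (⟨(1+1) % n, hj'⟩ : Fin n) = ⟨2, by omega⟩ from
        Fin.ext (by simp [Nat.mod_eq_of_lt (show 1+1 < n by omega)]), hv2]
      exact h4.symm
    | (v+2), hj => exact (hcomp _ _ (by simp)).symm

lemma ham_case4 {n : ℕ} (hn : 5 ≤ n) {H : SimpleGraph (Fin n ⊕ Fin n)}
    (hcomp : ∀ i j : Fin n, 2 ≤ (j : ℕ) → H.Adj (Sum.inl i) (Sum.inr j))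
    (a b c d : Fin n) (hab : a ≠ b) (hcd : c ≠ d) (hac : a ≠ c) (had : a ≠ d)
    (hbc : b ≠ c) (hbd : b ≠ d)
    (h1 : H.Adj (Sum.inl a) (Sum.inr ⟨0, by omega⟩))
    (h2 : H.Adj (Sum.inl b) (Sum.inr ⟨0, by omega⟩))
    (h3 : H.Adj (Sum.inl c) (Sum.inr ⟨1, by omega⟩))
    (h4 : H.Adj (Sum.inl d) (Sum.inr ⟨1, by omega⟩)) : H.IsHamiltonian := by
  obtain ⟨π, hπ, hπv⟩ := exists_bij_extend [a, b, c, d]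
    (by simp [hab, hac, had, hbc, hbd, hcd])
  have hv0 : π ⟨0, by omega⟩ = a := hπv ⟨0, by omega⟩ (by simp)
  have hv1 : π ⟨1, by omega⟩ = b := hπv ⟨1, by omega⟩ (by simp)
  have hv2 : π ⟨2, by omega⟩ = c := hπv ⟨2, by omega⟩ (by simp)
  have hv3 : π ⟨3, by omega⟩ = d := hπv ⟨3, by omega⟩ (by simp)
  have hb1 : (1:ℕ) < n := by omega
  have hb2 : (2:ℕ) < n := by omega
  apply ham_of_perms (by omega) π
    (fun k => Equiv.swap (⟨1, hb1⟩ : Fin n) ⟨2, hb2⟩ k) hπ (Equiv.injective _)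
  · intro k
    rcases k with ⟨kv, hkv⟩
    match kv, hkv with
    | 0, hkv =>
      rw [Equiv.swap_apply_of_ne_of_ne (by simp [Fin.ext_iff])
        (by simp [Fin.ext_iff]), hv0]
      exact h1
    | 1, hkv =>
      rw [show (⟨1, hkv⟩ : Fin n) = ⟨1, hb1⟩ from rfl, Equiv.swap_apply_left, hv1]
      exact hcomp _ _ (by simp)
    | 2, hkv =>
      rw [show (⟨2, hkv⟩ : Fin n) = ⟨2, hb2⟩ from rfl, Equiv.swap_apply_right, hv2]
      exact h3
    | (v+3), hkv =>
      rw [Equiv.swap_apply_of_ne_of_ne (by simp [Fin.ext_iff])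
        (by simp [Fin.ext_iff])]
      exact hcomp _ _ (by simp)
  · intro j hj hj'
    match j, hj with
    | 0, hj =>
      rw [Equiv.swap_apply_of_ne_of_ne (by simp [Fin.ext_iff])
        (by simp [Fin.ext_iff]),
        show (⟨(0+1) % n, hj'⟩ : Fin n) = ⟨1, by omega⟩ from
          Fin.ext (by simp [Nat.mod_eq_of_lt (show 0+1 < n by omega)]), hv1]
      exact h2.symm
    | 1, hj =>
      rw [show (⟨1, hj⟩ : Fin n) = ⟨1, hb1⟩ from rfl, Equiv.swap_apply_left]
      exact (hcomp _ _ (by simp)).symm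
    | 2, hj =>
      rw [show (⟨2, hj⟩ : Fin n) = ⟨2, hb2⟩ from rfl, Equiv.swap_apply_right,
        show (⟨(2+1) % n, hj'⟩ : Fin n) = ⟨3, by omega⟩ from
          Fin.ext (by simp [Nat.mod_eq_of_lt (show 2+1 < n by omega)]), hv3]
      exact h4.symm
    | (v+3), hj =>
      rw [Equiv.swap_apply_of_ne_of_ne (by simp [Fin.ext_iff])
        (by simp [Fin.ext_iff])]
      exact (hcomp _ _ (by simp)).symm

end Cases

/-- Let `n ≥ 5` and let `H` be balanced bipartite with parts
`X = {u_1,…,u_n}`, `Y = {v_1,…,v_n}` containing all edges `u_i v_j` for `j ≥ 3`, with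
`d(v₁) = d(v₂) = 2`. If `H` has bipartite toughness at least `1`, then `H` has a Hamilton
cycle. (Indices 0-based: `v₁, v₂` are `Sum.inr j` with `(j : ℕ) < 2`.) -/
theorem stmt14 (n : ℕ) (hn : 5 ≤ n) (H : SimpleGraph (Fin n ⊕ Fin n))
    (hbip : IsBipartition H (Set.range Sum.inl) (Set.range Sum.inr))
    (hcomp : ∀ i j : Fin n, 2 ≤ (j : ℕ) → H.Adj (Sum.inl i) (Sum.inr j))
    (hdeg : ∀ j : Fin n, (j : ℕ) < 2 → (H.neighborSet (Sum.inr j)).ncard = 2)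
    (htough : BTough1 H (Set.range Sum.inl) (Set.range Sum.inr)) :
    H.IsHamiltonian := by
  classical
  set j0 : Fin n := ⟨0, by omega⟩ with hj0
  set j1 : Fin n := ⟨1, by omega⟩ with hj1
  -- extract the two neighbors of v₁ and v₂
  have hnb : ∀ (j : Fin n), (j : ℕ) < 2 → ∃ x y : Fin n, x ≠ y ∧
      H.neighborSet (Sum.inr j) = {Sum.inl x, Sum.inl y} := by
    intro j hj
    obtain ⟨x, y, hxy, hN⟩ := Set.ncard_eq_two.mp (hdeg j hj)
    have hrange : ∀ z ∈ H.neighborSet (Sum.inr j), ∃ a : Fin n, z = Sum.inl a := by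
      intro z hz
      rcases hbip.2.2 ((H.mem_neighborSet _ _).mp hz) with ⟨hr, -⟩ | ⟨-, hr⟩
      · obtain ⟨w, hw⟩ := hr; simp at hw
      · obtain ⟨a, ha⟩ := hr; exact ⟨a, ha.symm⟩
    have hx : x ∈ H.neighborSet (Sum.inr j) := by rw [hN]; exact Set.mem_insert _ _
    have hy : y ∈ H.neighborSet (Sum.inr j) := by
      rw [hN]; exact Set.mem_insert_iff.mpr (Or.inr rfl)
    obtain ⟨a, rfl⟩ := hrange x hx
    obtain ⟨b, rfl⟩ := hrange y hy
    exact ⟨a, b, fun h => hxy (by rw [h]), hN⟩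
  obtain ⟨a, b, hab, hN0⟩ := hnb j0 (by simp [hj0])
  obtain ⟨c, d, hcd, hN1⟩ := hnb j1 (by simp [hj1])
  -- the adjacency facts
  have ha0 : H.Adj (Sum.inl a) (Sum.inr j0) :=
    ((H.mem_neighborSet _ _).mp (by rw [hN0]; exact Set.mem_insert _ _)).symm
  have hb0 : H.Adj (Sum.inl b) (Sum.inr j0) :=
    ((H.mem_neighborSet _ _).mp
      (by rw [hN0]; exact Set.mem_insert_iff.mpr (Or.inr rfl))).symm
  have hc1 : H.Adj (Sum.inl c) (Sum.inr j1) :=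
    ((H.mem_neighborSet _ _).mp (by rw [hN1]; exact Set.mem_insert _ _)).symm
  have hd1 : H.Adj (Sum.inl d) (Sum.inr j1) :=
    ((H.mem_neighborSet _ _).mp
      (by rw [hN1]; exact Set.mem_insert_iff.mpr (Or.inr rfl))).symm
  -- a spare left vertex
  obtain ⟨e, hea, heb⟩ : ∃ e : Fin n, e ≠ a ∧ e ≠ b := by
    by_contra hcon
    push_neg at hcon
    have hsub : (Finset.univ : Finset (Fin n)) ⊆ {a, b} := by
      intro z _
      by_cases hz : z = a
      · exact hz ▸ Finset.mem_insert_self _ _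
      · exact (hcon z hz) ▸ Finset.mem_insert_of_mem (Finset.mem_singleton_self _)
    have := Finset.card_le_card hsub
    have h2 : ({a, b} : Finset (Fin n)).card ≤ 2 := Finset.card_insert_le _ _
    simp [Finset.card_univ] at this
    omega
  -- toughness rules out equal neighborhoods
  have hdiff : ({a, b} : Set (Fin n)) ≠ {c, d} := by
    intro hset
    set S : Set (Fin n ⊕ Fin n) := {Sum.inl a, Sum.inl b} with hS
    have hsub : S ⊂ Set.range Sum.inl := by
      constructor
      · rintro z (rfl | rfl) <;> exact ⟨_, rfl⟩
      · intro hsup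
        have : (Sum.inl e : Fin n ⊕ Fin n) ∈ S := hsup ⟨e, rfl⟩
        rcases this with h | h
        · exact hea (Sum.inl.inj h)
        · exact heb (by simpa using h)
    have hc' : c ∈ ({a, b} : Set (Fin n)) := by rw [hset]; exact Set.mem_insert _ _
    have hd' : d ∈ ({a, b} : Set (Fin n)) := by
      rw [hset]; exact Set.mem_insert_iff.mpr (Or.inr rfl)
    -- membership of our three vertices in Sᶜ
    have hm0 : (Sum.inr j0 : Fin n ⊕ Fin n) ∈ Sᶜ := by
      intro h; rcases h with h | h <;> simp at h
    have hm1 : (Sum.inr j1 : Fin n ⊕ Fin n) ∈ Sᶜ := by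
      intro h; rcases h with h | h <;> simp at h
    have hme : (Sum.inl e : Fin n ⊕ Fin n) ∈ Sᶜ := by
      intro h
      rcases h with h | h
      · exact hea (Sum.inl.inj h)
      · exact heb (by simpa using h)
    -- v₁ and v₂ are isolated in the induced graph
    have hiso : ∀ (j : Fin n), H.neighborSet (Sum.inr j) ⊆ S →
        ∀ (hm : (Sum.inr j : Fin n ⊕ Fin n) ∈ Sᶜ) (z : ↥Sᶜ),
        ¬ (SimpleGraph.induce Sᶜ H).Adj ⟨Sum.inr j, hm⟩ z := by
      intro j hNsub hm z hadj
      have : (z : Fin n ⊕ Fin n) ∈ S := hNsub ((H.mem_neighborSet _ _).mpr hadj)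
      exact z.2 this
    have hiso0 := hiso j0 (by rw [hN0]) hm0
    have hiso1 := hiso j1 (by
      rw [hN1, hS]
      simp only [Set.mem_insert_iff, Set.mem_singleton_iff] at hc' hd'
      intro z hz
      simp only [Set.mem_insert_iff, Set.mem_singleton_iff] at hz ⊢
      rcases hz with rfl | rfl
      · rcases hc' with rfl | rfl <;> simp
      · rcases hd' with rfl | rfl <;> simp) hm1
    -- three distinct components
    have h3 : 3 ≤ numComp H S := by
      unfold numComp
      refine three_le_ncard (a := (SimpleGraph.induce Sᶜ H).connectedComponentMk ⟨Sum.inr j0, hm0⟩)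
        (b := (SimpleGraph.induce Sᶜ H).connectedComponentMk ⟨Sum.inr j1, hm1⟩)
        (c := (SimpleGraph.induce Sᶜ H).connectedComponentMk ⟨Sum.inl e, hme⟩) ?_ ?_ ?_
      · intro h
        have hr := (SimpleGraph.ConnectedComponent.eq).mp h
        have := isolated_eq hiso0 hr
        have h2 : (Sum.inr j0 : Fin n ⊕ Fin n) = Sum.inr j1 := congrArg Subtype.val this
        simp [hj0, hj1] at h2
      · intro h
        have hr := (SimpleGraph.ConnectedComponent.eq).mp h
        have := isolated_eq hiso0 hr
        simp at this
      · intro h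
        have hr := (SimpleGraph.ConnectedComponent.eq).mp h
        have := isolated_eq hiso1 hr
        simp at this
    have hle := htough S (Or.inl hsub) (by omega)
    have hcard2 : S.ncard = 2 :=
      Set.ncard_pair (fun h => hab (Sum.inl.inj h))
    omega
  -- now the case analysis
  by_cases h1 : a = c
  · subst h1
    exact ham_case3 hn hcomp b a d hab.symm hcd
      (fun h => hdiff (by rw [h])) hb0 ha0 hc1 hd1
  · by_cases h2 : a = d
    · subst h2
      exact ham_case3 hn hcomp b a c hab.symm h1
        (fun h => hdiff (by rw [h]; exact Set.pair_comm a c)) hb0 ha0 hd1 hc1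
    · by_cases h3 : b = c
      · subst h3
        exact ham_case3 hn hcomp a b d hab hcd h2 ha0 hb0 hc1 hd1
      · by_cases h4 : b = d
        · subst h4
          exact ham_case3 hn hcomp a b c hab hcd.symm h1 ha0 hb0 hd1 hc1
        · exact ham_case4 hn hcomp a b c d hab hcd h1 h2 h3 h4 ha0 hb0 hc1 hd1
end
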